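/- arXiv:2108.13883 — 4 statements merged into one kernel-verified Lean document; each statement's English description precedes it below -/
import Mathlib

section
/- For any nonzero q with q ≠ ±1 and positive integers N, j, m with 1 ≤ j ≤ N, one has ([ (2N+1−j)m ]_q + [ j m ]_q) / [ (2N+1)m ]_q = ([ (N+1−j)m ]_q − [ (N−j)m ]_q) / ([ (N+1)m ]_q − [ N m ]_q), provided the denominators are nonzero. -/
/-- q-integer `[n]_q = (q^n - q^{-n})/(q - q^{-1})`. -/
noncomputable def qint (q : ℂ) (n : ℤ) : ℂ := (q ^ n - q ^ (-n)) / (q - q⁻¹)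

lemma qint_key (x : ℂ) (hx : x ≠ 0) (n k : ℤ) :
    (x ^ (2 * n + 1 - k) - x ^ (-(2 * n + 1 - k)) + (x ^ k - x ^ (-k))) *
        (x ^ (n + 1) - x ^ (-(n + 1)) - (x ^ n - x ^ (-n))) =
      (x ^ (n + 1 - k) - x ^ (-(n + 1 - k)) - (x ^ (n - k) - x ^ (-(n - k)))) *
        (x ^ (2 * n + 1) - x ^ (-(2 * n + 1))) := by
  have ha : x ^ n ≠ 0 := zpow_ne_zero n hx
  have hb : x ^ k ≠ 0 := zpow_ne_zero k hx
  simp only [two_mul, zpow_add₀ hx, zpow_sub₀ hx, zpow_neg, zpow_one, mul_inv_rev]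
  field_simp
  ring

theorem qint_ratio_identity (q : ℂ) (hq0 : q ≠ 0) (hq1 : q ≠ 1) (hq2 : q ≠ -1)
    (N j : ℕ) (hN : 1 ≤ N) (hj1 : 1 ≤ j) (hjN : j ≤ N) (m : ℤ) (hm : m ≠ 0)
    (hd1 : qint q ((2 * (N : ℤ) + 1) * m) ≠ 0)
    (hd2 : qint q (((N : ℤ) + 1) * m) - qint q ((N : ℤ) * m) ≠ 0) :
    (qint q ((2 * (N : ℤ) + 1 - (j : ℤ)) * m) + qint q ((j : ℤ) * m)) /
        qint q ((2 * (N : ℤ) + 1) * m) =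
      (qint q (((N : ℤ) + 1 - (j : ℤ)) * m) - qint q (((N : ℤ) - (j : ℤ)) * m)) /
        (qint q (((N : ℤ) + 1) * m) - qint q ((N : ℤ) * m)) := by
  have hd : q - q⁻¹ ≠ 0 := by
    intro h
    apply hq1
    have h2 : q * q = 1 := by
      have := sub_eq_zero.mp h
      field_simp at this
      linear_combination this
    rcases mul_self_eq_one_iff.mp (by linear_combination h2) with h | h
    · exact h
    · exact absurd h hq2
  have hx : q ^ m ≠ 0 := zpow_ne_zero m hq0
  have hpow : ∀ e : ℤ, q ^ (e * m) = (q ^ m) ^ e := fun e => by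
    rw [mul_comm, zpow_mul]
  have hpow' : ∀ e : ℤ, q ^ (-(e * m)) = (q ^ m) ^ (-e) := fun e => by
    rw [← neg_mul, hpow]
  rw [div_eq_div_iff hd1 hd2]
  simp only [qint, hpow, hpow']
  rw [← add_div, div_sub_div_same, div_sub_div_same, div_mul_div_comm,
    div_mul_div_comm]
  congr 1
  have := qint_key (q ^ m) hx (N : ℤ) (j : ℤ)
  simpa using this
end

section
/- With Δ(z) and δ(z) as above, for any integer s ∉ {0, 2, −2}, the identity Δ(z)Δ(x^s z) − Δ(z^{−1})Δ(x^{−s}z^{−1}) = c(x,r)·{ Δ(x^{s+1})·(δ(x^{−1}z) − δ(x^{s+1}z)) + Δ(x^{s−1})·(δ(x^{s−1}z) − δ(xz)) } holds as formal distributions, where c(x,r) = [r]_x [r−1]_x (x − x^{−1}). -/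
open PowerSeries Finset

set_option maxHeartbeats 4000000

/-- `[s]_x = (x^s − x^{−s})/(x − x^{−1})` for real `s` (via complex powers). -/
noncomputable def qnum (x : ℂ) (s : ℝ) : ℂ := (x ^ (s : ℂ) - x ^ (-s : ℂ)) / (x - x⁻¹)

/-- `c(x,r) = [r]_x [r−1]_x (x − x^{−1})`. -/
noncomputable def cxr (x : ℂ) (r : ℝ) : ℂ := qnum x r * qnum x (r - 1) * (x - x⁻¹)

/-- The formal power series expansion (in nonnegative powers of `z`) of
`Δ(z) = (1 − x^{2r−1}z)(1 − x^{−2r+1}z)/((1 − xz)(1 − x^{−1}z))`. -/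
noncomputable def Δps (x : ℂ) (r : ℝ) : PowerSeries ℂ :=
  (1 - PowerSeries.C (x ^ ((2 * r - 1 : ℝ) : ℂ)) * PowerSeries.X) *
    (1 - PowerSeries.C (x ^ ((-2 * r + 1 : ℝ) : ℂ)) * PowerSeries.X) *
    PowerSeries.mk (fun n => x ^ n) * PowerSeries.mk (fun n => x⁻¹ ^ n)

/-- The value of the rational function `Δ` at a complex number `w`. -/
noncomputable def Δval (x : ℂ) (r : ℝ) (w : ℂ) : ℂ :=
  (1 - x ^ ((2 * r - 1 : ℝ) : ℂ) * w) * (1 - x ^ ((-2 * r + 1 : ℝ) : ℂ) * w) /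
    ((1 - x * w) * (1 - x⁻¹ * w))

private lemma one_sub_C_mul_X_mul_mk (u : ℂ) :
    (1 - PowerSeries.C u * X) * PowerSeries.mk (fun n => u ^ n) = 1 := by
  ext n
  cases n with
  | zero => simp
  | succ n =>
    rw [sub_mul, one_mul, map_sub, mul_assoc, coeff_C_mul, coeff_succ_X_mul,
      coeff_mk, coeff_mk, coeff_one]
    simp [pow_succ, mul_comm]

private lemma expand_prod (p : ℂ) (hp : p ≠ 0) :
    (1 - PowerSeries.C p * X) * (1 - PowerSeries.C p⁻¹ * X)
      = 1 - PowerSeries.C (p + p⁻¹) * X + X ^ 2 := by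
  have h1 : PowerSeries.C (p + p⁻¹) = PowerSeries.C p + PowerSeries.C p⁻¹ := map_add _ _ _
  have h2 : PowerSeries.C p * PowerSeries.C p⁻¹ = 1 := by
    rw [← map_mul, mul_inv_cancel₀ hp, map_one]
  calc (1 - PowerSeries.C p * X) * (1 - PowerSeries.C p⁻¹ * X)
      = 1 - (PowerSeries.C p + PowerSeries.C p⁻¹) * X
          + (PowerSeries.C p * PowerSeries.C p⁻¹) * X ^ 2 := by ring
    _ = 1 - PowerSeries.C (p + p⁻¹) * X + X ^ 2 := by rw [h1, h2, one_mul]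

private lemma coeff_Dps (x : ℂ) (hx0 : x ≠ 0) (r : ℝ)
    (a : ℂ) (ha : a = x ^ ((2 * r - 1 : ℝ) : ℂ)) (ha0 : a ≠ 0)
    (hb : x ^ ((-2 * r + 1 : ℝ) : ℂ) = a⁻¹)
    (hw : x - x⁻¹ ≠ 0) (n : ℕ) :
    PowerSeries.coeff n (Δps x r) =
      (if n = 0 then 1 else 0)
        + (x + x⁻¹ - a - a⁻¹) / (x - x⁻¹) * (x ^ (n : ℤ) - x ^ (-(n : ℤ))) := by
  set κ := (x + x⁻¹ - a - a⁻¹) / (x - x⁻¹) with hκ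
  set D : ℕ → ℂ := fun n => (if n = 0 then 1 else 0) + κ * (x ^ (n : ℤ) - x ^ (-(n : ℤ))) with hD
  suffices h : Δps x r = PowerSeries.mk D by rw [h, coeff_mk]
  have hxx : x * x⁻¹ = 1 := mul_inv_cancel₀ hx0
  have rec3 : ∀ m : ℕ,
      D (m + 3) - (x + x⁻¹) * D (m + 2) + D (m + 1) = 0 := by
    intro m
    simp only [hD, Nat.add_eq_zero, and_false, if_false, Nat.succ_ne_zero, OfNat.ofNat_ne_zero]
    push_cast
    have p1 : x ^ ((m : ℤ) + 1) = x ^ (m : ℤ) * x := by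
      rw [zpow_add₀ hx0, zpow_one]
    have p2 : x ^ ((m : ℤ) + 2) = x ^ (m : ℤ) * (x * x) := by
      rw [show (m : ℤ) + 2 = m + 1 + 1 by ring, zpow_add₀ hx0, zpow_one, p1]; ring
    have p3 : x ^ ((m : ℤ) + 3) = x ^ (m : ℤ) * (x * (x * x)) := by
      rw [show (m : ℤ) + 3 = m + 1 + 1 + 1 by ring, zpow_add₀ hx0, zpow_one,
        show (m : ℤ) + 1 + 1 = m + 2 by ring, p2]; ring
    have m1 : x ^ (-((m : ℤ) + 1)) = (x ^ (m : ℤ))⁻¹ * x⁻¹ := by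
      rw [zpow_neg, p1, mul_inv]
    have m2 : x ^ (-((m : ℤ) + 2)) = (x ^ (m : ℤ))⁻¹ * (x⁻¹ * x⁻¹) := by
      rw [zpow_neg, p2, mul_inv, mul_inv]
    have m3 : x ^ (-((m : ℤ) + 3)) = (x ^ (m : ℤ))⁻¹ * (x⁻¹ * (x⁻¹ * x⁻¹)) := by
      rw [zpow_neg, p3, mul_inv, mul_inv, mul_inv]
    rw [p1, p2, p3, m1, m2, m3]
    linear_combination (κ * ((x ^ (m : ℤ))⁻¹ * x⁻¹ - x ^ (m : ℤ) * x)) * hxx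
  have hlhs : ∀ k : ℕ, PowerSeries.coeff k
        (PowerSeries.mk D * (1 - PowerSeries.C (x + x⁻¹) * X + X ^ 2))
      = D k - (x + x⁻¹) * (if k = 0 then 0 else D (k - 1))
          + (if k ≤ 1 then 0 else D (k - 2)) := by
    intro k
    have hrw : PowerSeries.mk D * (1 - PowerSeries.C (x + x⁻¹) * X + X ^ 2)
        = PowerSeries.mk D - PowerSeries.C (x + x⁻¹) * (X * PowerSeries.mk D)
          + X * (X * PowerSeries.mk D) := by ring
    rw [hrw, map_add, map_sub, coeff_C_mul]
    cases k with
    | zero => rw [coeff_zero_X_mul, coeff_zero_X_mul, coeff_mk]; norm_num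
    | succ k =>
      rw [coeff_succ_X_mul, coeff_succ_X_mul, coeff_mk]
      cases k with
      | zero => rw [coeff_zero_X_mul, coeff_mk]; norm_num
      | succ k =>
        have e : k + 1 + 1 - 2 = k := by omega
        have e' : k + 1 + 1 - 1 = k + 1 := by omega
        rw [if_neg (by omega : ¬ (k + 1 + 1 = 0)), if_neg (by omega : ¬ (k + 1 + 1 ≤ 1)), e, e']
        simp only [coeff_succ_X_mul, coeff_mk]
  have hrhs : ∀ k : ℕ, PowerSeries.coeff k
        (1 - PowerSeries.C (a + a⁻¹) * X + X ^ 2)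
      = (if k = 0 then 1 else 0) - (a + a⁻¹) * (if k = 1 then 1 else 0)
          + (if k = 2 then 1 else 0) := by
    intro k
    rw [map_add, map_sub, coeff_C_mul, coeff_one, coeff_X, coeff_X_pow]
  have key : PowerSeries.mk D * (1 - PowerSeries.C (x + x⁻¹) * X + X ^ 2)
      = 1 - PowerSeries.C (a + a⁻¹) * X + X ^ 2 := by
    have hD0 : D 0 = 1 := by simp [hD]
    have hD1 : D 1 = x + x⁻¹ - a - a⁻¹ := by
      simp only [hD, Nat.cast_one, zpow_one, zpow_neg, one_ne_zero, if_false, hκ]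
      rw [zero_add, div_mul_cancel₀ _ hw]
    have hD2 : D 2 = (x + x⁻¹ - a - a⁻¹) * (x + x⁻¹) := by
      simp only [hD, Nat.cast_ofNat, zpow_neg, OfNat.ofNat_ne_zero, if_false, hκ]
      have hfac : x ^ (2 : ℤ) - (x ^ (2 : ℤ))⁻¹ = (x - x⁻¹) * (x + x⁻¹) := by
        rw [show (2 : ℤ) = ((2 : ℕ) : ℤ) by norm_num, zpow_natCast]
        rw [show x ^ (2 : ℕ) = x * x by ring, mul_inv]
        ring
      rw [zero_add, hfac, ← mul_assoc, div_mul_cancel₀ _ hw]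
    ext n
    rw [hlhs n, hrhs n]
    match n with
    | 0 => simp [hD0]
    | 1 =>
      rw [if_neg (by omega : ¬ (1 = 0)), if_pos (by omega : 1 ≤ 1), hD0, hD1,
        if_neg (by omega : ¬ (1 = 0)), if_pos rfl, if_neg (by omega : ¬ (1 = 2))]
      ring
    | 2 =>
      rw [if_neg (by omega : ¬ (2 = 0)), if_neg (by omega : ¬ ((2:ℕ) ≤ 1)), hD0, hD1, hD2,
        if_neg (by omega : ¬ (2 = 0)), if_neg (by omega : ¬ ((2:ℕ) = 1)), if_pos rfl]
      norm_num
      ring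
    | (m + 3) =>
      have h3 : ¬ (m + 3 ≤ 1) := by omega
      have e1 : m + 3 - 1 = m + 2 := by omega
      have e2 : m + 3 - 2 = m + 1 := by omega
      rw [if_neg (by omega : ¬ (m + 3 = 0)), if_neg h3, e1, e2,
        if_neg (by omega : ¬ (m + 3 = 0)), if_neg (by omega : ¬ (m + 3 = 1)),
        if_neg (by omega : ¬ (m + 3 = 2))]
      have := rec3 m
      linear_combination this
  have e1 := one_sub_C_mul_X_mul_mk x
  have e2 := one_sub_C_mul_X_mul_mk x⁻¹
  rw [Δps, hb, ← ha, expand_prod a ha0, ← key, ← expand_prod x hx0]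
  calc PowerSeries.mk D * ((1 - PowerSeries.C x * X) * (1 - PowerSeries.C x⁻¹ * X))
        * PowerSeries.mk (fun n => x ^ n) * PowerSeries.mk (fun n => x⁻¹ ^ n)
      = PowerSeries.mk D * (((1 - PowerSeries.C x * X) * PowerSeries.mk (fun n => x ^ n))
          * ((1 - PowerSeries.C x⁻¹ * X) * PowerSeries.mk (fun n => x⁻¹ ^ n))) := by ring
    _ = PowerSeries.mk D := by rw [e1, e2, mul_one, mul_one]

private lemma sum_eval (x : ℂ) (hx0 : x ≠ 0) (α : ℂ) (hα0 : α ≠ 0) (hα1 : α ≠ 1)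
    (hd2 : x ^ 2 - α ≠ 0) (hd3 : 1 - x ^ 2 * α ≠ 0) (κ : ℂ) (n : ℕ) (hn : n ≠ 0) :
    ∑ k ∈ range (n + 1),
      ((if k = 0 then 1 else 0) + κ * (x ^ (k : ℤ) - x ^ (-(k : ℤ))))
        * (α ^ (n - k) *
          ((if n - k = 0 then 1 else 0) + κ * (x ^ ((n - k : ℕ) : ℤ) - x ^ (-((n - k : ℕ) : ℤ)))))
      = κ * (x ^ n - (x ^ n)⁻¹) * (1 + α ^ n)
        + κ ^ 2 * ((x ^ n + (x ^ n)⁻¹) * (1 - α ^ n * α) / (1 - α)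
            - (x ^ n)⁻¹ * ((x ^ n * x) ^ 2 - α ^ n * α) / (x ^ 2 - α)
            - (x ^ n)⁻¹ * (1 - (x ^ n * x) ^ 2 * (α ^ n * α)) / (1 - x ^ 2 * α)) := by
  set E : ℕ → ℂ := fun k => κ * (x ^ (k : ℤ) - x ^ (-(k : ℤ))) with hE
  have hxn : x ^ n ≠ 0 := pow_ne_zero _ hx0
  have hαn : α ^ n ≠ 0 := pow_ne_zero _ hα0
  have hxx : x * x⁻¹ = 1 := mul_inv_cancel₀ hx0
  have hαα : α * α⁻¹ = 1 := mul_inv_cancel₀ hα0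
  have hUU : x ^ n * (x ^ n)⁻¹ = 1 := mul_inv_cancel₀ hxn
  have hTT : α ^ n * (α ^ n)⁻¹ = 1 := mul_inv_cancel₀ hαn
  have hq1 : α⁻¹ ≠ 1 := fun h => hα1 (by rw [← inv_inv α, h, inv_one])
  have hq2 : x ^ 2 * α⁻¹ ≠ 1 := by
    intro h
    have h2 : x ^ 2 * α⁻¹ * α = α := by rw [h, one_mul]
    rw [mul_assoc, inv_mul_cancel₀ hα0, mul_one] at h2
    exact hd2 (by rw [h2, sub_self])
  have hq3 : (x ^ 2)⁻¹ * α⁻¹ ≠ 1 := by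
    intro h
    rw [← mul_inv] at h
    have h2 : x ^ 2 * α = 1 := inv_eq_one.mp h
    exact hd3 (by rw [h2, sub_self])
  have hg1 : (α⁻¹ - 1) * (α⁻¹ - 1)⁻¹ = 1 := mul_inv_cancel₀ (sub_ne_zero_of_ne hq1)
  have hg2 : (x ^ 2 * α⁻¹ - 1) * (x ^ 2 * α⁻¹ - 1)⁻¹ = 1 :=
    mul_inv_cancel₀ (sub_ne_zero_of_ne hq2)
  have hg3 : ((x ^ 2)⁻¹ * α⁻¹ - 1) * ((x ^ 2)⁻¹ * α⁻¹ - 1)⁻¹ = 1 :=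
    mul_inv_cancel₀ (sub_ne_zero_of_ne hq3)
  have hj1 : (1 - α) * (1 - α)⁻¹ = 1 := mul_inv_cancel₀ (sub_ne_zero_of_ne (Ne.symm hα1))
  have hj2 : (x ^ 2 - α) * (x ^ 2 - α)⁻¹ = 1 := mul_inv_cancel₀ hd2
  have hj3 : (1 - x ^ 2 * α) * (1 - x ^ 2 * α)⁻¹ = 1 := mul_inv_cancel₀ hd3
  have cz1 : ∀ m : ℕ, x ^ ((m : ℕ) : ℤ) = x ^ m := fun m => zpow_natCast x m
  have cz2 : ∀ m : ℕ, x ^ (-((m : ℕ) : ℤ)) = (x ^ m)⁻¹ := fun m => by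
    rw [zpow_neg, zpow_natCast]
  have hEn : E n = κ * (x ^ n - (x ^ n)⁻¹) := by rw [hE]; simp only [cz1, cz2]
  have split : ∀ k ∈ range (n + 1),
      ((if k = 0 then 1 else 0) + E k) * (α ^ (n - k) * ((if n - k = 0 then 1 else 0) + E (n - k)))
      = (if k = 0 then 1 else 0) * (α ^ (n - k) * (if n - k = 0 then 1 else 0))
        + (if k = 0 then 1 else 0) * (α ^ (n - k) * E (n - k))
        + E k * (α ^ (n - k) * (if n - k = 0 then 1 else 0))
        + E k * (α ^ (n - k) * E (n - k)) := by
    intro k _; ring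
  rw [Finset.sum_congr rfl split, Finset.sum_add_distrib, Finset.sum_add_distrib,
    Finset.sum_add_distrib]
  have h1 : ∑ k ∈ range (n + 1),
      (if k = 0 then 1 else 0) * (α ^ (n - k) * (if n - k = 0 then 1 else 0)) = 0 := by
    apply Finset.sum_eq_zero
    intro k _
    rcases eq_or_ne k 0 with rfl | h
    · simp [hn]
    · simp [h]
  have h2 : ∑ k ∈ range (n + 1),
      (if k = 0 then 1 else 0) * (α ^ (n - k) * E (n - k)) = α ^ n * E n := by
    rw [Finset.sum_eq_single_of_mem 0 (by simp)]
    · simp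
    · intro c _ hc; simp [hc]
  have h3 : ∑ k ∈ range (n + 1),
      E k * (α ^ (n - k) * (if n - k = 0 then 1 else 0)) = E n := by
    rw [Finset.sum_eq_single_of_mem n (by simp)]
    · simp
    · intro c hc hcn
      have : n - c ≠ 0 := Nat.sub_ne_zero_of_lt
        (lt_of_le_of_ne (by simpa [Nat.lt_succ_iff] using hc) hcn)
      simp [this]
  have hg4 : ∀ k ∈ range (n + 1), E k * (α ^ (n - k) * E (n - k))
      = κ ^ 2 * (((x ^ n + (x ^ n)⁻¹) * α ^ n) * (α⁻¹) ^ k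
          - ((x ^ n)⁻¹ * α ^ n) * (x ^ 2 * α⁻¹) ^ k
          - (x ^ n * α ^ n) * ((x ^ 2)⁻¹ * α⁻¹) ^ k) := by
    intro k hk
    have hkn : k ≤ n := by simpa [Nat.lt_succ_iff] using hk
    have hxk1 : x ^ k * (x ^ k)⁻¹ = 1 := mul_inv_cancel₀ (pow_ne_zero _ hx0)
    have c3 : x ^ ((n - k : ℕ) : ℤ) = x ^ n * (x ^ k)⁻¹ := by
      rw [cz1, pow_sub₀ x hx0 hkn]
    have c4 : x ^ (-((n - k : ℕ) : ℤ)) = (x ^ n)⁻¹ * x ^ k := by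
      rw [cz2, pow_sub₀ x hx0 hkn, mul_inv, inv_inv]
    have c5 : α ^ (n - k) = α ^ n * (α ^ k)⁻¹ := pow_sub₀ α hα0 hkn
    rw [hE]
    simp only []
    rw [c3, c4, c5]
    simp only [cz1, cz2, mul_pow, inv_pow, pow_right_comm x 2 k]
    linear_combination (κ ^ 2 * (α ^ n * (α ^ k)⁻¹) * (x ^ n + (x ^ n)⁻¹)) * hxk1
  have pw1 : (α⁻¹) ^ (n + 1) = (α ^ n * α)⁻¹ := by rw [inv_pow, pow_succ]
  have pw2 : (x ^ 2 * α⁻¹) ^ (n + 1) = (x ^ n * x) ^ 2 * (α ^ n * α)⁻¹ := by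
    rw [mul_pow, inv_pow, pow_right_comm x 2, pow_succ x n, pow_succ α n]
  have pw3 : ((x ^ 2)⁻¹ * α⁻¹) ^ (n + 1) = ((x ^ n * x) ^ 2)⁻¹ * (α ^ n * α)⁻¹ := by
    rw [mul_pow, inv_pow, inv_pow, pow_right_comm x 2, pow_succ x n, pow_succ α n]
  have hc1 : ((x ^ n + (x ^ n)⁻¹) * α ^ n) * ((α ^ n * α)⁻¹ - 1) / (α⁻¹ - 1)
      = (x ^ n + (x ^ n)⁻¹) * (1 - α ^ n * α) / (1 - α) := by
    linear_combination
      ((x ^ n)⁻¹ * (1 - α)⁻¹ + x ^ n * (1 - α)⁻¹ + -(α * α ^ n * (x ^ n)⁻¹ * (1 - α)⁻¹) + -(α * x ^ n * α ^ n * (1 - α)⁻¹)) * hg1 +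
      (α ^ n * (x ^ n)⁻¹ * (α⁻¹ - 1)⁻¹ + -(α ^ n * α⁻¹ * (x ^ n)⁻¹ * (α ^ n)⁻¹ * (α⁻¹ - 1)⁻¹) + x ^ n * α ^ n * (α⁻¹ - 1)⁻¹ + -(x ^ n * α ^ n * α⁻¹ * (α ^ n)⁻¹ * (α⁻¹ - 1)⁻¹)) * hj1 +
      (-((x ^ n)⁻¹ * (α⁻¹ - 1)⁻¹ * (1 - α)⁻¹) + α⁻¹ * (x ^ n)⁻¹ * (α⁻¹ - 1)⁻¹ * (1 - α)⁻¹ + α ^ n * (x ^ n)⁻¹ * (α⁻¹ - 1)⁻¹ * (1 - α)⁻¹ + -(x ^ n * (α⁻¹ - 1)⁻¹ * (1 - α)⁻¹) + x ^ n * α⁻¹ * (α⁻¹ - 1)⁻¹ * (1 - α)⁻¹ + x ^ n * α ^ n * (α⁻¹ - 1)⁻¹ * (1 - α)⁻¹ + -(α * α ^ n * α⁻¹ * (x ^ n)⁻¹ * (α⁻¹ - 1)⁻¹ * (1 - α)⁻¹) + -(α * x ^ n * α ^ n * α⁻¹ * (α⁻¹ - 1)⁻¹ * (1 - α)⁻¹))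 * hTT +
      (-(α ^ n * (x ^ n)⁻¹ * (α ^ n)⁻¹ * (α⁻¹ - 1)⁻¹ * (1 - α)⁻¹) + (α ^ n) ^ 2 * (x ^ n)⁻¹ * (α ^ n)⁻¹ * (α⁻¹ - 1)⁻¹ * (1 - α)⁻¹ + -(x ^ n * α ^ n * (α ^ n)⁻¹ * (α⁻¹ - 1)⁻¹ * (1 - α)⁻¹) + x ^ n * (α ^ n) ^ 2 * (α ^ n)⁻¹ * (α⁻¹ - 1)⁻¹ * (1 - α)⁻¹) * hαα
  have hc2 : ((x ^ n)⁻¹ * α ^ n) * ((x ^ n * x) ^ 2 * (α ^ n * α)⁻¹ - 1) / (x ^ 2 * α⁻¹ - 1)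
      = (x ^ n)⁻¹ * ((x ^ n * x) ^ 2 - α ^ n * α) / (x ^ 2 - α) := by
    linear_combination
      (-(α * α ^ n * (x ^ n)⁻¹ * (x ^ 2 - α)⁻¹) + (x) ^ 2 * (x ^ n) ^ 2 * (x ^ n)⁻¹ * (x ^ 2 - α)⁻¹) * hg2 +
      (α ^ n * (x ^ n)⁻¹ * (x ^ 2 * α⁻¹ - 1)⁻¹ + -((x) ^ 2 * (x ^ n) ^ 2 * α ^ n * α⁻¹ * (x ^ n)⁻¹ * (α ^ n)⁻¹ * (x ^ 2 * α⁻¹ - 1)⁻¹)) * hj2 +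
      ((x) ^ 2 * α ^ n * (x ^ n)⁻¹ * (x ^ 2 * α⁻¹ - 1)⁻¹ * (x ^ 2 - α)⁻¹ + -((x) ^ 2 * (x ^ n) ^ 2 * (x ^ n)⁻¹ * (x ^ 2 * α⁻¹ - 1)⁻¹ * (x ^ 2 - α)⁻¹) + -((x) ^ 2 * α * α ^ n * α⁻¹ * (x ^ n)⁻¹ * (x ^ 2 * α⁻¹ - 1)⁻¹ * (x ^ 2 - α)⁻¹) + (x) ^ 4 * (x ^ n) ^ 2 * α⁻¹ * (x ^ n)⁻¹ * (x ^ 2 * α⁻¹ - 1)⁻¹ * (x ^ 2 - α)⁻¹) * hTT +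
      ((x) ^ 2 * (α ^ n) ^ 2 * (x ^ n)⁻¹ * (α ^ n)⁻¹ * (x ^ 2 * α⁻¹ - 1)⁻¹ * (x ^ 2 - α)⁻¹ + -((x) ^ 2 * (x ^ n) ^ 2 * α ^ n * (x ^ n)⁻¹ * (α ^ n)⁻¹ * (x ^ 2 * α⁻¹ - 1)⁻¹ * (x ^ 2 - α)⁻¹)) * hαα
  have hc3 : (x ^ n * α ^ n) * (((x ^ n * x) ^ 2)⁻¹ * (α ^ n * α)⁻¹ - 1) / ((x ^ 2)⁻¹ * α⁻¹ - 1)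
      = (x ^ n)⁻¹ * (1 - (x ^ n * x) ^ 2 * (α ^ n * α)) / (1 - x ^ 2 * α) := by
    linear_combination
      ((x ^ n)⁻¹ * (1 - x ^ 2 * α)⁻¹ + -((x) ^ 2 * α * (x ^ n) ^ 2 * α ^ n * (x ^ n)⁻¹ * (1 - x ^ 2 * α)⁻¹)) * hg3 +
      (x ^ n * α ^ n * ((x ^ 2)⁻¹ * α⁻¹ - 1)⁻¹ + -(x ^ n * α ^ n * (x⁻¹) ^ 2 * α⁻¹ * ((x ^ n)⁻¹) ^ 2 * (α ^ n)⁻¹ * ((x ^ 2)⁻¹ * α⁻¹ - 1)⁻¹)) * hj3 +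
      (-((x ^ n)⁻¹ * ((x ^ 2)⁻¹ * α⁻¹ - 1)⁻¹ * (1 - x ^ 2 * α)⁻¹) + (x⁻¹) ^ 2 * α⁻¹ * (x ^ n)⁻¹ * ((x ^ 2)⁻¹ * α⁻¹ - 1)⁻¹ * (1 - x ^ 2 * α)⁻¹ + x ^ n * α ^ n * ((x ^ 2)⁻¹ * α⁻¹ - 1)⁻¹ * (1 - x ^ 2 * α)⁻¹ + -((x) ^ 2 * α * x ^ n * α ^ n * ((x ^ 2)⁻¹ * α⁻¹ - 1)⁻¹ * (1 - x ^ 2 * α)⁻¹) + (x) ^ 2 * α * (x ^ n) ^ 2 * α ^ n * (x ^ n)⁻¹ * ((x ^ 2)⁻¹ * α⁻¹ - 1)⁻¹ * (1 - x ^ 2 * α)⁻¹ + -((x) ^ 2 * α * (x ^ n) ^ 2 * α ^ n * (x⁻¹) ^ 2 * α⁻¹ * (x ^ n)⁻¹ * ((x ^ 2)⁻¹ * α⁻¹ - 1)⁻¹ * (1 - x ^ 2 * α)⁻¹)) * hTT +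
      (-(α ^ n * (x ^ n)⁻¹ * (α ^ n)⁻¹ * ((x ^ 2)⁻¹ * α⁻¹ - 1)⁻¹ * (1 - x ^ 2 * α)⁻¹) + α ^ n * (x⁻¹) ^ 2 * α⁻¹ * (x ^ n)⁻¹ * (α ^ n)⁻¹ * ((x ^ 2)⁻¹ * α⁻¹ - 1)⁻¹ * (1 - x ^ 2 * α)⁻¹ + x ^ n * (α ^ n) ^ 2 * (α ^ n)⁻¹ * ((x ^ 2)⁻¹ * α⁻¹ - 1)⁻¹ * (1 - x ^ 2 * α)⁻¹ + (x ^ n) ^ 2 * (α ^ n) ^ 2 * (x ^ n)⁻¹ * (α ^ n)⁻¹ * ((x ^ 2)⁻¹ * α⁻¹ - 1)⁻¹ * (1 - x ^ 2 * α)⁻¹ + -((x) ^ 2 * α * x ^ n * (α ^ n) ^ 2 * (α ^ n)⁻¹ * ((x ^ 2)⁻¹ * α⁻¹ - 1)⁻¹ * (1 - x ^ 2 * α)⁻¹) + -((x) ^ 2 * α * (x ^ n) ^ 2 * (α ^ n) ^ 2 * (x⁻¹) ^ 2 * α⁻¹ * (x ^ n)⁻¹ * (α ^ n)⁻¹ *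 ((x ^ 2)⁻¹ * α⁻¹ - 1)⁻¹ * (1 - x ^ 2 * α)⁻¹)) * hUU +
      (-(x ^ n * α ^ n * ((x ^ n)⁻¹) ^ 2 * (α ^ n)⁻¹ * ((x ^ 2)⁻¹ * α⁻¹ - 1)⁻¹ * (1 - x ^ 2 * α)⁻¹) + (x ^ n) ^ 3 * (α ^ n) ^ 2 * ((x ^ n)⁻¹) ^ 2 * (α ^ n)⁻¹ * ((x ^ 2)⁻¹ * α⁻¹ - 1)⁻¹ * (1 - x ^ 2 * α)⁻¹) * hαα +
      (-(α * x ^ n * α ^ n * α⁻¹ * ((x ^ n)⁻¹) ^ 2 * (α ^ n)⁻¹ * ((x ^ 2)⁻¹ * α⁻¹ - 1)⁻¹ * (1 - x ^ 2 * α)⁻¹) + α * (x ^ n) ^ 3 * (α ^ n) ^ 2 * α⁻¹ * ((x ^ n)⁻¹) ^ 2 * (α ^ n)⁻¹ * ((x ^ 2)⁻¹ * α⁻¹ - 1)⁻¹ * (1 - x ^ 2 * α)⁻¹ + -(x * α * x ^ n * α ^ n * x⁻¹ * α⁻¹ * ((x ^ n)⁻¹) ^ 2 * (α ^ n)⁻¹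 * ((x ^ 2)⁻¹ * α⁻¹ - 1)⁻¹ * (1 - x ^ 2 * α)⁻¹) + x * α * (x ^ n) ^ 3 * (α ^ n) ^ 2 * x⁻¹ * α⁻¹ * ((x ^ n)⁻¹) ^ 2 * (α ^ n)⁻¹ * ((x ^ 2)⁻¹ * α⁻¹ - 1)⁻¹ * (1 - x ^ 2 * α)⁻¹) * hxx
  have h4 : ∑ k ∈ range (n + 1), E k * (α ^ (n - k) * E (n - k))
      = κ ^ 2 * ((x ^ n + (x ^ n)⁻¹) * (1 - α ^ n * α) / (1 - α)
          - (x ^ n)⁻¹ * ((x ^ n * x) ^ 2 - α ^ n * α) / (x ^ 2 - α)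
          - (x ^ n)⁻¹ * (1 - (x ^ n * x) ^ 2 * (α ^ n * α)) / (1 - x ^ 2 * α)) := by
    rw [Finset.sum_congr rfl hg4]
    simp only [← Finset.mul_sum, Finset.sum_sub_distrib, ← Finset.mul_sum]
    rw [geom_sum_eq hq1, geom_sum_eq hq2, geom_sum_eq hq3, pw1, pw2, pw3]
    linear_combination κ ^ 2 * hc1 - κ ^ 2 * hc2 - κ ^ 2 * hc3
  rw [h1, h2, h3, h4, hEn]
  ring

private lemma pos_poly (x a v U T xi ai Ui iw j1 j2 j3 p2 p4 : ℂ)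
    (hxx : x * xi = 1) (haa : a * ai = 1) (hUU : U * Ui = 1)
    (hiw : (x - xi) * iw = 1)
    (hj1 : (1 - v) * j1 = 1) (hj2 : (x ^ 2 - v) * j2 = 1) (hj3 : (1 - x ^ 2 * v) * j3 = 1)
    (hp2 : (1 - xi * (v * x)) * p2 = 1) (hp4 : (1 - xi * (v * xi)) * p4 = 1) :
    (x + xi - a - ai) * iw * (U - Ui) * (1 + T)
      + ((x + xi - a - ai) * iw) ^ 2 *
        ((U + Ui) * (1 - T * v) * j1 - Ui * ((U * x) ^ 2 - T * v) * j2
          - Ui * (1 - (U * x) ^ 2 * (T * v)) * j3)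
      = (a + ai - x - xi) * iw *
        ((1 - a * (v * x)) * (1 - ai * (v * x)) * (j3 * p2) * (Ui - T * U)
          + (1 - a * (v * xi)) * (1 - ai * (v * xi)) * (p2 * p4) * (T * Ui - U)) := by
  have hN1 : (1 - a * (v * x)) * (1 - ai * (v * x))
      = (1 - x * (v * x)) * (1 - xi * (v * x)) + (x + xi - a - ai) * (v * x) := by
    linear_combination
      (x ^ 3 * v ^ 2 * xi) * haa +
      (-(x ^ 2 * a * v ^ 2 * ai)) * hxx
  have hN2 : (1 - a * (v * xi)) * (1 - ai * (v * xi))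
      = (1 - x * (v * xi)) * (1 - xi * (v * xi)) + (x + xi - a - ai) * (v * xi) := by
    linear_combination
      (x * v ^ 2 * xi ^ 3) * haa +
      (-(a * v ^ 2 * xi ^ 2 * ai)) * hxx
  have hCore : (U + Ui) * (1 - T * v) * j1 - Ui * ((U * x) ^ 2 - T * v) * j2
        - Ui * (1 - (U * x) ^ 2 * (T * v)) * j3
      = -((x - xi) * v * (x * (Ui - T * U) * (j3 * p2) + xi * (T * Ui - U) * (p2 * p4))) := by
    linear_combination
      (Ui * j3 + -(Ui * j1) + -(U * j1) + -(v * T * Ui * j2) + v * T * Ui * j1 + v * U * T * j1 + x * v * xi * Ui * j3 * p2 + -(x * v * U * T * xi * j3 * p2) + x ^ 2 * U ^ 2 * Ui * j2 + -(x ^ 2 * v * Ui * j3 * p2) + x ^ 2 * v * U * T * j3 * p2 + -(x ^ 2 * v * U ^ 2 * T * Ui * j3)) * hp4 +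
      (Ui * j3 * p4 + -(Ui * j1 * p4) + -(U * j1 * p4) + -(v * xi ^ 2 * Ui * j3 * p4) + v * xi ^ 2 * Ui * j1 * p4 + -(v * T * Ui * j2 * p4) + v * T * Ui * j1 * p4 + v * U * xi ^ 2 * j1 * p4 + v * U * T * j1 * p4 + v ^ 2 * T * xi ^ 2 * Ui * j2 * p4 + -(v ^ 2 * T * xi ^ 2 * Ui * j1 * p4) + -(v ^ 2 * U * T * xi ^ 2 * j1 * p4) + x ^ 2 * U ^ 2 * Ui * j2 * p4 + -(x ^ 2 * v * U ^ 2 * xi ^ 2 * Ui * j2 * p4) + -(x ^ 2 * v * U ^ 2 * T * Ui * j3 * p4) + x ^ 2 * v ^ 2 * U ^ 2 * T * xi ^ 2 * Ui * j3 * p4) * hp2 +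
      (-(Ui * j1 * p2 * p4) + -(U * j1 * p2 * p4) + v * xi ^ 2 * Ui * j1 * p2 * p4 + -(v * T * Ui * j2 * p2 * p4) + v * T * Ui * j1 * p2 * p4 + v * T * xi ^ 2 * Ui * p2 * p4 + -(v * U * xi ^ 2 * p2 * p4) + v * U * xi ^ 2 * j1 * p2 * p4 + v * U * T * j1 * p2 * p4 + v ^ 2 * T * xi ^ 2 * Ui * j2 * p2 * p4 + -(v ^ 2 * T * xi ^ 2 * Ui * j1 * p2 * p4) + -(v ^ 2 * U * T * xi ^ 2 * j1 * p2 * p4) + x * v * xi * Ui * j1 * p2 * p4 + -(x * v * T * xi * Ui * p2 * p4) + x * v * U * xi * p2 * p4 + x * v * U * xi * j1 * p2 * p4 + -(x * v ^ 2 * xi ^ 3 * Ui * j1 * p2 * p4) + x * v ^ 2 * T * xi * Ui * j2 * p2 * p4 + -(x * v ^ 2 * T * xi * Ui * j1 * p2 * p4) + -(x * v ^ 2 * U * xi ^ 3 * j1 * p2 * p4) + -(x * v ^ 2 * U * T * xi * j1 * p2 * p4) + -(x * v ^ 3 * T * xi ^ 3 * Ui * j2 * p2 * p4) + x * v ^ 3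 * T * xi ^ 3 * Ui * j1 * p2 * p4 + x * v ^ 3 * U * T * xi ^ 3 * j1 * p2 * p4 + x ^ 2 * U ^ 2 * Ui * j2 * p2 * p4 + -(x ^ 2 * v * U ^ 2 * xi ^ 2 * Ui * j2 * p2 * p4) + -(x ^ 3 * v * U ^ 2 * xi * Ui * j2 * p2 * p4) + x ^ 3 * v ^ 2 * U ^ 2 * xi ^ 3 * Ui * j2 * p2 * p4) * hj3 +
      (Ui * j3 * p2 * p4 + -(Ui * j1 * j3 * p2 * p4) + -(U * j1 * j3 * p2 * p4) + -(v * xi ^ 2 * Ui * j3 * p2 * p4) + v * xi ^ 2 * Ui * j1 * j3 * p2 * p4 + v * T * Ui * j1 * j3 * p2 * p4 + v * T * xi ^ 2 * Ui * j3 * p2 * p4 + -(v * U * xi ^ 2 * j3 * p2 * p4) + v * U * xi ^ 2 * j1 * j3 * p2 * p4 + v * U * T * j1 * j3 * p2 * p4 + -(v ^ 2 * T * xi ^ 2 * Ui * j1 * j3 * p2 * p4) + -(v ^ 2 * U * T * xi ^ 2 * j1 * j3 * p2 * p4) + x * v * xi * Ui * j1 * j3 * p2 * p4 + -(x * v * T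 * xi * Ui * j3 * p2 * p4) + x * v * U * xi * j3 * p2 * p4 + x * v * U * xi * j1 * j3 * p2 * p4 + -(x * v * U * T * xi * j3 * p2 * p4) + -(x * v ^ 2 * xi ^ 3 * Ui * j1 * j3 * p2 * p4) + -(x * v ^ 2 * T * xi * Ui * j1 * j3 * p2 * p4) + -(x * v ^ 2 * U * xi ^ 3 * j1 * j3 * p2 * p4) + -(x * v ^ 2 * U * T * xi * j1 * j3 * p2 * p4) + x * v ^ 2 * U * T * xi ^ 3 * j3 * p2 * p4 + x * v ^ 3 * T * xi ^ 3 * Ui * j1 * j3 * p2 * p4 + x * v ^ 3 * U * T * xi ^ 3 * j1 * j3 * p2 * p4 + -(x ^ 2 * v * Ui * j3 * p2 * p4) + x ^ 2 * v * Ui * j1 * j3 * p2 * p4 + x ^ 2 * v * U * j1 * j3 * p2 * p4 + x ^ 2 * v * U * T * j3 * p2 * p4 + -(x ^ 2 * v * U ^ 2 * T * Ui * j3 * p2 * p4) + x ^ 2 * v ^ 2 * xi ^ 2 * Ui * j3 * p2 * p4 + -(x ^ 2 * v ^ 2 * xi ^ 2 * Ui * j1 * j3 * p2 * p4) + -(x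 ^ 2 * v ^ 2 * T * Ui * j1 * j3 * p2 * p4) + -(x ^ 2 * v ^ 2 * T * xi ^ 2 * Ui * j3 * p2 * p4) + x ^ 2 * v ^ 2 * U * xi ^ 2 * j3 * p2 * p4 + -(x ^ 2 * v ^ 2 * U * xi ^ 2 * j1 * j3 * p2 * p4) + -(x ^ 2 * v ^ 2 * U * T * j1 * j3 * p2 * p4) + -(x ^ 2 * v ^ 2 * U * T * xi ^ 2 * j3 * p2 * p4) + x ^ 2 * v ^ 2 * U ^ 2 * T * xi ^ 2 * Ui * j3 * p2 * p4 + x ^ 2 * v ^ 3 * T * xi ^ 2 * Ui * j1 * j3 * p2 * p4 + x ^ 2 * v ^ 3 * U * T * xi ^ 2 * j1 * j3 * p2 * p4 + -(x ^ 3 * v ^ 2 * xi * Ui * j1 * j3 * p2 * p4) + x ^ 3 * v ^ 2 * T * xi * Ui * j3 * p2 * p4 + -(x ^ 3 * v ^ 2 * U * xi * j3 * p2 * p4) + -(x ^ 3 * v ^ 2 * U * xi * j1 * j3 * p2 * p4) + x ^ 3 * v ^ 2 * U ^ 2 * T * xi * Ui * j3 * p2 * p4 + x ^ 3 * v ^ 3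 * xi ^ 3 * Ui * j1 * j3 * p2 * p4 + x ^ 3 * v ^ 3 * T * xi * Ui * j1 * j3 * p2 * p4 + x ^ 3 * v ^ 3 * U * xi ^ 3 * j1 * j3 * p2 * p4 + x ^ 3 * v ^ 3 * U * T * xi * j1 * j3 * p2 * p4 + -(x ^ 3 * v ^ 3 * U ^ 2 * T * xi ^ 3 * Ui * j3 * p2 * p4) + -(x ^ 3 * v ^ 4 * T * xi ^ 3 * Ui * j1 * j3 * p2 * p4) + -(x ^ 3 * v ^ 4 * U * T * xi ^ 3 * j1 * j3 * p2 * p4)) * hj2 +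
      (-(v * Ui * j2 * j3 * p2 * p4) + -(v * T * Ui * j2 * j3 * p2 * p4) + v ^ 2 * xi ^ 2 * Ui * j2 * j3 * p2 * p4 + v ^ 2 * U * xi ^ 2 * j2 * j3 * p2 * p4 + (2) * x * v ^ 2 * T * xi * Ui * j2 * j3 * p2 * p4 + -(x * v ^ 2 * U * xi * j2 * j3 * p2 * p4) + x * v ^ 2 * U * T * xi * j2 * j3 * p2 * p4 + -(x * v ^ 3 * T * xi ^ 3 * Ui * j2 * j3 * p2 * p4) + -(x * v ^ 3 * U * T * xi ^ 3 * j2 * j3 * p2 * p4) + x ^ 2 * Ui * j2 * j3 * p2 * p4 + x ^ 2 * U ^ 2 * Ui * j2 * j3 * p2 * p4 + -(x ^ 2 * v * xi ^ 2 * Ui * j2 * j3 * p2 * p4) + x ^ 2 * v * T * xi ^ 2 * Ui * j2 * j3 * p2 * p4 + -(x ^ 2 * v * U * xi ^ 2 * j2 * j3 * p2 * p4) + -(x ^ 2 * v * U ^ 2 * xi ^ 2 * Ui * j2 * j3 * p2 * p4) + x ^ 2 * v ^ 2 * Ui * j2 * j3 * p2 * p4 + x ^ 2 * v ^ 2 *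 T * Ui * j2 * j3 * p2 * p4 + -(x ^ 2 * v ^ 2 * U * T * j2 * j3 * p2 * p4) + x ^ 2 * v ^ 2 * U ^ 2 * T * Ui * j2 * j3 * p2 * p4 + -(x ^ 2 * v ^ 3 * xi ^ 2 * Ui * j2 * j3 * p2 * p4) + -(x ^ 2 * v ^ 3 * U * xi ^ 2 * j2 * j3 * p2 * p4) + x ^ 2 * v ^ 3 * U * T * xi ^ 2 * j2 * j3 * p2 * p4 + -(x ^ 2 * v ^ 3 * U ^ 2 * T * xi ^ 2 * Ui * j2 * j3 * p2 * p4) + -(x ^ 3 * v * T * xi * Ui * j2 * j3 * p2 * p4) + x ^ 3 * v * U * xi * j2 * j3 * p2 * p4 + -(x ^ 3 * v * U * T * xi * j2 * j3 * p2 * p4) + -(x ^ 3 * v * U ^ 2 * xi * Ui * j2 * j3 * p2 * p4) + x ^ 3 * v ^ 2 * U * T * xi ^ 3 * j2 * j3 * p2 * p4 + x ^ 3 * v ^ 2 * U ^ 2 * xi ^ 3 * Ui * j2 * j3 * p2 * p4 + (-2) * x ^ 3 * v ^ 3 * T * xi * Ui * j2 * j3 * p2 * p4 + x ^ 3 * v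 ^ 3 * U * xi * j2 * j3 * p2 * p4 + -(x ^ 3 * v ^ 3 * U ^ 2 * T * xi * Ui * j2 * j3 * p2 * p4) + x ^ 3 * v ^ 4 * T * xi ^ 3 * Ui * j2 * j3 * p2 * p4 + x ^ 3 * v ^ 4 * U ^ 2 * T * xi ^ 3 * Ui * j2 * j3 * p2 * p4 + -(x ^ 4 * v * Ui * j2 * j3 * p2 * p4) + x ^ 4 * v * U * T * j2 * j3 * p2 * p4 + -(x ^ 4 * v * U ^ 2 * Ui * j2 * j3 * p2 * p4) + -(x ^ 4 * v * U ^ 2 * T * Ui * j2 * j3 * p2 * p4) + x ^ 4 * v ^ 2 * xi ^ 2 * Ui * j2 * j3 * p2 * p4 + -(x ^ 4 * v ^ 2 * T * xi ^ 2 * Ui * j2 * j3 * p2 * p4) + x ^ 4 * v ^ 2 * U * xi ^ 2 * j2 * j3 * p2 * p4 + -(x ^ 4 * v ^ 2 * U * T * xi ^ 2 * j2 * j3 * p2 * p4) + x ^ 4 * v ^ 2 * U ^ 2 * xi ^ 2 * Ui * j2 * j3 * p2 * p4 + x ^ 4 * v ^ 2 * U ^ 2 * T * xi ^ 2 * Ui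 * j2 * j3 * p2 * p4 + x ^ 5 * v ^ 2 * T * xi * Ui * j2 * j3 * p2 * p4 + -(x ^ 5 * v ^ 2 * U * xi * j2 * j3 * p2 * p4) + x ^ 5 * v ^ 2 * U ^ 2 * xi * Ui * j2 * j3 * p2 * p4 + x ^ 5 * v ^ 2 * U ^ 2 * T * xi * Ui * j2 * j3 * p2 * p4 + -(x ^ 5 * v ^ 3 * U ^ 2 * xi ^ 3 * Ui * j2 * j3 * p2 * p4) + -(x ^ 5 * v ^ 3 * U ^ 2 * T * xi ^ 3 * Ui * j2 * j3 * p2 * p4)) * hj1 +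
      (v * U * j1 * j2 * j3 * p2 * p4 + -(v ^ 2 * U * T * j1 * j2 * j3 * p2 * p4) + -(v ^ 3 * U * xi ^ 2 * j1 * j2 * j3 * p2 * p4) + v ^ 3 * U * T * xi ^ 2 * j1 * j2 * j3 * p2 * p4 + (-2) * x * v ^ 2 * U * xi * j1 * j2 * j3 * p2 * p4 + x * v ^ 2 * U * T * xi * j1 * j2 * j3 * p2 * p4 + x * v ^ 3 * U * xi * j1 * j2 * j3 * p2 * p4 + x * v ^ 3 * U * xi ^ 3 * j1 * j2 * j3 * p2 * p4 + -(x * v ^ 3 * U * T * xi ^ 3 * j1 * j2 * j3 * p2 * p4) + -(x ^ 2 * U * j1 * j2 * j3 * p2 * p4) + x ^ 2 * v * U * T * j1 * j2 * j3 * p2 * p4 + -(x ^ 2 * v ^ 2 * U * j1 * j2 * j3 * p2 * p4) + x ^ 2 * v ^ 2 * U * xi ^ 2 * j1 * j2 * j3 * p2 * p4 + -(x ^ 2 * v ^ 2 * U * T * j1 * j2 * j3 * p2 * p4) + -(x ^ 2 * v ^ 2 * U * T * xi ^ 2 * j1 * j2 * j3 * p2 * p4) + (2) * x ^ 2 * v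 ^ 3 * U * T * j1 * j2 * j3 * p2 * p4 + x ^ 2 * v ^ 3 * U * T * xi ^ 2 * j1 * j2 * j3 * p2 * p4 + x ^ 2 * v ^ 4 * U * xi ^ 2 * j1 * j2 * j3 * p2 * p4 + (-2) * x ^ 2 * v ^ 4 * U * T * xi ^ 2 * j1 * j2 * j3 * p2 * p4 + (2) * x ^ 3 * v * U * xi * j1 * j2 * j3 * p2 * p4 + -(x ^ 3 * v * U * T * xi * j1 * j2 * j3 * p2 * p4) + -(x ^ 3 * v ^ 2 * U * xi * j1 * j2 * j3 * p2 * p4) + -(x ^ 3 * v ^ 2 * U * xi ^ 3 * j1 * j2 * j3 * p2 * p4) + x ^ 3 * v ^ 2 * U * T * xi ^ 3 * j1 * j2 * j3 * p2 * p4 + (2) * x ^ 3 * v ^ 3 * U * xi * j1 * j2 * j3 * p2 * p4 + -(x ^ 3 * v ^ 4 * U * xi * j1 * j2 * j3 * p2 * p4) + -(x ^ 3 * v ^ 4 * U * xi ^ 3 * j1 * j2 * j3 * p2 * p4) + -(x ^ 3 * v ^ 4 * U * T * xi * j1 * j2 * j3 * p2 * p4) + x ^ 3 * v ^ 5 * U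 * T * xi ^ 3 * j1 * j2 * j3 * p2 * p4 + x ^ 4 * v * U * j1 * j2 * j3 * p2 * p4 + x ^ 4 * v * U * T * j1 * j2 * j3 * p2 * p4 + (-2) * x ^ 4 * v ^ 2 * U * T * j1 * j2 * j3 * p2 * p4 + -(x ^ 4 * v ^ 2 * U * T * xi ^ 2 * j1 * j2 * j3 * p2 * p4) + -(x ^ 4 * v ^ 3 * U * xi ^ 2 * j1 * j2 * j3 * p2 * p4) + (2) * x ^ 4 * v ^ 3 * U * T * xi ^ 2 * j1 * j2 * j3 * p2 * p4 + (-2) * x ^ 5 * v ^ 2 * U * xi * j1 * j2 * j3 * p2 * p4 + x ^ 5 * v ^ 3 * U * xi * j1 * j2 * j3 * p2 * p4 + x ^ 5 * v ^ 3 * U * xi ^ 3 * j1 * j2 * j3 * p2 * p4 + x ^ 5 * v ^ 3 * U * T * xi * j1 * j2 * j3 * p2 * p4 + -(x ^ 5 * v ^ 4 * U * T * xi ^ 3 * j1 * j2 * j3 * p2 * p4)) * hUU +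
      (-(v * T * Ui * j1 * j2 * j3 * p2 * p4) + v * U ^ 2 * Ui * j1 * j2 * j3 * p2 * p4 + v ^ 2 * Ui * j1 * j2 * j3 * p2 * p4 + -(v ^ 2 * U ^ 2 * T * Ui * j1 * j2 * j3 * p2 * p4) + -(v ^ 3 * xi ^ 2 * Ui * j1 * j2 * j3 * p2 * p4) + v ^ 3 * T * xi ^ 2 * Ui * j1 * j2 * j3 * p2 * p4 + -(v ^ 3 * U ^ 2 * xi ^ 2 * Ui * j1 * j2 * j3 * p2 * p4) + v ^ 3 * U ^ 2 * T * xi ^ 2 * Ui * j1 * j2 * j3 * p2 * p4 + -(x * v * T * xi * Ui * j1 * j2 * j3 * p2 * p4) + x * v * U ^ 2 * xi * Ui * j1 * j2 * j3 * p2 * p4 + (2) * x * v ^ 2 * T * xi * Ui * j1 * j2 * j3 * p2 * p4 + (-2) * x * v ^ 2 * U ^ 2 * xi * Ui * j1 * j2 * j3 * p2 * p4 + -(x * v ^ 3 * T * xi * Ui * j1 * j2 * j3 * p2 * p4) + x * v ^ 3 * U ^ 2 * xi * Ui * j1 * j2 * j3 * p2 * p4 + -(x ^ 2 * v * Ui *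 j1 * j2 * j3 * p2 * p4) + x ^ 2 * v * T * Ui * j1 * j2 * j3 * p2 * p4 + -(x ^ 2 * v * U ^ 2 * Ui * j1 * j2 * j3 * p2 * p4) + x ^ 2 * v * U ^ 2 * T * Ui * j1 * j2 * j3 * p2 * p4 + x ^ 2 * v ^ 2 * xi ^ 2 * Ui * j1 * j2 * j3 * p2 * p4 + x ^ 2 * v ^ 2 * T * Ui * j1 * j2 * j3 * p2 * p4 + -(x ^ 2 * v ^ 2 * U ^ 2 * Ui * j1 * j2 * j3 * p2 * p4) + -(x ^ 2 * v ^ 2 * U ^ 2 * T * xi ^ 2 * Ui * j1 * j2 * j3 * p2 * p4) + -(x ^ 2 * v ^ 3 * Ui * j1 * j2 * j3 * p2 * p4) + -(x ^ 2 * v ^ 3 * T * xi ^ 2 * Ui * j1 * j2 * j3 * p2 * p4) + x ^ 2 * v ^ 3 * U ^ 2 * xi ^ 2 * Ui * j1 * j2 * j3 * p2 * p4 + x ^ 2 * v ^ 3 * U ^ 2 * T * Ui * j1 * j2 * j3 * p2 * p4 + x ^ 2 * v ^ 4 * xi ^ 2 * Ui * j1 * j2 * j3 * p2 * p4 + -(x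 ^ 2 * v ^ 4 * T * xi ^ 2 * Ui * j1 * j2 * j3 * p2 * p4) + x ^ 2 * v ^ 4 * U ^ 2 * xi ^ 2 * Ui * j1 * j2 * j3 * p2 * p4 + -(x ^ 2 * v ^ 4 * U ^ 2 * T * xi ^ 2 * Ui * j1 * j2 * j3 * p2 * p4) + x ^ 3 * v ^ 2 * T * xi * Ui * j1 * j2 * j3 * p2 * p4 + -(x ^ 3 * v ^ 2 * U ^ 2 * xi * Ui * j1 * j2 * j3 * p2 * p4) + (-2) * x ^ 3 * v ^ 3 * T * xi * Ui * j1 * j2 * j3 * p2 * p4 + (2) * x ^ 3 * v ^ 3 * U ^ 2 * xi * Ui * j1 * j2 * j3 * p2 * p4 + x ^ 3 * v ^ 4 * T * xi * Ui * j1 * j2 * j3 * p2 * p4 + -(x ^ 3 * v ^ 4 * U ^ 2 * xi * Ui * j1 * j2 * j3 * p2 * p4) + x ^ 4 * v ^ 2 * Ui * j1 * j2 * j3 * p2 * p4 + -(x ^ 4 * v ^ 2 * T * Ui * j1 * j2 * j3 * p2 * p4) + x ^ 4 * v ^ 2 * U ^ 2 * Ui * j1 * j2 * j3 * p2 * p4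 + -(x ^ 4 * v ^ 2 * U ^ 2 * T * Ui * j1 * j2 * j3 * p2 * p4) + -(x ^ 4 * v ^ 3 * xi ^ 2 * Ui * j1 * j2 * j3 * p2 * p4) + x ^ 4 * v ^ 3 * U ^ 2 * T * xi ^ 2 * Ui * j1 * j2 * j3 * p2 * p4 + x ^ 4 * v ^ 4 * T * xi ^ 2 * Ui * j1 * j2 * j3 * p2 * p4 + -(x ^ 4 * v ^ 4 * U ^ 2 * xi ^ 2 * Ui * j1 * j2 * j3 * p2 * p4)) * hxx
  rw [hN1, hN2, hCore]
  linear_combination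
      (-(ai * Ui * iw) + ai * Ui * iw * j3 * p2 + xi * Ui * iw + -(xi * Ui * iw * j3 * p2) + -(T * ai * Ui * iw) + T * ai * Ui * iw * p2 * p4 + T * xi * Ui * iw + -(T * xi * Ui * iw * p2 * p4) + U * ai * iw + -(U * ai * iw * p2 * p4) + -(U * xi * iw) + U * xi * iw * p2 * p4 + U * T * ai * iw + -(U * T * ai * iw * j3 * p2) + -(U * T * xi * iw) + U * T * xi * iw * j3 * p2 + -(v * T * xi * ai ^ 2 * Ui * iw * p2 * p4) + v * T * xi ^ 2 * ai * Ui * iw * p2 * p4 + v * U * xi * ai ^ 2 * iw * p2 * p4 + -(v * U * xi ^ 2 * ai * iw * p2 * p4) + -(a * Ui * iw) + a * Ui * iw * j3 * p2 + -(a * T * Ui * iw) + a * T * Ui * iw * p2 * p4 + a * U * iw + -(a * U * iw * p2 * p4) + a * U * T * iw + -(a * U * T * iw * j3 * p2) + (-2) * a * v * T * xi * ai * Ui * iw * p2 * p4 + a * v * T * xi ^ 2 * Ui * iw * p2 * p4 + (2) * a * v * U * xi * ai * iw * p2 * p4 + -(a * v * U * xi ^ 2 * iw * p2 * p4) + -(a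 ^ 2 * v * T * xi * Ui * iw * p2 * p4) + a ^ 2 * v * U * xi * iw * p2 * p4 + x * Ui * iw + -(x * Ui * iw * j3 * p2) + x * T * Ui * iw + -(x * T * Ui * iw * p2 * p4) + -(x * U * iw) + x * U * iw * p2 * p4 + -(x * U * T * iw) + x * U * T * iw * j3 * p2 + -(x * v * ai ^ 2 * Ui * iw * j3 * p2) + x * v * xi * ai * Ui * iw * j3 * p2 + x * v * T * xi * ai * Ui * iw * p2 * p4 + -(x * v * U * xi * ai * iw * p2 * p4) + x * v * U * T * ai ^ 2 * iw * j3 * p2 + -(x * v * U * T * xi * ai * iw * j3 * p2) + x * v ^ 2 * T * xi ^ 3 * ai * Ui * iw * p2 * p4 + -(x * v ^ 2 * T * xi ^ 4 * Ui * iw * p2 * p4) + -(x * v ^ 2 * U * xi ^ 3 * ai * iw * p2 * p4) + x * v ^ 2 * U * xi ^ 4 * iw * p2 * p4 + (-2) * x * a * v * ai * Ui * iw * j3 * p2 + x * a * v * xi * Ui * iw * j3 * p2 + x * a * v * T * xi * Ui * iw * p2 * p4 + -(x * a * v * U * xi * iw * p2 * p4) + (2) * x * a * v * U * T * ai * iw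 * j3 * p2 + -(x * a * v * U * T * xi * iw * j3 * p2) + x * a * v ^ 2 * T * xi ^ 3 * Ui * iw * p2 * p4 + -(x * a * v ^ 2 * U * xi ^ 3 * iw * p2 * p4) + -(x * a ^ 2 * v * Ui * iw * j3 * p2) + x * a ^ 2 * v * U * T * iw * j3 * p2 + x ^ 2 * v * ai * Ui * iw * j3 * p2 + -(x ^ 2 * v * U * T * ai * iw * j3 * p2) + -(x ^ 2 * v ^ 2 * T * xi ^ 3 * Ui * iw * p2 * p4) + x ^ 2 * v ^ 2 * U * xi ^ 3 * iw * p2 * p4 + x ^ 2 * a * v * Ui * iw * j3 * p2 + -(x ^ 2 * a * v * U * T * iw * j3 * p2) + x ^ 3 * v ^ 2 * xi * ai * Ui * iw * j3 * p2 + -(x ^ 3 * v ^ 2 * xi ^ 2 * Ui * iw * j3 * p2) + -(x ^ 3 * v ^ 2 * U * T * xi * ai * iw * j3 * p2) + x ^ 3 * v ^ 2 * U * T * xi ^ 2 * iw * j3 * p2 + x ^ 3 * a * v ^ 2 * xi * Ui * iw * j3 * p2 + -(x ^ 3 * a * v ^ 2 * U * T * xi * iw * j3 * p2) + -(x ^ 4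 * v ^ 2 * xi * Ui * iw * j3 * p2) + x ^ 4 * v ^ 2 * U * T * xi * iw * j3 * p2) * hiw +
      (xi * ai * Ui * iw ^ 2 + -(xi * ai * Ui * iw ^ 2 * j3 * p2) + -(xi ^ 2 * Ui * iw ^ 2) + xi ^ 2 * Ui * iw ^ 2 * j3 * p2 + T * xi * ai * Ui * iw ^ 2 + -(T * xi ^ 2 * Ui * iw ^ 2) + -(U * xi * ai * iw ^ 2) + U * xi ^ 2 * iw ^ 2 + -(U * T * xi * ai * iw ^ 2) + U * T * xi * ai * iw ^ 2 * j3 * p2 + U * T * xi ^ 2 * iw ^ 2 + -(U * T * xi ^ 2 * iw ^ 2 * j3 * p2) + a * xi * Ui * iw ^ 2 + -(a * xi * Ui * iw ^ 2 * j3 * p2) + a * T * xi * Ui * iw ^ 2 + -(a * U * xi * iw ^ 2) + -(a * U * T * xi * iw ^ 2) + a * U * T * xi * iw ^ 2 * j3 * p2 + -(x * ai * Ui * iw ^ 2) + x * ai * Ui * iw ^ 2 * j3 * p2 + -(x * T * ai * Ui * iw ^ 2) + x * U * ai * iw ^ 2 + x * U * T * ai * iw ^ 2 + -(x * U * T * ai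 * iw ^ 2 * j3 * p2) + x * v * xi ^ 2 * ai * Ui * iw ^ 2 * j3 * p2 + -(x * v * xi ^ 3 * Ui * iw ^ 2 * j3 * p2) + -(x * v * U * T * xi ^ 2 * ai * iw ^ 2 * j3 * p2) + x * v * U * T * xi ^ 3 * iw ^ 2 * j3 * p2 + -(x * a * Ui * iw ^ 2) + x * a * Ui * iw ^ 2 * j3 * p2 + -(x * a * T * Ui * iw ^ 2) + x * a * U * iw ^ 2 + x * a * U * T * iw ^ 2 + -(x * a * U * T * iw ^ 2 * j3 * p2) + x * a * v * xi ^ 2 * Ui * iw ^ 2 * j3 * p2 + -(x * a * v * U * T * xi ^ 2 * iw ^ 2 * j3 * p2) + x ^ 2 * Ui * iw ^ 2 + -(x ^ 2 * Ui * iw ^ 2 * j3 * p2) + x ^ 2 * T * Ui * iw ^ 2 + -(x ^ 2 * U * iw ^ 2) + -(x ^ 2 * U * T * iw ^ 2) + x ^ 2 * U * T * iw ^ 2 * j3 * p2 + -(x ^ 2 * v * xi ^ 2 * Ui * iw ^ 2 * j3 * p2) + x ^ 2 * v * U * T * xi ^ 2 * iw ^ 2 * j3 * p2 + -(x ^ 3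 * v * ai * Ui * iw ^ 2 * j3 * p2) + x ^ 3 * v * xi * Ui * iw ^ 2 * j3 * p2 + x ^ 3 * v * U * T * ai * iw ^ 2 * j3 * p2 + -(x ^ 3 * v * U * T * xi * iw ^ 2 * j3 * p2) + -(x ^ 3 * v ^ 2 * xi ^ 2 * ai * Ui * iw ^ 2 * j3 * p2) + x ^ 3 * v ^ 2 * xi ^ 3 * Ui * iw ^ 2 * j3 * p2 + x ^ 3 * v ^ 2 * U * T * xi ^ 2 * ai * iw ^ 2 * j3 * p2 + -(x ^ 3 * v ^ 2 * U * T * xi ^ 3 * iw ^ 2 * j3 * p2) + -(x ^ 3 * a * v * Ui * iw ^ 2 * j3 * p2) + x ^ 3 * a * v * U * T * iw ^ 2 * j3 * p2 + -(x ^ 3 * a * v ^ 2 * xi ^ 2 * Ui * iw ^ 2 * j3 * p2) + x ^ 3 * a * v ^ 2 * U * T * xi ^ 2 * iw ^ 2 * j3 * p2 + x ^ 4 * v * Ui * iw ^ 2 * j3 * p2 + -(x ^ 4 * v * U * T * iw ^ 2 * j3 * p2) + x ^ 4 * v ^ 2 * xi * ai * Ui * iw ^ 2 * j3 * p2 + -(x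 ^ 4 * v ^ 2 * U * T * xi * ai * iw ^ 2 * j3 * p2) + x ^ 4 * a * v ^ 2 * xi * Ui * iw ^ 2 * j3 * p2 + -(x ^ 4 * a * v ^ 2 * U * T * xi * iw ^ 2 * j3 * p2) + -(x ^ 5 * v ^ 2 * xi * Ui * iw ^ 2 * j3 * p2) + x ^ 5 * v ^ 2 * U * T * xi * iw ^ 2 * j3 * p2) * hp4 +
      (xi * ai * Ui * iw ^ 2 * p4 + -(xi ^ 2 * Ui * iw ^ 2 * p4) + T * xi * ai * Ui * iw ^ 2 * p4 + -(T * xi ^ 2 * Ui * iw ^ 2 * p4) + -(U * xi * ai * iw ^ 2 * p4) + U * xi ^ 2 * iw ^ 2 * p4 + -(U * T * xi * ai * iw ^ 2 * p4) + U * T * xi ^ 2 * iw ^ 2 * p4 + -(v * xi ^ 3 * ai * Ui * iw ^ 2 * p4) + v * xi ^ 4 * Ui * iw ^ 2 * p4 + -(v * T * xi ^ 3 * ai * Ui * iw ^ 2 * p4) + v * T * xi ^ 4 * Ui * iw ^ 2 * p4 + v * U * xi ^ 3 * ai * iw ^ 2 * p4 + -(v * U * xi ^ 4 * iw ^ 2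 * p4) + v * U * T * xi ^ 3 * ai * iw ^ 2 * p4 + -(v * U * T * xi ^ 4 * iw ^ 2 * p4) + a * xi * Ui * iw ^ 2 * p4 + a * T * xi * Ui * iw ^ 2 * p4 + -(a * U * xi * iw ^ 2 * p4) + -(a * U * T * xi * iw ^ 2 * p4) + -(a * v * xi ^ 3 * Ui * iw ^ 2 * p4) + -(a * v * T * xi ^ 3 * Ui * iw ^ 2 * p4) + a * v * U * xi ^ 3 * iw ^ 2 * p4 + a * v * U * T * xi ^ 3 * iw ^ 2 * p4 + -(x * ai * Ui * iw ^ 2 * p4) + -(x * T * ai * Ui * iw ^ 2 * p4) + x * U * ai * iw ^ 2 * p4 + x * U * T * ai * iw ^ 2 * p4 + x * v * xi ^ 2 * ai * Ui * iw ^ 2 * p4 + x * v * T * xi ^ 2 * ai * Ui * iw ^ 2 * p4 + -(x * v * U * xi ^ 2 * ai * iw ^ 2 * p4) + -(x * v * U * T * xi ^ 2 * ai * iw ^ 2 * p4) + -(x * a * Ui * iw ^ 2 * p4) + -(x * a * T * Ui * iw ^ 2 * p4) + x * a * U * iw ^ 2 * p4 + x * a * U * T * iw ^ 2 * p4 + x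 * a * v * xi ^ 2 * Ui * iw ^ 2 * p4 + x * a * v * T * xi ^ 2 * Ui * iw ^ 2 * p4 + -(x * a * v * U * xi ^ 2 * iw ^ 2 * p4) + -(x * a * v * U * T * xi ^ 2 * iw ^ 2 * p4) + x ^ 2 * Ui * iw ^ 2 * p4 + x ^ 2 * T * Ui * iw ^ 2 * p4 + -(x ^ 2 * U * iw ^ 2 * p4) + -(x ^ 2 * U * T * iw ^ 2 * p4) + -(x ^ 2 * v * xi ^ 2 * Ui * iw ^ 2 * p4) + -(x ^ 2 * v * T * xi ^ 2 * Ui * iw ^ 2 * p4) + x ^ 2 * v * U * xi ^ 2 * iw ^ 2 * p4 + x ^ 2 * v * U * T * xi ^ 2 * iw ^ 2 * p4) * hp2 +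
      (xi * ai * Ui * iw ^ 2 * p2 * p4 + -(xi ^ 2 * Ui * iw ^ 2 * p2 * p4) + -(U * T * xi * ai * iw ^ 2 * p2 * p4) + U * T * xi ^ 2 * iw ^ 2 * p2 * p4 + -(v * xi ^ 3 * ai * Ui * iw ^ 2 * p2 * p4) + v * xi ^ 4 * Ui * iw ^ 2 * p2 * p4 + v * U * T * xi ^ 3 * ai * iw ^ 2 * p2 * p4 + -(v * U * T * xi ^ 4 * iw ^ 2 * p2 * p4) + a * xi * Ui * iw ^ 2 * p2 * p4 + -(a * U * T * xi * iw ^ 2 * p2 * p4) + -(a * v * xi ^ 3 * Ui * iw ^ 2 * p2 * p4) + a * v * U * T * xi ^ 3 * iw ^ 2 * p2 * p4 + -(x * ai * Ui * iw ^ 2 * p2 * p4) + x * U * T * ai * iw ^ 2 * p2 * p4 + x * v * xi ^ 3 * Ui * iw ^ 2 * p2 * p4 + -(x * v * U * T * xi ^ 3 * iw ^ 2 * p2 * p4) + x * v ^ 2 * xi ^ 4 * ai * Ui * iw ^ 2 * p2 * p4 + -(x * v ^ 2 * xi ^ 5 * Ui * iw ^ 2 * p2 * p4) + -(x * v ^ 2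 * U * T * xi ^ 4 * ai * iw ^ 2 * p2 * p4) + x * v ^ 2 * U * T * xi ^ 5 * iw ^ 2 * p2 * p4 + -(x * a * Ui * iw ^ 2 * p2 * p4) + x * a * U * T * iw ^ 2 * p2 * p4 + x * a * v ^ 2 * xi ^ 4 * Ui * iw ^ 2 * p2 * p4 + -(x * a * v ^ 2 * U * T * xi ^ 4 * iw ^ 2 * p2 * p4) + x ^ 2 * Ui * iw ^ 2 * p2 * p4 + -(x ^ 2 * U * T * iw ^ 2 * p2 * p4) + x ^ 2 * v * xi * ai * Ui * iw ^ 2 * p2 * p4 + -(x ^ 2 * v * xi ^ 2 * Ui * iw ^ 2 * p2 * p4) + -(x ^ 2 * v * U * T * xi * ai * iw ^ 2 * p2 * p4) + x ^ 2 * v * U * T * xi ^ 2 * iw ^ 2 * p2 * p4 + -(x ^ 2 * v ^ 2 * xi ^ 3 * ai * Ui * iw ^ 2 * p2 * p4) + x ^ 2 * v ^ 2 * U * T * xi ^ 3 * ai * iw ^ 2 * p2 * p4 + x ^ 2 * a * v * xi * Ui * iw ^ 2 * p2 * p4 + -(x ^ 2 * a * v * U * T * xi * iw ^ 2 * p2 *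 p4) + -(x ^ 2 * a * v ^ 2 * xi ^ 3 * Ui * iw ^ 2 * p2 * p4) + x ^ 2 * a * v ^ 2 * U * T * xi ^ 3 * iw ^ 2 * p2 * p4 + -(x ^ 3 * v * xi * Ui * iw ^ 2 * p2 * p4) + x ^ 3 * v * U * T * xi * iw ^ 2 * p2 * p4 + x ^ 3 * v ^ 2 * xi ^ 3 * Ui * iw ^ 2 * p2 * p4 + -(x ^ 3 * v ^ 2 * U * T * xi ^ 3 * iw ^ 2 * p2 * p4)) * hj3

private lemma neg_poly (x a v W P xi ai vi Wi Pi iw k1 k2 k3 j1 j2 j3 p2 p4 : ℂ)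
    (hxx : x * xi = 1) (haa : a * ai = 1) (hvv : v * vi = 1) (hWW : W * Wi = 1)
    (hPP : P * Pi = 1) (hiw : (x - xi) * iw = 1)
    (hk1 : (1 - vi) * k1 = 1) (hk2 : (x ^ 2 - vi) * k2 = 1) (hk3 : (1 - x ^ 2 * vi) * k3 = 1)
    (hj1 : (1 - v) * j1 = 1) (hj2 : (x ^ 2 - v) * j2 = 1) (hj3 : (1 - x ^ 2 * v) * j3 = 1)
    (hp2 : (1 - xi * (v * x)) * p2 = 1) (hp4 : (1 - xi * (v * xi)) * p4 = 1) :
    0 - ((x + xi - a - ai) * iw * (W - Wi) * (1 + Pi)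
      + ((x + xi - a - ai) * iw) ^ 2 *
        ((W + Wi) * (1 - Pi * vi) * k1 - Wi * ((W * x) ^ 2 - Pi * vi) * k2
          - Wi * (1 - (W * x) ^ 2 * (Pi * vi)) * k3))
      = (a + ai - x - xi) * iw *
        ((1 - a * (v * x)) * (1 - ai * (v * x)) * (j3 * p2) * (W - Pi * Wi)
          + (1 - a * (v * xi)) * (1 - ai * (v * xi)) * (p2 * p4) * (Pi * W - Wi)) := by
  have hN1 : (1 - a * (v * x)) * (1 - ai * (v * x))
      = (1 - x * (v * x)) * (1 - xi * (v * x)) + (x + xi - a - ai) * (v * x) := by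
    linear_combination
      (x ^ 3 * v ^ 2 * xi) * haa +
      (-(x ^ 2 * a * v ^ 2 * ai)) * hxx
  have hN2 : (1 - a * (v * xi)) * (1 - ai * (v * xi))
      = (1 - x * (v * xi)) * (1 - xi * (v * xi)) + (x + xi - a - ai) * (v * xi) := by
    linear_combination
      (x * v ^ 2 * xi ^ 3) * haa +
      (-(a * v ^ 2 * xi ^ 2 * ai)) * hxx
  have hcl1 : (W + Wi) * (1 - Pi * vi) * k1 = (W + Wi) * (Pi - v) * j1 := by
    linear_combination
      (Wi * Pi * j1 + W * Pi * j1 + -(v * Wi * j1) + -(v * W * j1)) * hk1 +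
      (-(Wi * k1) + vi * Wi * Pi * k1 + -(W * k1) + W * vi * Pi * k1) * hj1 +
      (-(Wi * k1 * j1) + Wi * Pi * k1 * j1 + -(W * k1 * j1) + W * Pi * k1 * j1) * hvv
  have hcl2 : Wi * ((W * x) ^ 2 - Pi * vi) * k2 = Wi * (Pi - v * (W * x) ^ 2) * j3 := by
    linear_combination
      (Wi * Pi * j3 + -(x ^ 2 * v * W ^ 2 * Wi * j3)) * hk2 +
      (vi * Wi * Pi * k2 + -(x ^ 2 * W ^ 2 * Wi * k2)) * hj3 +
      (x ^ 2 * Wi * Pi * k2 * j3 + -(x ^ 2 * W ^ 2 * Wi * k2 * j3)) * hvv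
  have hcl3 : Wi * (1 - (W * x) ^ 2 * (Pi * vi)) * k3 = Wi * ((W * x) ^ 2 * Pi - v) * j2 := by
    linear_combination
      (-(v * Wi * j2) + x ^ 2 * W ^ 2 * Wi * Pi * j2) * hk3 +
      (-(Wi * k3) + x ^ 2 * W ^ 2 * vi * Wi * Pi * k3) * hj2 +
      (-(x ^ 2 * Wi * k3 * j2) + x ^ 2 * W ^ 2 * Wi * Pi * k3 * j2) * hvv
  have hCore : (W + Wi) * (Pi - v) * j1 - Wi * (Pi - v * (W * x) ^ 2) * j3
        - Wi * ((W * x) ^ 2 * Pi - v) * j2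
      = (x - xi) * v * (x * (W - Pi * Wi) * (j3 * p2) + xi * (Pi * W - Wi) * (p2 * p4)) := by
    linear_combination
      (Wi * Pi * j3 + -(Wi * Pi * j1) + -(W * Pi * j1) + -(v * Wi * j2) + v * Wi * j1 + v * W * j1 + x * v * xi * Wi * Pi * j3 * p2 + -(x * v * W * xi * j3 * p2) + x ^ 2 * W ^ 2 * Wi * Pi * j2 + -(x ^ 2 * v * Wi * Pi * j3 * p2) + x ^ 2 * v * W * j3 * p2 + -(x ^ 2 * v * W ^ 2 * Wi * j3)) * hp4 +
      (Wi * Pi * j3 * p4 + -(Wi * Pi * j1 * p4) + -(W * Pi * j1 * p4) + -(v * Wi * j2 * p4) + v * Wi * j1 * p4 + -(v * xi ^ 2 * Wi * Pi * j3 * p4) + v * xi ^ 2 * Wi * Pi * j1 * p4 + v * W * j1 * p4 + v * W * xi ^ 2 * Pi * j1 * p4 + v ^ 2 * xi ^ 2 * Wi * j2 * p4 + -(v ^ 2 * xi ^ 2 * Wi * j1 * p4) + -(v ^ 2 * W * xi ^ 2 * j1 * p4) + x ^ 2 * W ^ 2 * Wi * Pi * j2 * p4 + -(x ^ 2 * v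 * W ^ 2 * Wi * j3 * p4) + -(x ^ 2 * v * W ^ 2 * xi ^ 2 * Wi * Pi * j2 * p4) + x ^ 2 * v ^ 2 * W ^ 2 * xi ^ 2 * Wi * j3 * p4) * hp2 +
      (-(Wi * Pi * j1 * p2 * p4) + -(W * Pi * j1 * p2 * p4) + -(v * Wi * j2 * p2 * p4) + v * Wi * j1 * p2 * p4 + v * xi ^ 2 * Wi * p2 * p4 + v * xi ^ 2 * Wi * Pi * j1 * p2 * p4 + v * W * j1 * p2 * p4 + -(v * W * xi ^ 2 * Pi * p2 * p4) + v * W * xi ^ 2 * Pi * j1 * p2 * p4 + v ^ 2 * xi ^ 2 * Wi * j2 * p2 * p4 + -(v ^ 2 * xi ^ 2 * Wi * j1 * p2 * p4) + -(v ^ 2 * W * xi ^ 2 * j1 * p2 * p4) + -(x * v * xi * Wi * p2 * p4) + x * v * xi * Wi * Pi * j1 * p2 * p4 + x * v * W * xi * Pi * p2 * p4 + x * v * W * xi * Pi * j1 * p2 * p4 + x * v ^ 2 * xi * Wi * j2 * p2 * p4 + -(x * v ^ 2 * xi * Wi * j1 * p2 * p4) + -(x * v ^ 2 * xi ^ 3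 * Wi * Pi * j1 * p2 * p4) + -(x * v ^ 2 * W * xi * j1 * p2 * p4) + -(x * v ^ 2 * W * xi ^ 3 * Pi * j1 * p2 * p4) + -(x * v ^ 3 * xi ^ 3 * Wi * j2 * p2 * p4) + x * v ^ 3 * xi ^ 3 * Wi * j1 * p2 * p4 + x * v ^ 3 * W * xi ^ 3 * j1 * p2 * p4 + x ^ 2 * W ^ 2 * Wi * Pi * j2 * p2 * p4 + -(x ^ 2 * v * W ^ 2 * xi ^ 2 * Wi * Pi * j2 * p2 * p4) + -(x ^ 3 * v * W ^ 2 * xi * Wi * Pi * j2 * p2 * p4) + x ^ 3 * v ^ 2 * W ^ 2 * xi ^ 3 * Wi * Pi * j2 * p2 * p4) * hj3 +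
      (Wi * Pi * j3 * p2 * p4 + -(Wi * Pi * j1 * j3 * p2 * p4) + -(W * Pi * j1 * j3 * p2 * p4) + v * Wi * j1 * j3 * p2 * p4 + v * xi ^ 2 * Wi * j3 * p2 * p4 + -(v * xi ^ 2 * Wi * Pi * j3 * p2 * p4) + v * xi ^ 2 * Wi * Pi * j1 * j3 * p2 * p4 + v * W * j1 * j3 * p2 * p4 + -(v * W * xi ^ 2 * Pi * j3 * p2 * p4) + v * W * xi ^ 2 * Pi * j1 * j3 * p2 * p4 + -(v ^ 2 * xi ^ 2 * Wi * j1 * j3 * p2 * p4) + -(v ^ 2 * W * xi ^ 2 * j1 * j3 * p2 * p4) + -(x * v * xi * Wi * j3 * p2 * p4) + x * v * xi * Wi * Pi * j1 * j3 * p2 * p4 + -(x * v * W * xi * j3 * p2 * p4) + x * v * W * xi * Pi * j3 * p2 * p4 + x * v * W * xi * Pi * j1 * j3 * p2 * p4 + -(x * v ^ 2 * xi * Wi * j1 * j3 * p2 * p4) + -(x * v ^ 2 * xi ^ 3 * Wi * Pi * j1 * j3 * p2 * p4) + -(x * v ^ 2 * W * xi * j1 * j3 * p2 * p4) + x * v ^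 2 * W * xi ^ 3 * j3 * p2 * p4 + -(x * v ^ 2 * W * xi ^ 3 * Pi * j1 * j3 * p2 * p4) + x * v ^ 3 * xi ^ 3 * Wi * j1 * j3 * p2 * p4 + x * v ^ 3 * W * xi ^ 3 * j1 * j3 * p2 * p4 + -(x ^ 2 * v * Wi * Pi * j3 * p2 * p4) + x ^ 2 * v * Wi * Pi * j1 * j3 * p2 * p4 + x ^ 2 * v * W * j3 * p2 * p4 + x ^ 2 * v * W * Pi * j1 * j3 * p2 * p4 + -(x ^ 2 * v * W ^ 2 * Wi * j3 * p2 * p4) + -(x ^ 2 * v ^ 2 * Wi * j1 * j3 * p2 * p4) + -(x ^ 2 * v ^ 2 * xi ^ 2 * Wi * j3 * p2 * p4) + x ^ 2 * v ^ 2 * xi ^ 2 * Wi * Pi * j3 * p2 * p4 + -(x ^ 2 * v ^ 2 * xi ^ 2 * Wi * Pi * j1 * j3 * p2 * p4) + -(x ^ 2 * v ^ 2 * W * j1 * j3 * p2 * p4) + -(x ^ 2 * v ^ 2 * W * xi ^ 2 * j3 * p2 * p4) + x ^ 2 * v ^ 2 * W * xi ^ 2 * Pi * j3 * p2 * p4 +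 -(x ^ 2 * v ^ 2 * W * xi ^ 2 * Pi * j1 * j3 * p2 * p4) + x ^ 2 * v ^ 2 * W ^ 2 * xi ^ 2 * Wi * j3 * p2 * p4 + x ^ 2 * v ^ 3 * xi ^ 2 * Wi * j1 * j3 * p2 * p4 + x ^ 2 * v ^ 3 * W * xi ^ 2 * j1 * j3 * p2 * p4 + x ^ 3 * v ^ 2 * xi * Wi * j3 * p2 * p4 + -(x ^ 3 * v ^ 2 * xi * Wi * Pi * j1 * j3 * p2 * p4) + -(x ^ 3 * v ^ 2 * W * xi * Pi * j3 * p2 * p4) + -(x ^ 3 * v ^ 2 * W * xi * Pi * j1 * j3 * p2 * p4) + x ^ 3 * v ^ 2 * W ^ 2 * xi * Wi * j3 * p2 * p4 + x ^ 3 * v ^ 3 * xi * Wi * j1 * j3 * p2 * p4 + x ^ 3 * v ^ 3 * xi ^ 3 * Wi * Pi * j1 * j3 * p2 * p4 + x ^ 3 * v ^ 3 * W * xi * j1 * j3 * p2 * p4 + x ^ 3 * v ^ 3 * W * xi ^ 3 * Pi * j1 * j3 * p2 * p4 + -(x ^ 3 * v ^ 3 * W ^ 2 * xi ^ 3 * Wi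 * j3 * p2 * p4) + -(x ^ 3 * v ^ 4 * xi ^ 3 * Wi * j1 * j3 * p2 * p4) + -(x ^ 3 * v ^ 4 * W * xi ^ 3 * j1 * j3 * p2 * p4)) * hj2 +
      (-(v * Wi * j2 * j3 * p2 * p4) + -(v * Wi * Pi * j2 * j3 * p2 * p4) + v ^ 2 * xi ^ 2 * Wi * Pi * j2 * j3 * p2 * p4 + v ^ 2 * W * xi ^ 2 * Pi * j2 * j3 * p2 * p4 + (2) * x * v ^ 2 * xi * Wi * j2 * j3 * p2 * p4 + x * v ^ 2 * W * xi * j2 * j3 * p2 * p4 + -(x * v ^ 2 * W * xi * Pi * j2 * j3 * p2 * p4) + -(x * v ^ 3 * xi ^ 3 * Wi * j2 * j3 * p2 * p4) + -(x * v ^ 3 * W * xi ^ 3 * j2 * j3 * p2 * p4) + x ^ 2 * Wi * Pi * j2 * j3 * p2 * p4 + x ^ 2 * W ^ 2 * Wi * Pi * j2 * j3 * p2 * p4 + x ^ 2 * v * xi ^ 2 * Wi * j2 * j3 * p2 * p4 + -(x ^ 2 * v * xi ^ 2 * Wi * Pi * j2 * j3 * p2 * p4) + -(x ^ 2 * v *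 W * xi ^ 2 * Pi * j2 * j3 * p2 * p4) + -(x ^ 2 * v * W ^ 2 * xi ^ 2 * Wi * Pi * j2 * j3 * p2 * p4) + x ^ 2 * v ^ 2 * Wi * j2 * j3 * p2 * p4 + x ^ 2 * v ^ 2 * Wi * Pi * j2 * j3 * p2 * p4 + -(x ^ 2 * v ^ 2 * W * j2 * j3 * p2 * p4) + x ^ 2 * v ^ 2 * W ^ 2 * Wi * j2 * j3 * p2 * p4 + -(x ^ 2 * v ^ 3 * xi ^ 2 * Wi * Pi * j2 * j3 * p2 * p4) + x ^ 2 * v ^ 3 * W * xi ^ 2 * j2 * j3 * p2 * p4 + -(x ^ 2 * v ^ 3 * W * xi ^ 2 * Pi * j2 * j3 * p2 * p4) + -(x ^ 2 * v ^ 3 * W ^ 2 * xi ^ 2 * Wi * j2 * j3 * p2 * p4) + -(x ^ 3 * v * xi * Wi * j2 * j3 * p2 * p4) + -(x ^ 3 * v * W * xi * j2 * j3 * p2 * p4) + x ^ 3 * v * W * xi * Pi * j2 * j3 * p2 * p4 + -(x ^ 3 * v * W ^ 2 * xi * Wi * Pi * j2 * j3 * p2 * p4) + x ^ 3 * v ^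 2 * W * xi ^ 3 * j2 * j3 * p2 * p4 + x ^ 3 * v ^ 2 * W ^ 2 * xi ^ 3 * Wi * Pi * j2 * j3 * p2 * p4 + (-2) * x ^ 3 * v ^ 3 * xi * Wi * j2 * j3 * p2 * p4 + x ^ 3 * v ^ 3 * W * xi * Pi * j2 * j3 * p2 * p4 + -(x ^ 3 * v ^ 3 * W ^ 2 * xi * Wi * j2 * j3 * p2 * p4) + x ^ 3 * v ^ 4 * xi ^ 3 * Wi * j2 * j3 * p2 * p4 + x ^ 3 * v ^ 4 * W ^ 2 * xi ^ 3 * Wi * j2 * j3 * p2 * p4 + -(x ^ 4 * v * Wi * Pi * j2 * j3 * p2 * p4) + x ^ 4 * v * W * j2 * j3 * p2 * p4 + -(x ^ 4 * v * W ^ 2 * Wi * j2 * j3 * p2 * p4) + -(x ^ 4 * v * W ^ 2 * Wi * Pi * j2 * j3 * p2 * p4) + -(x ^ 4 * v ^ 2 * xi ^ 2 * Wi * j2 * j3 * p2 * p4) + x ^ 4 * v ^ 2 * xi ^ 2 * Wi * Pi * j2 * j3 * p2 * p4 + -(x ^ 4 * v ^ 2 * W * xi ^ 2 * j2 * j3 *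 p2 * p4) + x ^ 4 * v ^ 2 * W * xi ^ 2 * Pi * j2 * j3 * p2 * p4 + x ^ 4 * v ^ 2 * W ^ 2 * xi ^ 2 * Wi * j2 * j3 * p2 * p4 + x ^ 4 * v ^ 2 * W ^ 2 * xi ^ 2 * Wi * Pi * j2 * j3 * p2 * p4 + x ^ 5 * v ^ 2 * xi * Wi * j2 * j3 * p2 * p4 + -(x ^ 5 * v ^ 2 * W * xi * Pi * j2 * j3 * p2 * p4) + x ^ 5 * v ^ 2 * W ^ 2 * xi * Wi * j2 * j3 * p2 * p4 + x ^ 5 * v ^ 2 * W ^ 2 * xi * Wi * Pi * j2 * j3 * p2 * p4 + -(x ^ 5 * v ^ 3 * W ^ 2 * xi ^ 3 * Wi * j2 * j3 * p2 * p4) + -(x ^ 5 * v ^ 3 * W ^ 2 * xi ^ 3 * Wi * Pi * j2 * j3 * p2 * p4)) * hj1 +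
      (-(v * Wi * j1 * j2 * j3 * p2 * p4) + -(v ^ 2 * W * j1 * j2 * j3 * p2 * p4) + v ^ 3 * xi ^ 2 * Wi * j1 * j2 * j3 * p2 * p4 + v ^ 3 * W * xi ^ 2 * j1 * j2 * j3 * p2 * p4 + (2) * x * v ^ 2 * xi * Wi * j1 * j2 * j3 * p2 * p4 + x * v ^ 2 * W * xi * j1 * j2 * j3 * p2 * p4 + -(x * v ^ 3 * xi * Wi * j1 * j2 * j3 * p2 * p4) + -(x * v ^ 3 * xi ^ 3 * Wi * j1 * j2 * j3 * p2 * p4) + -(x * v ^ 3 * W * xi ^ 3 * j1 * j2 * j3 * p2 * p4) + x ^ 2 * v * Wi * j1 * j2 * j3 * p2 * p4 + x ^ 2 * v * xi ^ 2 * Wi * j1 * j2 * j3 * p2 * p4 + x ^ 2 * v * W * j1 * j2 * j3 * p2 * p4 + x ^ 2 * v ^ 2 * Wi * j1 * j2 * j3 * p2 * p4 + (-2) * x ^ 2 * v ^ 2 * xi ^ 2 * Wi * j1 * j2 * j3 * p2 * p4 + -(x ^ 2 * v ^ 2 * W * j1 * j2 * j3 * p2 * p4) + -(x ^ 2 * v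 ^ 2 * W * xi ^ 2 * j1 * j2 * j3 * p2 * p4) + x ^ 2 * v ^ 2 * W ^ 2 * Wi * j1 * j2 * j3 * p2 * p4 + (2) * x ^ 2 * v ^ 3 * W * j1 * j2 * j3 * p2 * p4 + x ^ 2 * v ^ 3 * W * xi ^ 2 * j1 * j2 * j3 * p2 * p4 + -(x ^ 2 * v ^ 3 * W ^ 2 * Wi * j1 * j2 * j3 * p2 * p4) + -(x ^ 2 * v ^ 3 * W ^ 2 * xi ^ 2 * Wi * j1 * j2 * j3 * p2 * p4) + -(x ^ 2 * v ^ 4 * xi ^ 2 * Wi * j1 * j2 * j3 * p2 * p4) + (-2) * x ^ 2 * v ^ 4 * W * xi ^ 2 * j1 * j2 * j3 * p2 * p4 + x ^ 2 * v ^ 4 * W ^ 2 * xi ^ 2 * Wi * j1 * j2 * j3 * p2 * p4 + -(x ^ 3 * v * xi * Wi * j1 * j2 * j3 * p2 * p4) + -(x ^ 3 * v * W * xi * j1 * j2 * j3 * p2 * p4) + x ^ 3 * v ^ 2 * W * xi ^ 3 * j1 * j2 * j3 * p2 * p4 + (-2) * x ^ 3 * v ^ 3 * xi * Wi * j1 *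 j2 * j3 * p2 * p4 + x ^ 3 * v ^ 3 * xi ^ 3 * Wi * j1 * j2 * j3 * p2 * p4 + -(x ^ 3 * v ^ 3 * W ^ 2 * xi * Wi * j1 * j2 * j3 * p2 * p4) + x ^ 3 * v ^ 4 * xi * Wi * j1 * j2 * j3 * p2 * p4 + x ^ 3 * v ^ 4 * xi ^ 3 * Wi * j1 * j2 * j3 * p2 * p4 + -(x ^ 3 * v ^ 4 * W * xi * j1 * j2 * j3 * p2 * p4) + x ^ 3 * v ^ 4 * W ^ 2 * xi * Wi * j1 * j2 * j3 * p2 * p4 + x ^ 3 * v ^ 4 * W ^ 2 * xi ^ 3 * Wi * j1 * j2 * j3 * p2 * p4 + x ^ 3 * v ^ 5 * W * xi ^ 3 * j1 * j2 * j3 * p2 * p4 + -(x ^ 3 * v ^ 5 * W ^ 2 * xi ^ 3 * Wi * j1 * j2 * j3 * p2 * p4) + x ^ 4 * v * W * j1 * j2 * j3 * p2 * p4 + -(x ^ 4 * v * W ^ 2 * Wi * j1 * j2 * j3 * p2 * p4) + -(x ^ 4 * v ^ 2 * Wi * j1 * j2 * j3 * p2 * p4) + -(x ^ 4 * v ^ 2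 * xi ^ 2 * Wi * j1 * j2 * j3 * p2 * p4) + (-2) * x ^ 4 * v ^ 2 * W * j1 * j2 * j3 * p2 * p4 + -(x ^ 4 * v ^ 2 * W * xi ^ 2 * j1 * j2 * j3 * p2 * p4) + x ^ 4 * v ^ 2 * W ^ 2 * Wi * j1 * j2 * j3 * p2 * p4 + x ^ 4 * v ^ 2 * W ^ 2 * xi ^ 2 * Wi * j1 * j2 * j3 * p2 * p4 + (2) * x ^ 4 * v ^ 3 * xi ^ 2 * Wi * j1 * j2 * j3 * p2 * p4 + (2) * x ^ 4 * v ^ 3 * W * xi ^ 2 * j1 * j2 * j3 * p2 * p4 + -(x ^ 4 * v ^ 3 * W ^ 2 * xi ^ 2 * Wi * j1 * j2 * j3 * p2 * p4) + x ^ 5 * v ^ 2 * xi * Wi * j1 * j2 * j3 * p2 * p4 + x ^ 5 * v ^ 2 * W ^ 2 * xi * Wi * j1 * j2 * j3 * p2 * p4 + x ^ 5 * v ^ 3 * W * xi * j1 * j2 * j3 * p2 * p4 + -(x ^ 5 * v ^ 3 * W ^ 2 * xi * Wi * j1 * j2 * j3 * p2 * p4) + -(x ^ 5 * v ^ 3 *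 W ^ 2 * xi ^ 3 * Wi * j1 * j2 * j3 * p2 * p4) + -(x ^ 5 * v ^ 4 * xi ^ 3 * Wi * j1 * j2 * j3 * p2 * p4) + -(x ^ 5 * v ^ 4 * W * xi ^ 3 * j1 * j2 * j3 * p2 * p4) + x ^ 5 * v ^ 4 * W ^ 2 * xi ^ 3 * Wi * j1 * j2 * j3 * p2 * p4) * hPP +
      (v * W * Pi * j1 * j2 * j3 * p2 * p4 + -(v ^ 2 * W * P * Pi * j1 * j2 * j3 * p2 * p4) + -(v ^ 3 * W * xi ^ 2 * Pi * j1 * j2 * j3 * p2 * p4) + v ^ 3 * W * P * xi ^ 2 * Pi * j1 * j2 * j3 * p2 * p4 + (-2) * x * v ^ 2 * W * xi * Pi * j1 * j2 * j3 * p2 * p4 + x * v ^ 2 * W * P * xi * Pi * j1 * j2 * j3 * p2 * p4 + x * v ^ 3 * W * xi * Pi * j1 * j2 * j3 * p2 * p4 + x * v ^ 3 * W * xi ^ 3 * Pi * j1 * j2 * j3 * p2 * p4 + -(x * v ^ 3 * W * P * xi ^ 3 * Pi * j1 * j2 * j3 * p2 * p4) + -(x ^ 2 * W * Pi * j1 *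 j2 * j3 * p2 * p4) + x ^ 2 * v * W * P * Pi * j1 * j2 * j3 * p2 * p4 + -(x ^ 2 * v ^ 2 * W * Pi * j1 * j2 * j3 * p2 * p4) + x ^ 2 * v ^ 2 * W * xi ^ 2 * Pi * j1 * j2 * j3 * p2 * p4 + -(x ^ 2 * v ^ 2 * W * P * Pi * j1 * j2 * j3 * p2 * p4) + -(x ^ 2 * v ^ 2 * W * P * xi ^ 2 * Pi * j1 * j2 * j3 * p2 * p4) + (2) * x ^ 2 * v ^ 3 * W * P * Pi * j1 * j2 * j3 * p2 * p4 + x ^ 2 * v ^ 3 * W * P * xi ^ 2 * Pi * j1 * j2 * j3 * p2 * p4 + x ^ 2 * v ^ 4 * W * xi ^ 2 * Pi * j1 * j2 * j3 * p2 * p4 + (-2) * x ^ 2 * v ^ 4 * W * P * xi ^ 2 * Pi * j1 * j2 * j3 * p2 * p4 + (2) * x ^ 3 * v * W * xi * Pi * j1 * j2 * j3 * p2 * p4 + -(x ^ 3 * v * W * P * xi * Pi * j1 * j2 * j3 * p2 * p4) + -(x ^ 3 * v ^ 2 * W * xi * Pi * j1 * j2 * j3 * p2 * p4) + -(x ^ 3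 * v ^ 2 * W * xi ^ 3 * Pi * j1 * j2 * j3 * p2 * p4) + x ^ 3 * v ^ 2 * W * P * xi ^ 3 * Pi * j1 * j2 * j3 * p2 * p4 + (2) * x ^ 3 * v ^ 3 * W * xi * Pi * j1 * j2 * j3 * p2 * p4 + -(x ^ 3 * v ^ 4 * W * xi * Pi * j1 * j2 * j3 * p2 * p4) + -(x ^ 3 * v ^ 4 * W * xi ^ 3 * Pi * j1 * j2 * j3 * p2 * p4) + -(x ^ 3 * v ^ 4 * W * P * xi * Pi * j1 * j2 * j3 * p2 * p4) + x ^ 3 * v ^ 5 * W * P * xi ^ 3 * Pi * j1 * j2 * j3 * p2 * p4 + x ^ 4 * v * W * Pi * j1 * j2 * j3 * p2 * p4 + x ^ 4 * v * W * P * Pi * j1 * j2 * j3 * p2 * p4 + (-2) * x ^ 4 * v ^ 2 * W * P * Pi * j1 * j2 * j3 * p2 * p4 + -(x ^ 4 * v ^ 2 * W * P * xi ^ 2 * Pi * j1 * j2 * j3 * p2 * p4) + -(x ^ 4 * v ^ 3 * W * xi ^ 2 * Pi * j1 * j2 * j3 * p2 * p4) + (2) * x ^ 4 * v ^ 3 *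 W * P * xi ^ 2 * Pi * j1 * j2 * j3 * p2 * p4 + (-2) * x ^ 5 * v ^ 2 * W * xi * Pi * j1 * j2 * j3 * p2 * p4 + x ^ 5 * v ^ 3 * W * xi * Pi * j1 * j2 * j3 * p2 * p4 + x ^ 5 * v ^ 3 * W * xi ^ 3 * Pi * j1 * j2 * j3 * p2 * p4 + x ^ 5 * v ^ 3 * W * P * xi * Pi * j1 * j2 * j3 * p2 * p4 + -(x ^ 5 * v ^ 4 * W * P * xi ^ 3 * Pi * j1 * j2 * j3 * p2 * p4)) * hWW +
      (-(v * P * Wi * Pi * j1 * j2 * j3 * p2 * p4) + v * W ^ 2 * Wi * Pi * j1 * j2 * j3 * p2 * p4 + v ^ 2 * Wi * Pi * j1 * j2 * j3 * p2 * p4 + -(v ^ 2 * W ^ 2 * P * Wi * Pi * j1 * j2 * j3 * p2 * p4) + -(v ^ 3 * xi ^ 2 * Wi * Pi * j1 * j2 * j3 * p2 * p4) + v ^ 3 * P * xi ^ 2 * Wi * Pi * j1 * j2 * j3 * p2 * p4 + -(v ^ 3 * W ^ 2 * xi ^ 2 * Wi * Pi * j1 * j2 * j3 * p2 * p4) + v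 ^ 3 * W ^ 2 * P * xi ^ 2 * Wi * Pi * j1 * j2 * j3 * p2 * p4 + -(x * v * P * xi * Wi * Pi * j1 * j2 * j3 * p2 * p4) + x * v * W ^ 2 * xi * Wi * Pi * j1 * j2 * j3 * p2 * p4 + (2) * x * v ^ 2 * P * xi * Wi * Pi * j1 * j2 * j3 * p2 * p4 + (-2) * x * v ^ 2 * W ^ 2 * xi * Wi * Pi * j1 * j2 * j3 * p2 * p4 + -(x * v ^ 3 * P * xi * Wi * Pi * j1 * j2 * j3 * p2 * p4) + x * v ^ 3 * W ^ 2 * xi * Wi * Pi * j1 * j2 * j3 * p2 * p4 + -(x ^ 2 * v * Wi * Pi * j1 * j2 * j3 * p2 * p4) + x ^ 2 * v * P * Wi * Pi * j1 * j2 * j3 * p2 * p4 + -(x ^ 2 * v * W ^ 2 * Wi * Pi * j1 * j2 * j3 * p2 * p4) + x ^ 2 * v * W ^ 2 * P * Wi * Pi * j1 * j2 * j3 * p2 * p4 + x ^ 2 * v ^ 2 * xi ^ 2 * Wi * Pi * j1 * j2 * j3 * p2 * p4 + x ^ 2 * v ^ 2 * P * Wi * Pi * j1 * j2 * j3 * p2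 * p4 + -(x ^ 2 * v ^ 2 * W ^ 2 * Wi * Pi * j1 * j2 * j3 * p2 * p4) + -(x ^ 2 * v ^ 2 * W ^ 2 * P * xi ^ 2 * Wi * Pi * j1 * j2 * j3 * p2 * p4) + -(x ^ 2 * v ^ 3 * Wi * Pi * j1 * j2 * j3 * p2 * p4) + -(x ^ 2 * v ^ 3 * P * xi ^ 2 * Wi * Pi * j1 * j2 * j3 * p2 * p4) + x ^ 2 * v ^ 3 * W ^ 2 * xi ^ 2 * Wi * Pi * j1 * j2 * j3 * p2 * p4 + x ^ 2 * v ^ 3 * W ^ 2 * P * Wi * Pi * j1 * j2 * j3 * p2 * p4 + x ^ 2 * v ^ 4 * xi ^ 2 * Wi * Pi * j1 * j2 * j3 * p2 * p4 + -(x ^ 2 * v ^ 4 * P * xi ^ 2 * Wi * Pi * j1 * j2 * j3 * p2 * p4) + x ^ 2 * v ^ 4 * W ^ 2 * xi ^ 2 * Wi * Pi * j1 * j2 * j3 * p2 * p4 + -(x ^ 2 * v ^ 4 * W ^ 2 * P * xi ^ 2 * Wi * Pi * j1 * j2 * j3 * p2 * p4) + x ^ 3 * v ^ 2 * P * xi *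 Wi * Pi * j1 * j2 * j3 * p2 * p4 + -(x ^ 3 * v ^ 2 * W ^ 2 * xi * Wi * Pi * j1 * j2 * j3 * p2 * p4) + (-2) * x ^ 3 * v ^ 3 * P * xi * Wi * Pi * j1 * j2 * j3 * p2 * p4 + (2) * x ^ 3 * v ^ 3 * W ^ 2 * xi * Wi * Pi * j1 * j2 * j3 * p2 * p4 + x ^ 3 * v ^ 4 * P * xi * Wi * Pi * j1 * j2 * j3 * p2 * p4 + -(x ^ 3 * v ^ 4 * W ^ 2 * xi * Wi * Pi * j1 * j2 * j3 * p2 * p4) + x ^ 4 * v ^ 2 * Wi * Pi * j1 * j2 * j3 * p2 * p4 + -(x ^ 4 * v ^ 2 * P * Wi * Pi * j1 * j2 * j3 * p2 * p4) + x ^ 4 * v ^ 2 * W ^ 2 * Wi * Pi * j1 * j2 * j3 * p2 * p4 + -(x ^ 4 * v ^ 2 * W ^ 2 * P * Wi * Pi * j1 * j2 * j3 * p2 * p4) + -(x ^ 4 * v ^ 3 * xi ^ 2 * Wi * Pi * j1 * j2 * j3 * p2 * p4) + x ^ 4 * v ^ 3 * W ^ 2 * P * xi ^ 2 * Wi * Pi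 * j1 * j2 * j3 * p2 * p4 + x ^ 4 * v ^ 4 * P * xi ^ 2 * Wi * Pi * j1 * j2 * j3 * p2 * p4 + -(x ^ 4 * v ^ 4 * W ^ 2 * xi ^ 2 * Wi * Pi * j1 * j2 * j3 * p2 * p4)) * hxx
  rw [hN1, hN2, hcl1, hcl2, hcl3, hCore]
  linear_combination
      (ai * Wi * iw + -(ai * Wi * iw * p2 * p4) + ai * Wi * Pi * iw + -(ai * Wi * Pi * iw * j3 * p2) + -(xi * Wi * iw) + xi * Wi * iw * p2 * p4 + -(xi * Wi * Pi * iw) + xi * Wi * Pi * iw * j3 * p2 + -(W * ai * iw) + W * ai * iw * j3 * p2 + -(W * ai * Pi * iw) + W * ai * Pi * iw * p2 * p4 + W * xi * iw + -(W * xi * iw * j3 * p2) + W * xi * Pi * iw + -(W * xi * Pi * iw * p2 * p4) + v * xi * ai ^ 2 * Wi * iw * p2 * p4 + -(v * xi ^ 2 * ai * Wi * iw * p2 * p4) + -(v * W * xi * ai ^ 2 * Pi * iw * p2 * p4) + v * W * xi ^ 2 * ai * Pi * iw * p2 * p4 + a * Wi * iw + -(a * Wi * iw * p2 * p4) + a *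 Wi * Pi * iw + -(a * Wi * Pi * iw * j3 * p2) + -(a * W * iw) + a * W * iw * j3 * p2 + -(a * W * Pi * iw) + a * W * Pi * iw * p2 * p4 + (2) * a * v * xi * ai * Wi * iw * p2 * p4 + -(a * v * xi ^ 2 * Wi * iw * p2 * p4) + (-2) * a * v * W * xi * ai * Pi * iw * p2 * p4 + a * v * W * xi ^ 2 * Pi * iw * p2 * p4 + a ^ 2 * v * xi * Wi * iw * p2 * p4 + -(a ^ 2 * v * W * xi * Pi * iw * p2 * p4) + -(x * Wi * iw) + x * Wi * iw * p2 * p4 + -(x * Wi * Pi * iw) + x * Wi * Pi * iw * j3 * p2 + x * W * iw + -(x * W * iw * j3 * p2) + x * W * Pi * iw + -(x * W * Pi * iw * p2 * p4) + x * v * ai ^ 2 * Wi * Pi * iw * j3 * p2 + -(x * v * xi * ai * Wi * iw * p2 * p4) + -(x * v * xi * ai * Wi * Pi * iw * j3 * p2) + -(x * v * W * ai ^ 2 * iw * j3 * p2) + x * v * W * xi * ai * iw * j3 * p2 + x * v * W * xi * ai * Pi * iw * p2 * p4 + -(x * v ^ 2 * xi ^ 3 * ai * Wi * iw * p2 * p4)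 + x * v ^ 2 * xi ^ 4 * Wi * iw * p2 * p4 + x * v ^ 2 * W * xi ^ 3 * ai * Pi * iw * p2 * p4 + -(x * v ^ 2 * W * xi ^ 4 * Pi * iw * p2 * p4) + (2) * x * a * v * ai * Wi * Pi * iw * j3 * p2 + -(x * a * v * xi * Wi * iw * p2 * p4) + -(x * a * v * xi * Wi * Pi * iw * j3 * p2) + (-2) * x * a * v * W * ai * iw * j3 * p2 + x * a * v * W * xi * iw * j3 * p2 + x * a * v * W * xi * Pi * iw * p2 * p4 + -(x * a * v ^ 2 * xi ^ 3 * Wi * iw * p2 * p4) + x * a * v ^ 2 * W * xi ^ 3 * Pi * iw * p2 * p4 + x * a ^ 2 * v * Wi * Pi * iw * j3 * p2 + -(x * a ^ 2 * v * W * iw * j3 * p2) + -(x ^ 2 * v * ai * Wi * Pi * iw * j3 * p2) + x ^ 2 * v * W * ai * iw * j3 * p2 + x ^ 2 * v ^ 2 * xi ^ 3 * Wi * iw * p2 * p4 + -(x ^ 2 * v ^ 2 * W * xi ^ 3 * Pi * iw * p2 * p4) + -(x ^ 2 * a * v * Wi * Pi * iw * j3 * p2) + x ^ 2 * a * v * W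 * iw * j3 * p2 + -(x ^ 3 * v ^ 2 * xi * ai * Wi * Pi * iw * j3 * p2) + x ^ 3 * v ^ 2 * xi ^ 2 * Wi * Pi * iw * j3 * p2 + x ^ 3 * v ^ 2 * W * xi * ai * iw * j3 * p2 + -(x ^ 3 * v ^ 2 * W * xi ^ 2 * iw * j3 * p2) + -(x ^ 3 * a * v ^ 2 * xi * Wi * Pi * iw * j3 * p2) + x ^ 3 * a * v ^ 2 * W * xi * iw * j3 * p2 + x ^ 4 * v ^ 2 * xi * Wi * Pi * iw * j3 * p2 + -(x ^ 4 * v ^ 2 * W * xi * iw * j3 * p2)) * hiw +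
      (-(xi * ai * Wi * iw ^ 2) + -(xi * ai * Wi * Pi * iw ^ 2) + xi * ai * Wi * Pi * iw ^ 2 * j3 * p2 + xi ^ 2 * Wi * iw ^ 2 + xi ^ 2 * Wi * Pi * iw ^ 2 + -(xi ^ 2 * Wi * Pi * iw ^ 2 * j3 * p2) + W * xi * ai * iw ^ 2 + -(W * xi * ai * iw ^ 2 * j3 * p2) + W * xi * ai * Pi * iw ^ 2 + -(W * xi ^ 2 * iw ^ 2) + W * xi ^ 2 * iw ^ 2 * j3 * p2 + -(W * xi ^ 2 * Pi * iw ^ 2) + -(a * xi * Wi * iw ^ 2) + -(a * xi * Wi * Pi * iw ^ 2) + a * xi * Wi * Pi * iw ^ 2 * j3 * p2 + a * W * xi * iw ^ 2 + -(a * W * xi * iw ^ 2 * j3 * p2) + a * W * xi * Pi * iw ^ 2 + x * ai * Wi * iw ^ 2 + x * ai * Wi * Pi * iw ^ 2 + -(x * ai * Wi * Pi * iw ^ 2 * j3 * p2) + -(x * W * ai * iw ^ 2) + x * W * ai * iw ^ 2 * j3 * p2 + -(x * W * ai * Pi * iw ^ 2) + -(x * v * xi ^ 2 * ai * Wi * Pi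 * iw ^ 2 * j3 * p2) + x * v * xi ^ 3 * Wi * Pi * iw ^ 2 * j3 * p2 + x * v * W * xi ^ 2 * ai * iw ^ 2 * j3 * p2 + -(x * v * W * xi ^ 3 * iw ^ 2 * j3 * p2) + x * a * Wi * iw ^ 2 + x * a * Wi * Pi * iw ^ 2 + -(x * a * Wi * Pi * iw ^ 2 * j3 * p2) + -(x * a * W * iw ^ 2) + x * a * W * iw ^ 2 * j3 * p2 + -(x * a * W * Pi * iw ^ 2) + -(x * a * v * xi ^ 2 * Wi * Pi * iw ^ 2 * j3 * p2) + x * a * v * W * xi ^ 2 * iw ^ 2 * j3 * p2 + -(x ^ 2 * Wi * iw ^ 2) + -(x ^ 2 * Wi * Pi * iw ^ 2) + x ^ 2 * Wi * Pi * iw ^ 2 * j3 * p2 + x ^ 2 * W * iw ^ 2 + -(x ^ 2 * W * iw ^ 2 * j3 * p2) + x ^ 2 * W * Pi * iw ^ 2 + x ^ 2 * v * xi ^ 2 * Wi * Pi * iw ^ 2 * j3 * p2 + -(x ^ 2 * v * W * xi ^ 2 * iw ^ 2 * j3 * p2) + x ^ 3 * v * ai * Wi * Pi * iw ^ 2 *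 j3 * p2 + -(x ^ 3 * v * xi * Wi * Pi * iw ^ 2 * j3 * p2) + -(x ^ 3 * v * W * ai * iw ^ 2 * j3 * p2) + x ^ 3 * v * W * xi * iw ^ 2 * j3 * p2 + x ^ 3 * v ^ 2 * xi ^ 2 * ai * Wi * Pi * iw ^ 2 * j3 * p2 + -(x ^ 3 * v ^ 2 * xi ^ 3 * Wi * Pi * iw ^ 2 * j3 * p2) + -(x ^ 3 * v ^ 2 * W * xi ^ 2 * ai * iw ^ 2 * j3 * p2) + x ^ 3 * v ^ 2 * W * xi ^ 3 * iw ^ 2 * j3 * p2 + x ^ 3 * a * v * Wi * Pi * iw ^ 2 * j3 * p2 + -(x ^ 3 * a * v * W * iw ^ 2 * j3 * p2) + x ^ 3 * a * v ^ 2 * xi ^ 2 * Wi * Pi * iw ^ 2 * j3 * p2 + -(x ^ 3 * a * v ^ 2 * W * xi ^ 2 * iw ^ 2 * j3 * p2) + -(x ^ 4 * v * Wi * Pi * iw ^ 2 * j3 * p2) + x ^ 4 * v * W * iw ^ 2 * j3 * p2 + -(x ^ 4 * v ^ 2 * xi * ai * Wi * Pi * iw ^ 2 * j3 * p2) + x ^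 4 * v ^ 2 * W * xi * ai * iw ^ 2 * j3 * p2 + -(x ^ 4 * a * v ^ 2 * xi * Wi * Pi * iw ^ 2 * j3 * p2) + x ^ 4 * a * v ^ 2 * W * xi * iw ^ 2 * j3 * p2 + x ^ 5 * v ^ 2 * xi * Wi * Pi * iw ^ 2 * j3 * p2 + -(x ^ 5 * v ^ 2 * W * xi * iw ^ 2 * j3 * p2)) * hp4 +
      (-(xi * ai * Wi * iw ^ 2 * p4) + -(xi * ai * Wi * Pi * iw ^ 2 * p4) + xi ^ 2 * Wi * iw ^ 2 * p4 + xi ^ 2 * Wi * Pi * iw ^ 2 * p4 + W * xi * ai * iw ^ 2 * p4 + W * xi * ai * Pi * iw ^ 2 * p4 + -(W * xi ^ 2 * iw ^ 2 * p4) + -(W * xi ^ 2 * Pi * iw ^ 2 * p4) + v * xi ^ 3 * ai * Wi * iw ^ 2 * p4 + v * xi ^ 3 * ai * Wi * Pi * iw ^ 2 * p4 + -(v * xi ^ 4 * Wi * iw ^ 2 * p4) + -(v * xi ^ 4 * Wi * Pi * iw ^ 2 * p4) + -(v * W * xi ^ 3 * ai * iw ^ 2 * p4) + -(v * W * xi ^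 3 * ai * Pi * iw ^ 2 * p4) + v * W * xi ^ 4 * iw ^ 2 * p4 + v * W * xi ^ 4 * Pi * iw ^ 2 * p4 + -(a * xi * Wi * iw ^ 2 * p4) + -(a * xi * Wi * Pi * iw ^ 2 * p4) + a * W * xi * iw ^ 2 * p4 + a * W * xi * Pi * iw ^ 2 * p4 + a * v * xi ^ 3 * Wi * iw ^ 2 * p4 + a * v * xi ^ 3 * Wi * Pi * iw ^ 2 * p4 + -(a * v * W * xi ^ 3 * iw ^ 2 * p4) + -(a * v * W * xi ^ 3 * Pi * iw ^ 2 * p4) + x * ai * Wi * iw ^ 2 * p4 + x * ai * Wi * Pi * iw ^ 2 * p4 + -(x * W * ai * iw ^ 2 * p4) + -(x * W * ai * Pi * iw ^ 2 * p4) + -(x * v * xi ^ 2 * ai * Wi * iw ^ 2 * p4) + -(x * v * xi ^ 2 * ai * Wi * Pi * iw ^ 2 * p4) + x * v * W * xi ^ 2 * ai * iw ^ 2 * p4 + x * v * W * xi ^ 2 * ai * Pi * iw ^ 2 * p4 + x * a * Wi * iw ^ 2 * p4 + x * a * Wi * Pi * iw ^ 2 * p4 + -(x * a * W * iw ^ 2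 * p4) + -(x * a * W * Pi * iw ^ 2 * p4) + -(x * a * v * xi ^ 2 * Wi * iw ^ 2 * p4) + -(x * a * v * xi ^ 2 * Wi * Pi * iw ^ 2 * p4) + x * a * v * W * xi ^ 2 * iw ^ 2 * p4 + x * a * v * W * xi ^ 2 * Pi * iw ^ 2 * p4 + -(x ^ 2 * Wi * iw ^ 2 * p4) + -(x ^ 2 * Wi * Pi * iw ^ 2 * p4) + x ^ 2 * W * iw ^ 2 * p4 + x ^ 2 * W * Pi * iw ^ 2 * p4 + x ^ 2 * v * xi ^ 2 * Wi * iw ^ 2 * p4 + x ^ 2 * v * xi ^ 2 * Wi * Pi * iw ^ 2 * p4 + -(x ^ 2 * v * W * xi ^ 2 * iw ^ 2 * p4) + -(x ^ 2 * v * W * xi ^ 2 * Pi * iw ^ 2 * p4)) * hp2 +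
      (-(xi * ai * Wi * Pi * iw ^ 2 * p2 * p4) + xi ^ 2 * Wi * Pi * iw ^ 2 * p2 * p4 + W * xi * ai * iw ^ 2 * p2 * p4 + -(W * xi ^ 2 * iw ^ 2 * p2 * p4) + v * xi ^ 3 * ai * Wi * Pi * iw ^ 2 * p2 * p4 + -(v * xi ^ 4 * Wi * Pi * iw ^ 2 * p2 * p4) + -(v * W * xi ^ 3 * ai * iw ^ 2 * p2 * p4) + v * W * xi ^ 4 * iw ^ 2 * p2 * p4 + -(a * xi * Wi * Pi * iw ^ 2 * p2 * p4) + a * W * xi * iw ^ 2 * p2 * p4 + a * v * xi ^ 3 * Wi * Pi * iw ^ 2 * p2 * p4 + -(a * v * W * xi ^ 3 * iw ^ 2 * p2 * p4) + x * ai * Wi * Pi * iw ^ 2 * p2 * p4 + -(x * W * ai * iw ^ 2 * p2 * p4) + -(x * v * xi ^ 3 * Wi * Pi * iw ^ 2 * p2 * p4) + x * v * W * xi ^ 3 * iw ^ 2 * p2 * p4 + -(x * v ^ 2 * xi ^ 4 * ai * Wi * Pi * iw ^ 2 * p2 * p4) + x * v ^ 2 * xi ^ 5 * Wi * Pi * iw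 ^ 2 * p2 * p4 + x * v ^ 2 * W * xi ^ 4 * ai * iw ^ 2 * p2 * p4 + -(x * v ^ 2 * W * xi ^ 5 * iw ^ 2 * p2 * p4) + x * a * Wi * Pi * iw ^ 2 * p2 * p4 + -(x * a * W * iw ^ 2 * p2 * p4) + -(x * a * v ^ 2 * xi ^ 4 * Wi * Pi * iw ^ 2 * p2 * p4) + x * a * v ^ 2 * W * xi ^ 4 * iw ^ 2 * p2 * p4 + -(x ^ 2 * Wi * Pi * iw ^ 2 * p2 * p4) + x ^ 2 * W * iw ^ 2 * p2 * p4 + -(x ^ 2 * v * xi * ai * Wi * Pi * iw ^ 2 * p2 * p4) + x ^ 2 * v * xi ^ 2 * Wi * Pi * iw ^ 2 * p2 * p4 + x ^ 2 * v * W * xi * ai * iw ^ 2 * p2 * p4 + -(x ^ 2 * v * W * xi ^ 2 * iw ^ 2 * p2 * p4) + x ^ 2 * v ^ 2 * xi ^ 3 * ai * Wi * Pi * iw ^ 2 * p2 * p4 + -(x ^ 2 * v ^ 2 * W * xi ^ 3 * ai * iw ^ 2 * p2 * p4) + -(x ^ 2 * a * v * xi * Wi * Pi * iw ^ 2 * p2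 * p4) + x ^ 2 * a * v * W * xi * iw ^ 2 * p2 * p4 + x ^ 2 * a * v ^ 2 * xi ^ 3 * Wi * Pi * iw ^ 2 * p2 * p4 + -(x ^ 2 * a * v ^ 2 * W * xi ^ 3 * iw ^ 2 * p2 * p4) + x ^ 3 * v * xi * Wi * Pi * iw ^ 2 * p2 * p4 + -(x ^ 3 * v * W * xi * iw ^ 2 * p2 * p4) + -(x ^ 3 * v ^ 2 * xi ^ 3 * Wi * Pi * iw ^ 2 * p2 * p4) + x ^ 3 * v ^ 2 * W * xi ^ 3 * iw ^ 2 * p2 * p4) * hj3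


/-- As formal distributions in `z`: for `s ∉ {0, 2, −2}`,
`Δ(z)Δ(x^s z) − Δ(z^{−1})Δ(x^{−s}z^{−1})
  = c(x,r)·{Δ(x^{s+1})(δ(x^{−1}z) − δ(x^{s+1}z)) + Δ(x^{s−1})(δ(x^{s−1}z) − δ(xz))}`,
where `Δ(z)Δ(x^s z)` is expanded in nonnegative powers of `z`, the second term
in negative powers, `Δ(x^{s±1})` are values of the rational function, and
`δ(z) = Σ_{m∈ℤ} z^m`. -/
theorem delta_series_product_difference (x : ℂ) (hx0 : x ≠ 0) (hx1 : ‖x‖ < 1)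
    (r : ℝ) (hr : 1 < r) (s : ℤ) (hs0 : s ≠ 0) (hs2 : s ≠ 2) (hs2' : s ≠ -2) :
    ∀ n : ℤ,
      (if 0 ≤ n then
          (PowerSeries.coeff n.toNat) (Δps x r * PowerSeries.rescale (x ^ s) (Δps x r))
        else 0) -
        (if 0 ≤ -n then
          (PowerSeries.coeff (-n).toNat) (Δps x r * PowerSeries.rescale (x ^ (-s)) (Δps x r))
        else 0) =
      cxr x r *
        (Δval x r (x ^ (s + 1)) * (x ^ (-n) - x ^ ((s + 1) * n)) +
          Δval x r (x ^ (s - 1)) * (x ^ ((s - 1) * n) - x ^ n)) := by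
  intro n
  have hxx : x * x⁻¹ = 1 := mul_inv_cancel₀ hx0
  have habs : 0 < ‖x‖ := norm_pos_iff.mpr hx0
  have hzone : ∀ k : ℤ, x ^ k = 1 → k = 0 := by
    intro k hk
    have h1 : ‖x‖ ^ k = ‖x‖ ^ (0 : ℤ) := by
      rw [zpow_zero, ← norm_zpow, hk, norm_one]
    exact zpow_right_injective₀ habs (ne_of_lt hx1) h1
  have hzp : ∀ k l : ℤ, x ^ k = x ^ l → k = l := by
    intro k l h
    have h1 : x ^ (k - l) = 1 := by
      rw [zpow_sub₀ hx0, h, div_self (zpow_ne_zero _ hx0)]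
    have := hzone _ h1
    omega
  have hxsq : x * x = x ^ (2 : ℤ) := by
    rw [show (2 : ℤ) = 1 + 1 by norm_num, zpow_add₀ hx0, zpow_one]
  have hx2z : x ^ (2 : ℕ) = x ^ (2 : ℤ) := by rw [← hxsq]; ring
  have hw : x - x⁻¹ ≠ 0 := by
    intro h
    have hxe : x = x⁻¹ := by rwa [sub_eq_zero] at h
    have hx2 : x ^ (2 : ℤ) = x ^ (0 : ℤ) := by
      rw [zpow_zero, ← hxsq]
      nth_rewrite 1 [hxe]
      exact inv_mul_cancel₀ hx0
    have := hzp 2 0 hx2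
    norm_num at this
  set a := x ^ ((2 * r - 1 : ℝ) : ℂ) with ha
  have ha0 : a ≠ 0 := fun h => hx0 ((Complex.cpow_eq_zero_iff _ _).mp h).1
  have haa : a * a⁻¹ = 1 := mul_inv_cancel₀ ha0
  have hb : x ^ ((-2 * r + 1 : ℝ) : ℂ) = a⁻¹ := by
    rw [ha, ← Complex.cpow_neg]
    congr 1
    push_cast
    ring
  have hDcoeff := coeff_Dps x hx0 r a ha ha0 hb hw
  have hcxr : cxr x r = (a + a⁻¹ - x - x⁻¹) / (x - x⁻¹) := by
    have m1 : x ^ ((r : ℝ) : ℂ) * x ^ (((r - 1 : ℝ)) : ℂ) = a := by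
      rw [ha, ← Complex.cpow_add _ _ hx0]
      congr 1
      push_cast
      ring
    have m2 : x ^ ((r : ℝ) : ℂ) * x ^ (-(((r - 1 : ℝ)) : ℂ)) = x := by
      rw [← Complex.cpow_add _ _ hx0,
        show ((r : ℝ) : ℂ) + -(((r - 1 : ℝ)) : ℂ) = 1 by push_cast; ring, Complex.cpow_one]
    have m3 : x ^ (-((r : ℝ) : ℂ)) * x ^ (((r - 1 : ℝ)) : ℂ) = x⁻¹ := by
      rw [← Complex.cpow_add _ _ hx0,
        show -((r : ℝ) : ℂ) + (((r - 1 : ℝ)) : ℂ) = -1 by push_cast; ring,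
        show (-1 : ℂ) = -(1 : ℂ) by norm_num, Complex.cpow_neg, Complex.cpow_one]
    have m4 : x ^ (-((r : ℝ) : ℂ)) * x ^ (-(((r - 1 : ℝ)) : ℂ)) = a⁻¹ := by
      rw [ha, ← Complex.cpow_add _ _ hx0, ← Complex.cpow_neg]
      congr 1
      push_cast
      ring
    have expand : (x ^ ((r : ℝ) : ℂ) - x ^ (-((r : ℝ) : ℂ)))
        * (x ^ (((r - 1 : ℝ)) : ℂ) - x ^ (-(((r - 1 : ℝ)) : ℂ))) = a + a⁻¹ - x - x⁻¹ := by
      rw [mul_sub, sub_mul, sub_mul, m1, m2, m3, m4]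
      ring
    simp only [cxr, qnum]
    rw [div_mul_div_comm, expand, div_mul_eq_mul_div,
      div_eq_div_iff (mul_ne_zero hw hw) hw]
    ring
  have hv0 : x ^ s ≠ 0 := zpow_ne_zero _ hx0
  have hvne1 : x ^ s ≠ 1 := fun h => hs0 (hzone s h)
  have hd1p : (1 : ℂ) - x ^ s ≠ 0 := sub_ne_zero_of_ne (fun h => hvne1 h.symm)
  have hd2p : x ^ (2 : ℕ) - x ^ s ≠ 0 := by
    rw [hx2z]
    exact sub_ne_zero_of_ne (fun h => hs2 ((hzp 2 s h).symm))
  have hd3p : (1 : ℂ) - x ^ (2 : ℕ) * x ^ s ≠ 0 := by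
    rw [hx2z, ← zpow_add₀ hx0]
    exact sub_ne_zero_of_ne (fun h => hs2' (by have := hzone (2 + s) h.symm; omega))
  have hd5p : (1 : ℂ) - x⁻¹ * (x ^ s * x) ≠ 0 := by
    have e : x⁻¹ * (x ^ s * x) = x ^ s * (x * x⁻¹) := by ring
    rw [e, hxx, mul_one]
    exact hd1p
  have hd7p : (1 : ℂ) - x⁻¹ * (x ^ s * x⁻¹) ≠ 0 := by
    intro h
    have h1 : x⁻¹ * (x ^ s * x⁻¹) = 1 := (sub_eq_zero.mp h).symm
    have h2 : x ^ s = x * x := by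
      linear_combination (x * x) * h1 - x ^ s * (x * x⁻¹ + 1) * hxx
    exact hs2 (hzp s 2 (h2.trans hxsq))
  have hv0n : (x ^ s)⁻¹ ≠ 0 := inv_ne_zero hv0
  have hvv : x ^ s * (x ^ s)⁻¹ = 1 := mul_inv_cancel₀ hv0
  have hne1n : (x ^ s)⁻¹ ≠ 1 := fun h => hvne1 (by rw [← inv_inv (x ^ s), h, inv_one])
  have hd2n : x ^ (2 : ℕ) - (x ^ s)⁻¹ ≠ 0 := by
    rw [hx2z, ← zpow_neg]
    exact sub_ne_zero_of_ne (fun h => hs2' (by have := hzp 2 (-s) h; omega))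
  have hd3n : (1 : ℂ) - x ^ (2 : ℕ) * (x ^ s)⁻¹ ≠ 0 := by
    rw [hx2z, ← zpow_neg, ← zpow_add₀ hx0]
    exact sub_ne_zero_of_ne (fun h => hs2 (by have := hzone (2 + -s) h.symm; omega))
  have hz1 : x ^ (s + 1) = x ^ s * x := by rw [zpow_add₀ hx0, zpow_one]
  have hz2 : x ^ (s - 1) = x ^ s * x⁻¹ := by rw [zpow_sub₀ hx0, zpow_one, div_eq_mul_inv]
  have hΔ1 : Δval x r (x ^ (s + 1)) =
      (1 - a * (x ^ s * x)) * (1 - a⁻¹ * (x ^ s * x))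
        * ((1 - x * (x ^ s * x))⁻¹ * (1 - x⁻¹ * (x ^ s * x))⁻¹) := by
    rw [Δval, hz1, hb, ← ha, div_eq_mul_inv, mul_inv]
  have hΔ2 : Δval x r (x ^ (s - 1)) =
      (1 - a * (x ^ s * x⁻¹)) * (1 - a⁻¹ * (x ^ s * x⁻¹))
        * ((1 - x * (x ^ s * x⁻¹))⁻¹ * (1 - x⁻¹ * (x ^ s * x⁻¹))⁻¹) := by
    rw [Δval, hz2, hb, ← ha, div_eq_mul_inv, mul_inv]
  rcases lt_trichotomy n 0 with hneg | hzero | hpos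
  · have h1 : ¬ ((0 : ℤ) ≤ n) := not_le.mpr hneg
    have h2 : (0 : ℤ) ≤ -n := by omega
    rw [if_neg h1, if_pos h2]
    set N := (-n).toNat with hNdef
    have hNz : (N : ℤ) = -n := Int.toNat_of_nonneg h2
    have hNne : N ≠ 0 := by omega
    have hWne : x ^ N ≠ 0 := pow_ne_zero _ hx0
    have hPne : (x ^ s) ^ N ≠ 0 := pow_ne_zero _ hv0
    rw [show (x : ℂ) ^ (-s) = (x ^ s)⁻¹ from zpow_neg x s]
    rw [coeff_mul]
    simp only [coeff_rescale]
    rw [Finset.Nat.sum_antidiagonal_eq_sum_range_succ_mk]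
    simp only [hDcoeff]
    rw [sum_eval x hx0 ((x ^ s)⁻¹) hv0n hne1n hd2n hd3n
      ((x + x⁻¹ - a - a⁻¹) / (x - x⁻¹)) N hNne]
    simp only [inv_pow]
    rw [hcxr, hΔ1, hΔ2]
    have hp1 : x ^ (-n) = x ^ N := by rw [← hNz, zpow_natCast]
    have hp3 : x ^ ((s + 1) * n) = ((x ^ s) ^ N)⁻¹ * (x ^ N)⁻¹ := by
      rw [show (s + 1) * n = -(s * (N : ℤ)) + -(N : ℤ) by rw [show n = -(N : ℤ) by omega]; ring,
        zpow_add₀ hx0, zpow_neg, zpow_neg, zpow_mul, zpow_natCast, zpow_natCast]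
    have hp4 : x ^ ((s - 1) * n) = ((x ^ s) ^ N)⁻¹ * x ^ N := by
      rw [show (s - 1) * n = -(s * (N : ℤ)) + (N : ℤ) by rw [show n = -(N : ℤ) by omega]; ring,
        zpow_add₀ hx0, zpow_neg, zpow_mul, zpow_natCast, zpow_natCast]
    have hp2 : x ^ n = (x ^ N)⁻¹ := by
      rw [show n = -(N : ℤ) by omega, zpow_neg, zpow_natCast]
    rw [hp1, hp3, hp4, hp2]
    linear_combination neg_poly x a (x ^ s) (x ^ N) ((x ^ s) ^ N) x⁻¹ a⁻¹ (x ^ s)⁻¹ (x ^ N)⁻¹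
      ((x ^ s) ^ N)⁻¹ (x - x⁻¹)⁻¹
      (1 - (x ^ s)⁻¹)⁻¹ (x ^ 2 - (x ^ s)⁻¹)⁻¹ (1 - x ^ 2 * (x ^ s)⁻¹)⁻¹
      (1 - x ^ s)⁻¹ (x ^ 2 - x ^ s)⁻¹ (1 - x ^ 2 * x ^ s)⁻¹
      (1 - x⁻¹ * (x ^ s * x))⁻¹ (1 - x⁻¹ * (x ^ s * x⁻¹))⁻¹
      hxx haa hvv (mul_inv_cancel₀ hWne) (mul_inv_cancel₀ hPne) (mul_inv_cancel₀ hw)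
      (mul_inv_cancel₀ (sub_ne_zero_of_ne (Ne.symm hne1n)))
      (mul_inv_cancel₀ hd2n) (mul_inv_cancel₀ hd3n)
      (mul_inv_cancel₀ hd1p) (mul_inv_cancel₀ hd2p) (mul_inv_cancel₀ hd3p)
      (mul_inv_cancel₀ hd5p) (mul_inv_cancel₀ hd7p)
  · subst hzero
    have key0 : ∀ c : ℂ, (PowerSeries.coeff 0) (Δps x r * PowerSeries.rescale c (Δps x r))
        = 1 := by
      intro c
      rw [coeff_mul, Finset.Nat.antidiagonal_zero, Finset.sum_singleton]
      simp only [coeff_rescale, hDcoeff]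
      norm_num
    simp [key0]
  · have h1 : (0 : ℤ) ≤ n := le_of_lt hpos
    have h2 : ¬ ((0 : ℤ) ≤ -n) := by omega
    rw [if_pos h1, if_neg h2, sub_zero]
    set N := n.toNat with hNdef
    have hNz : (N : ℤ) = n := Int.toNat_of_nonneg h1
    have hNne : N ≠ 0 := by omega
    have hUne : x ^ N ≠ 0 := pow_ne_zero _ hx0
    rw [coeff_mul]
    simp only [coeff_rescale]
    rw [Finset.Nat.sum_antidiagonal_eq_sum_range_succ_mk]
    simp only [hDcoeff]
    rw [sum_eval x hx0 (x ^ s) hv0 hvne1 hd2p hd3p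
      ((x + x⁻¹ - a - a⁻¹) / (x - x⁻¹)) N hNne]
    rw [hcxr, hΔ1, hΔ2]
    have hp1 : x ^ (-n) = (x ^ N)⁻¹ := by
      rw [show -n = -(N : ℤ) by omega, zpow_neg, zpow_natCast]
    have hp3 : x ^ ((s + 1) * n) = (x ^ s) ^ N * x ^ N := by
      rw [show (s + 1) * n = s * (N : ℤ) + (N : ℤ) by rw [← hNz]; ring,
        zpow_add₀ hx0, zpow_mul, zpow_natCast, zpow_natCast]
    have hp4 : x ^ ((s - 1) * n) = (x ^ s) ^ N * (x ^ N)⁻¹ := by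
      rw [show (s - 1) * n = s * (N : ℤ) + -(N : ℤ) by rw [← hNz]; ring,
        zpow_add₀ hx0, zpow_neg, zpow_mul, zpow_natCast, zpow_natCast]
    have hp2 : x ^ n = x ^ N := by rw [← hNz, zpow_natCast]
    rw [hp1, hp3, hp4, hp2]
    linear_combination pos_poly x a (x ^ s) (x ^ N) ((x ^ s) ^ N) x⁻¹ a⁻¹ (x ^ N)⁻¹ (x - x⁻¹)⁻¹
      (1 - x ^ s)⁻¹ (x ^ 2 - x ^ s)⁻¹ (1 - x ^ 2 * x ^ s)⁻¹
      (1 - x⁻¹ * (x ^ s * x))⁻¹ (1 - x⁻¹ * (x ^ s * x⁻¹))⁻¹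
      hxx haa (mul_inv_cancel₀ hUne) (mul_inv_cancel₀ hw)
      (mul_inv_cancel₀ hd1p) (mul_inv_cancel₀ hd2p) (mul_inv_cancel₀ hd3p)
      (mul_inv_cancel₀ hd5p) (mul_inv_cancel₀ hd7p)
end

section
/- Define for integers i, j ≥ 1 the structure function f_{i,j}(z) = exp(−Σ_{m=1}^∞ (1/m)[(r−1)m]_x [rm]_x (x−x^{−1})^2 · [min(i,j)m]_x ([(N+1−max(i,j))m]_x − [(N−max(i,j))m]_x)/([m]_x([(N+1)m]_x − [Nm]_x)) · z^m) as a formal power series in z. Then f_{i,j}(z) = f_{j,i}(z) = Π_{k=1}^{i} f_{1,j}(x^{−i−1+2k} z) for all 1 ≤ i ≤ j. -/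
open PowerSeries

/-- Formal exponential of a power series (its `n`-th coefficient is
`Σ_k (1/k!)·coeff_n(f^k)`; for `f` with zero constant term this is the usual
exponential `exp(f) = Σ_k f^k/k!`). -/
noncomputable def expPS (f : PowerSeries ℂ) : PowerSeries ℂ :=
  PowerSeries.mk fun n => ∑' k : ℕ, ((Nat.factorial k : ℂ))⁻¹ * (PowerSeries.coeff n) (f ^ k)

/-- The structure function
`f_{i,j}(z) = exp(−Σ_{m≥1} (1/m)[(r−1)m]_x[rm]_x(x−x^{−1})²·
  [min(i,j)m]_x([(N+1−max(i,j))m]_x − [(N−max(i,j))m]_x)/([m]_x([(N+1)m]_x−[Nm]_x))·z^m)`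
as a formal power series in `z`. -/
noncomputable def fps (x : ℂ) (r : ℝ) (N : ℕ) (i j : ℤ) : PowerSeries ℂ :=
  expPS (PowerSeries.mk fun m =>
    if m = 0 then 0 else
      -((1 / (m : ℂ)) * qnum x ((r - 1) * m) * qnum x (r * m) * (x - x⁻¹) ^ 2 *
        (qnum x ((min i j : ℤ) * m) *
            (qnum x (((N : ℤ) + 1 - max i j) * m) - qnum x (((N : ℤ) - max i j) * m)) /
          (qnum x (m : ℤ) * (qnum x (((N : ℤ) + 1) * m) - qnum x ((N : ℤ) * m))))))

/- ### Auxiliary lemmas -/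

open Finset

lemma coeff_pow_zero {f : PowerSeries ℂ} (hf : constantCoeff f = 0) {n k : ℕ} (h : n < k) :
    coeff n (f ^ k) = 0 := by
  have : (X : PowerSeries ℂ) ^ k ∣ f ^ k :=
    pow_dvd_pow_of_dvd (X_dvd_iff.mpr hf) k
  exact X_pow_dvd_iff.mp this n h

lemma coeff_mul_pow_zero {f g : PowerSeries ℂ} (hf : constantCoeff f = 0)
    (hg : constantCoeff g = 0) {n a b : ℕ} (h : n < a + b) :
    coeff n (f ^ a * g ^ b) = 0 := by
  have : (X : PowerSeries ℂ) ^ (a + b) ∣ f ^ a * g ^ b := by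
    rw [pow_add]
    exact mul_dvd_mul (pow_dvd_pow_of_dvd (X_dvd_iff.mpr hf) a)
      (pow_dvd_pow_of_dvd (X_dvd_iff.mpr hg) b)
  exact X_pow_dvd_iff.mp this n h

lemma coeff_expPS {f : PowerSeries ℂ} (hf : constantCoeff f = 0) (n : ℕ) :
    coeff n (expPS f) =
      ∑ k ∈ range (n + 1), ((Nat.factorial k : ℂ))⁻¹ * coeff n (f ^ k) := by
  rw [expPS, coeff_mk]
  refine tsum_eq_sum fun k hk => ?_
  rw [coeff_pow_zero hf (by simpa using hk), mul_zero]

lemma coeff_expPS_le {f : PowerSeries ℂ} (hf : constantCoeff f = 0) {p n : ℕ} (h : p ≤ n) :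
    coeff p (expPS f) =
      ∑ k ∈ range (n + 1), ((Nat.factorial k : ℂ))⁻¹ * coeff p (f ^ k) := by
  rw [coeff_expPS hf]
  refine Finset.sum_subset (by intro k hk; simp_all; omega) fun k hk hk' => ?_
  rw [coeff_pow_zero hf (by simp at hk hk'; omega), mul_zero]

lemma expPS_zero : expPS (0 : PowerSeries ℂ) = 1 := by
  ext n
  rw [expPS, coeff_mk]
  rw [tsum_eq_single 0 (fun k hk => by simp [zero_pow hk])]
  simp

lemma expPS_add {f g : PowerSeries ℂ} (hf : constantCoeff f = 0)
    (hg : constantCoeff g = 0) : expPS (f + g) = expPS f * expPS g := by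
  ext n
  set G : ℕ × ℕ → ℂ := fun p =>
    ((Nat.factorial p.1 : ℂ))⁻¹ * ((Nat.factorial p.2 : ℂ))⁻¹ * coeff n (f ^ p.1 * g ^ p.2)
    with hG
  have square : ∀ p ∈ range (n+1) ×ˢ range (n+1),
      p ∉ (range (n+1)).biUnion Finset.HasAntidiagonal.antidiagonal → G p = 0 := by
    rintro ⟨a, b⟩ hp hnp
    have : n < a + b := by
      by_contra h
      push_neg at h
      exact hnp (Finset.mem_biUnion.mpr ⟨a + b, by simp; omega, by simp⟩)
    simp [hG, coeff_mul_pow_zero hf hg this]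
  have hsub : (range (n+1)).biUnion Finset.HasAntidiagonal.antidiagonal ⊆ range (n+1) ×ˢ range (n+1) := by
    rintro ⟨a, b⟩ hp
    simp only [Finset.mem_biUnion, Finset.mem_range, Finset.HasAntidiagonal.mem_antidiagonal] at hp
    obtain ⟨k, hk, hab⟩ := hp
    simp only [Finset.mem_product, Finset.mem_range]
    omega
  have hdisj : (range (n+1) : Set ℕ).Pairwise
      (Function.onFun Disjoint fun k => (Finset.HasAntidiagonal.antidiagonal k : Finset (ℕ × ℕ))) := by
    intro k₁ _ k₂ _ hne
    refine Finset.disjoint_left.mpr fun p hp1 hp2 => ?_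
    simp only [Finset.HasAntidiagonal.mem_antidiagonal] at hp1 hp2
    omega
  have hL : coeff n (expPS (f + g)) = ∑ p ∈ range (n+1) ×ˢ range (n+1), G p := by
    rw [coeff_expPS (by simp [map_add, hf, hg])]
    have step1 : ∀ k ∈ range (n+1),
        ((Nat.factorial k : ℂ))⁻¹ * coeff n ((f + g) ^ k)
          = ∑ p ∈ Finset.HasAntidiagonal.antidiagonal k, G p := by
      intro k _
      rw [add_pow, map_sum, Finset.mul_sum,
        Finset.Nat.sum_antidiagonal_eq_sum_range_succ_mk]
      refine Finset.sum_congr rfl fun a ha => ?_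
      simp only [Finset.mem_range] at ha
      have hak : a ≤ k := by omega
      have hfact : ((Nat.factorial k : ℂ))⁻¹ * (k.choose a : ℂ)
          = ((Nat.factorial a : ℂ))⁻¹ * ((Nat.factorial (k - a) : ℂ))⁻¹ := by
        have h := Nat.choose_mul_factorial_mul_factorial hak
        have hc := congrArg (Nat.cast : ℕ → ℂ) h
        push_cast at hc
        have h1 : (Nat.factorial k : ℂ) ≠ 0 := Nat.cast_ne_zero.mpr k.factorial_ne_zero
        have h2 : (Nat.factorial a : ℂ) ≠ 0 := Nat.cast_ne_zero.mpr a.factorial_ne_zero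
        have h3 : (Nat.factorial (k-a) : ℂ) ≠ 0 := Nat.cast_ne_zero.mpr (k-a).factorial_ne_zero
        field_simp
        linear_combination hc
      have hnc : ((k.choose a : ℕ) : PowerSeries ℂ) = C ((k.choose a : ℕ) : ℂ) :=
        (map_natCast C _).symm
      rw [hnc, coeff_mul_C, hG]
      simp only
      rw [← mul_assoc, ← hfact]
      ring
    rw [Finset.sum_congr rfl step1, ← Finset.sum_biUnion hdisj]
    exact Finset.sum_subset hsub (fun p hp hnp => square p hp hnp)
  have hR : coeff n (expPS f * expPS g) = ∑ p ∈ range (n+1) ×ˢ range (n+1), G p := by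
    rw [coeff_mul]
    have step : ∀ q ∈ Finset.HasAntidiagonal.antidiagonal n,
        coeff q.1 (expPS f) * coeff q.2 (expPS g)
          = ∑ p ∈ range (n+1) ×ˢ range (n+1),
              ((Nat.factorial p.1 : ℂ))⁻¹ * ((Nat.factorial p.2 : ℂ))⁻¹ *
                (coeff q.1 (f ^ p.1) * coeff q.2 (g ^ p.2)) := by
      rintro ⟨u, v⟩ hq
      simp only [Finset.HasAntidiagonal.mem_antidiagonal] at hq
      rw [coeff_expPS_le hf (by omega : u ≤ n), coeff_expPS_le hg (by omega : v ≤ n),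
        Finset.sum_mul_sum, ← Finset.sum_product']
      refine Finset.sum_congr rfl fun p _ => ?_
      ring
    rw [Finset.sum_congr rfl step, Finset.sum_comm]
    refine Finset.sum_congr rfl fun p _ => ?_
    simp only [hG, coeff_mul, Finset.mul_sum]
  rw [hL, hR]

lemma expPS_sum {ι : Type*} (s : Finset ι) (F : ι → PowerSeries ℂ)
    (h : ∀ k ∈ s, constantCoeff (F k) = 0) :
    expPS (∑ k ∈ s, F k) = ∏ k ∈ s, expPS (F k) := by
  induction s using Finset.cons_induction with
  | empty => simp [expPS_zero]
  | cons a s ha ih =>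
    rw [Finset.sum_cons, Finset.prod_cons,
      expPS_add (h a (Finset.mem_cons_self a s))
        (by rw [map_sum]; exact Finset.sum_eq_zero fun k hk => h k (Finset.mem_cons_of_mem hk)),
      ih fun k hk => h k (Finset.mem_cons_of_mem hk)]

lemma rescale_expPS (a : ℂ) (f : PowerSeries ℂ) :
    rescale a (expPS f) = expPS (rescale a f) := by
  ext n
  rw [coeff_rescale, expPS, expPS, coeff_mk, coeff_mk, ← tsum_mul_left]
  congr 1
  ext k
  rw [← map_pow, coeff_rescale]
  ring

lemma telescope {w : ℂ} (hw : w ≠ 0) {i : ℤ} (hi : 1 ≤ i) :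
    (∑ k ∈ Finset.Icc (1:ℤ) i, w ^ (2*k - i - 1)) * (w - w⁻¹) = w ^ i - w ^ (-i) := by
  refine Int.le_induction (motive := fun i _ =>
    (∑ k ∈ Finset.Icc (1:ℤ) i, w ^ (2*k - i - 1)) * (w - w⁻¹) = w ^ i - w ^ (-i))
    ?_ ?_ i hi
  · simp [zpow_neg]
  · intro n hn ih
    have hins : Finset.Icc (1:ℤ) (n+1) = insert (n+1) (Finset.Icc 1 n) := by
      ext k; simp only [Finset.mem_Icc, Finset.mem_insert]; omega
    rw [hins, Finset.sum_insert (by simp only [Finset.mem_Icc]; omega), add_comm]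
    have expand : ∀ k : ℤ, w ^ (2*k - (n+1) - 1) = w ^ (2*k - n - 1) * w⁻¹ := by
      intro k
      rw [← zpow_neg_one w, ← zpow_add₀ hw]
      congr 1; ring
    rw [Finset.sum_congr rfl fun k _ => expand k, ← Finset.sum_mul]
    have h1 : 2*(n+1) - (n+1) - 1 = n := by ring
    rw [h1]
    have e1 : w ^ (n+1) = w ^ n * w := zpow_add_one₀ hw n
    have e2 : w ^ (-(n+1)) = w ^ (-n) * w⁻¹ := by
      rw [← zpow_neg_one w, ← zpow_add₀ hw]; congr 1; ring
    rw [e1, e2]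
    linear_combination w⁻¹ * ih

lemma qnum_int {x : ℂ} (hx : x ≠ 0) (n : ℤ) :
    qnum x ((n : ℝ)) = (x ^ n - x ^ (-n)) / (x - x⁻¹) := by
  unfold qnum
  rw [show (((n:ℝ)) : ℂ) = ((n : ℤ) : ℂ) by push_cast; ring,
    show (-((n:ℤ) : ℂ)) = (((-n) : ℤ) : ℂ) by push_cast; ring,
    Complex.cpow_intCast, Complex.cpow_intCast]

lemma qnum_key {x : ℂ} (hx : x ≠ 0) {i : ℤ} (hi : 1 ≤ i) (m : ℕ) :
    qnum x ((i : ℝ) * (m : ℝ)) =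
      (∑ k ∈ Finset.Icc (1:ℤ) i, (x ^ (-i - 1 + 2 * k)) ^ m) *
        qnum x (((1:ℤ) : ℝ) * (m : ℝ)) := by
  have hw : x ^ (m:ℤ) ≠ 0 := zpow_ne_zero _ hx
  have tele := telescope hw hi
  have hterm : ∀ k : ℤ, (x ^ (-i - 1 + 2 * k)) ^ m = (x ^ (m:ℤ)) ^ (2*k - i - 1) := by
    intro k
    rw [← zpow_natCast (x ^ (-i - 1 + 2 * k)) m, ← zpow_mul, ← zpow_mul]
    congr 1; ring
  have hqi : qnum x ((i : ℝ) * (m : ℝ)) = ((x ^ (m:ℤ)) ^ i - (x ^ (m:ℤ)) ^ (-i)) / (x - x⁻¹) := by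
    rw [show ((i:ℝ) * (m:ℝ)) = ((i * (m:ℕ) : ℤ) : ℝ) by push_cast; ring, qnum_int hx,
      ← zpow_mul, ← zpow_mul]
    congr 3 <;> ring
  have hq1 : qnum x (((1:ℤ) : ℝ) * (m : ℝ)) = (x ^ (m:ℤ) - (x ^ (m:ℤ))⁻¹) / (x - x⁻¹) := by
    rw [show (((1:ℤ):ℝ) * (m:ℝ)) = (((m:ℕ) : ℤ) : ℝ) by push_cast; ring, qnum_int hx,
      zpow_neg]
  rw [hqi, hq1, Finset.sum_congr rfl fun k _ => hterm k, mul_div_assoc', ← tele]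

/-- The argument series of the exponential in `fps`. -/
noncomputable def gser (x : ℂ) (r : ℝ) (N : ℕ) (i j : ℤ) : PowerSeries ℂ :=
  PowerSeries.mk fun m =>
    if m = 0 then 0 else
      -((1 / (m : ℂ)) * qnum x ((r - 1) * m) * qnum x (r * m) * (x - x⁻¹) ^ 2 *
        (qnum x ((min i j : ℤ) * m) *
            (qnum x (((N : ℤ) + 1 - max i j) * m) - qnum x (((N : ℤ) - max i j) * m)) /
          (qnum x (m : ℤ) * (qnum x (((N : ℤ) + 1) * m) - qnum x ((N : ℤ) * m)))))

lemma fps_eq_expPS_gser (x : ℂ) (r : ℝ) (N : ℕ) (i j : ℤ) :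
    fps x r N i j = expPS (gser x r N i j) := rfl

lemma constantCoeff_gser (x : ℂ) (r : ℝ) (N : ℕ) (i j : ℤ) :
    constantCoeff (gser x r N i j) = 0 := by
  rw [← coeff_zero_eq_constantCoeff_apply, gser, coeff_mk, if_pos rfl]

/-- `f_{i,j}(z) = f_{j,i}(z) = Π_{k=1}^{i} f_{1,j}(x^{−i−1+2k} z)` for `1 ≤ i ≤ j`,
assuming the denominators `[m]_x([(N+1)m]_x − [Nm]_x)` are nonzero for `m ≥ 1`. -/
theorem fps_symm_and_fusion (x : ℂ) (hx0 : x ≠ 0) (hx1 : ‖x‖ < 1)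
    (r : ℝ) (hr : 1 < r) (N : ℕ) (hN : 1 ≤ N)
    (hden : ∀ m : ℕ, 1 ≤ m →
      qnum x (m : ℤ) * (qnum x (((N : ℤ) + 1) * m) - qnum x ((N : ℤ) * m)) ≠ 0)
    (i j : ℤ) (hi : 1 ≤ i) (hij : i ≤ j) :
    fps x r N i j = fps x r N j i ∧
      fps x r N i j = ∏ k ∈ Finset.Icc (1 : ℤ) i,
        PowerSeries.rescale (x ^ (-i - 1 + 2 * k)) (fps x r N 1 j) := by
  have hj : (1:ℤ) ≤ j := hi.trans hij
  constructor
  · unfold fps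
    rw [min_comm, max_comm]
  · have main : gser x r N i j =
        ∑ k ∈ Finset.Icc (1:ℤ) i, rescale (x ^ (-i - 1 + 2 * k)) (gser x r N 1 j) := by
      ext m
      rw [map_sum]
      simp only [gser, coeff_rescale, coeff_mk]
      by_cases hm : m = 0
      · simp [hm]
      · simp only [if_neg hm]
        rw [min_eq_left hij, max_eq_right hij, min_eq_left hj, max_eq_right hj,
          qnum_key hx0 hi m]
        rw [← Finset.sum_mul]
        ring
    rw [fps_eq_expPS_gser, fps_eq_expPS_gser, main, expPS_sum]
    · exact Finset.prod_congr rfl fun k _ => (rescale_expPS _ _).symm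
    · intro k _
      rw [← coeff_zero_eq_constantCoeff_apply, coeff_rescale,
        coeff_zero_eq_constantCoeff_apply, constantCoeff_gser, mul_zero]
end

section
/- With the structure functions f_{i,j}(z) and Δ(z), for all integers i, j ≥ 1 the identity f_{1,i}(z)·f_{1,j}(x^{i+j} z) = f_{1,i+j}(x^{j} z)·Δ(x^{i} z) holds as formal power series in z. -/
open PowerSeries

namespace FpsAux

lemma coeff_pow_eq_zero {f : ℂ⟦X⟧} (h : constantCoeff f = 0) {n k : ℕ} (hn : n < k) :
    coeff n (f ^ k) = 0 := by
  have hd : (X : ℂ⟦X⟧) ^ k ∣ f ^ k := pow_dvd_pow_of_dvd (X_dvd_iff.mpr h) k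
  exact (X_pow_dvd_iff.mp hd) n hn

lemma expPS_coeff (f : ℂ⟦X⟧) (h : constantCoeff f = 0) (n : ℕ) :
    coeff n (expPS f)
      = ∑ k ∈ Finset.range (n+1), ((Nat.factorial k : ℂ))⁻¹ * coeff n (f ^ k) := by
  simp only [expPS, coeff_mk]
  refine tsum_eq_sum fun k hk => ?_
  have hk' : n < k := by by_contra hle; exact hk (Finset.mem_range.mpr (by omega))
  rw [coeff_pow_eq_zero h hk', mul_zero]

lemma expPS_coeff_partial (f : ℂ⟦X⟧) (h : constantCoeff f = 0) {p n : ℕ} (hpn : p ≤ n) :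
    coeff p (expPS f)
      = coeff p (∑ k ∈ Finset.range (n+1), ((Nat.factorial k : ℂ))⁻¹ • f ^ k) := by
  rw [expPS_coeff f h p, map_sum]
  simp only [coeff_smul, smul_eq_mul]
  refine Finset.sum_subset (fun k hk => Finset.mem_range.mpr ?_) (fun k hk hk2 => ?_)
  · have := Finset.mem_range.mp hk; omega
  · have hk' : p < k := by
      by_contra hle; exact hk2 (Finset.mem_range.mpr (by omega))
    rw [coeff_pow_eq_zero h hk', mul_zero]

lemma coeff_mul_right_congr {A B : ℂ⟦X⟧} (u : ℂ⟦X⟧) (n : ℕ)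
    (h : ∀ q ≤ n, coeff q A = coeff q B) :
    coeff n (u * A) = coeff n (u * B) := by
  rw [coeff_mul, coeff_mul]
  refine Finset.sum_congr rfl fun p hp => ?_
  rw [h p.2 (by have := Finset.HasAntidiagonal.mem_antidiagonal.mp hp; omega)]

lemma constantCoeff_expPS (f : ℂ⟦X⟧) (h : constantCoeff f = 0) :
    constantCoeff (expPS f) = 1 := by
  rw [← coeff_zero_eq_constantCoeff, expPS_coeff f h 0]
  simp

lemma derivative_expPS (f : ℂ⟦X⟧) (h : constantCoeff f = 0) :
    d⁄dX ℂ (expPS f) = d⁄dX ℂ f * expPS f := by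
  ext n
  have h1 : coeff n (d⁄dX ℂ (expPS f))
      = coeff n (d⁄dX ℂ (∑ k ∈ Finset.range (n+2), ((Nat.factorial k : ℂ))⁻¹ • f ^ k)) := by
    rw [coeff_derivative, coeff_derivative, expPS_coeff_partial f h (le_refl (n+1))]
  have h2 : d⁄dX ℂ (∑ k ∈ Finset.range (n+2), ((Nat.factorial k : ℂ))⁻¹ • f ^ k)
      = d⁄dX ℂ f * ∑ k ∈ Finset.range (n+1), ((Nat.factorial k : ℂ))⁻¹ • f ^ k := by
    rw [map_sum, Finset.sum_range_succ']
    have hterm : ∀ k : ℕ,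
        d⁄dX ℂ (((Nat.factorial (k+1) : ℂ))⁻¹ • f ^ (k+1))
          = ((Nat.factorial k : ℂ))⁻¹ • (f ^ k * d⁄dX ℂ f) := by
      intro k
      rw [(d⁄dX ℂ).map_smul, Derivation.leibniz_pow, Nat.succ_sub_one, smul_eq_mul,
        ← Nat.cast_smul_eq_nsmul ℂ (k+1), smul_smul]
      congr 1
      have hk1 : ((k:ℂ)+1) ≠ 0 := Nat.cast_add_one_ne_zero k
      have hkf : ((Nat.factorial k : ℕ) : ℂ) ≠ 0 := Nat.cast_ne_zero.mpr k.factorial_ne_zero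
      rw [Nat.factorial_succ]
      push_cast
      field_simp
    simp only [hterm]
    have h0 : d⁄dX ℂ (((Nat.factorial 0 : ℂ))⁻¹ • f ^ 0) = 0 := by
      simp [(d⁄dX ℂ).map_smul]
    rw [h0, add_zero]
    simp only [← smul_mul_assoc]
    rw [← Finset.sum_mul, mul_comm]
  rw [h1, h2]
  exact coeff_mul_right_congr _ n fun q hq => (expPS_coeff_partial f h (by omega)).symm


lemma ode_unique {u A B : ℂ⟦X⟧} (hA : d⁄dX ℂ A = u * A) (hB : d⁄dX ℂ B = u * B)
    (h0 : constantCoeff A = constantCoeff B) : A = B := by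
  ext n
  induction n using Nat.strong_induction_on with
  | _ n ih =>
    cases n with
    | zero => simpa using h0
    | succ p =>
      have e1 := congrArg (coeff p) hA
      have e2 := congrArg (coeff p) hB
      rw [coeff_derivative, coeff_mul] at e1
      rw [coeff_derivative, coeff_mul] at e2
      have key : coeff (p+1) A * ((p:ℂ)+1) = coeff (p+1) B * ((p:ℂ)+1) := by
        rw [e1, e2]
        refine Finset.sum_congr rfl fun q hq => ?_
        rw [ih q.2 (by have := Finset.HasAntidiagonal.mem_antidiagonal.mp hq; omega)]
      exact mul_right_cancel₀ (Nat.cast_add_one_ne_zero p) key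

lemma expPS_mul {f g : ℂ⟦X⟧} (hf : constantCoeff f = 0) (hg : constantCoeff g = 0) :
    expPS (f + g) = expPS f * expPS g := by
  have hfg : constantCoeff (f + g) = 0 := by rw [map_add, hf, hg, add_zero]
  refine ode_unique (u := d⁄dX ℂ (f + g)) (derivative_expPS _ hfg) ?_ ?_
  · rw [Derivation.leibniz, derivative_expPS f hf, derivative_expPS g hg, map_add]
    simp only [smul_eq_mul]
    ring
  · rw [constantCoeff_expPS _ hfg, map_mul, constantCoeff_expPS _ hf, constantCoeff_expPS _ hg,
      one_mul]

lemma rescale_expPS (a : ℂ) (f : ℂ⟦X⟧) : rescale a (expPS f) = expPS (rescale a f) := by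
  ext n
  rw [coeff_rescale]
  simp only [expPS, coeff_mk]
  rw [← tsum_mul_left]
  exact tsum_congr fun k => by rw [← map_pow, coeff_rescale]; ring

noncomputable def geomPS (a : ℂ) : ℂ⟦X⟧ := PowerSeries.mk fun n => a ^ n

lemma one_sub_mul_geomPS (a : ℂ) : (1 - PowerSeries.C a * X) * geomPS a = 1 := by
  ext n
  rw [sub_mul, one_mul, map_sub]
  cases n with
  | zero => simp [geomPS]
  | succ p =>
    rw [mul_assoc, coeff_C_mul, coeff_succ_X_mul]
    simp [geomPS, pow_succ, mul_comm]

lemma derivative_geomPS (a : ℂ) :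
    d⁄dX ℂ (geomPS a) = PowerSeries.C a * (geomPS a * geomPS a) := by
  ext n
  rw [coeff_derivative, coeff_C_mul, coeff_mul]
  simp only [geomPS, coeff_mk]
  rw [Finset.sum_congr rfl (fun p hp =>
    show a ^ p.1 * a ^ p.2 = a ^ n by rw [← pow_add, Finset.HasAntidiagonal.mem_antidiagonal.mp hp])]
  rw [Finset.sum_const, Finset.Nat.card_antidiagonal, nsmul_eq_mul]
  push_cast
  ring

noncomputable def lsPS (a : ℂ) : ℂ⟦X⟧ :=
  PowerSeries.mk fun m => if m = 0 then 0 else -(a ^ m) / m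

noncomputable def nlsPS (a : ℂ) : ℂ⟦X⟧ :=
  PowerSeries.mk fun m => if m = 0 then 0 else a ^ m / m

lemma constantCoeff_lsPS (a : ℂ) : constantCoeff (lsPS a) = 0 := by
  simp [lsPS, constantCoeff_mk]

lemma constantCoeff_nlsPS (a : ℂ) : constantCoeff (nlsPS a) = 0 := by
  simp [nlsPS, constantCoeff_mk]

lemma derivative_lsPS (a : ℂ) : d⁄dX ℂ (lsPS a) = -(PowerSeries.C a * geomPS a) := by
  ext n
  rw [coeff_derivative, map_neg, coeff_C_mul]
  simp only [lsPS, geomPS, coeff_mk, if_neg (Nat.succ_ne_zero n)]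
  have hn : ((n:ℂ)+1) ≠ 0 := Nat.cast_add_one_ne_zero n
  push_cast
  rw [div_mul_cancel₀ _ hn]
  ring

lemma derivative_nlsPS (a : ℂ) : d⁄dX ℂ (nlsPS a) = PowerSeries.C a * geomPS a := by
  ext n
  rw [coeff_derivative, coeff_C_mul]
  simp only [nlsPS, geomPS, coeff_mk, if_neg (Nat.succ_ne_zero n)]
  have hn : ((n:ℂ)+1) ≠ 0 := Nat.cast_add_one_ne_zero n
  push_cast
  rw [div_mul_cancel₀ _ hn]
  ring

lemma expPS_lsPS (a : ℂ) : expPS (lsPS a) = 1 - PowerSeries.C a * X := by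
  refine ode_unique (u := d⁄dX ℂ (lsPS a)) (derivative_expPS _ (constantCoeff_lsPS a)) ?_ ?_
  · rw [derivative_lsPS]
    have hD : d⁄dX ℂ (1 - PowerSeries.C a * X) = -(PowerSeries.C a) := by
      rw [map_sub, Derivation.leibniz]
      simp
    rw [hD]
    have h2 := one_sub_mul_geomPS a
    linear_combination (PowerSeries.C a) * h2
  · rw [constantCoeff_expPS _ (constantCoeff_lsPS a)]
    simp

lemma expPS_nlsPS (a : ℂ) : expPS (nlsPS a) = geomPS a := by
  refine ode_unique (u := d⁄dX ℂ (nlsPS a)) (derivative_expPS _ (constantCoeff_nlsPS a)) ?_ ?_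
  · rw [derivative_nlsPS, derivative_geomPS, mul_assoc]
  · rw [constantCoeff_expPS _ (constantCoeff_nlsPS a)]
    simp [geomPS, constantCoeff_mk]

lemma Δps_eq (x : ℂ) (r : ℝ) :
    Δps x r = expPS (lsPS (x ^ ((2 * r - 1 : ℝ) : ℂ)) + lsPS (x ^ ((-2 * r + 1 : ℝ) : ℂ))
      + nlsPS x + nlsPS x⁻¹) := by
  rw [expPS_mul (by simp [constantCoeff_lsPS, constantCoeff_nlsPS]) (constantCoeff_nlsPS _),
      expPS_mul (by simp [constantCoeff_lsPS]) (constantCoeff_nlsPS _),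
      expPS_mul (constantCoeff_lsPS _) (constantCoeff_lsPS _),
      expPS_lsPS, expPS_lsPS, expPS_nlsPS, expPS_nlsPS]
  rfl


lemma constantCoeff_rescale (a : ℂ) (f : ℂ⟦X⟧) :
    constantCoeff (rescale a f) = constantCoeff f := by
  rw [← coeff_zero_eq_constantCoeff, coeff_rescale, pow_zero, one_mul,
    coeff_zero_eq_constantCoeff]


set_option maxHeartbeats 4000000 in
set_option maxRecDepth 100000 in
lemma key (x : ℂ) (hx0 : x ≠ 0) (hx1 : ‖x‖ < 1) (r : ℝ)
    (N : ℕ) (i j : ℤ) (hi : 1 ≤ i) (hj : 1 ≤ j) (m : ℕ) (hm : m ≠ 0) :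
    -(1 / (m:ℂ) * qnum x ((r - 1) * m) * qnum x (r * m) * (x - x⁻¹) ^ 2 *
          (qnum x ((min 1 i : ℤ) * m) *
              (qnum x (((N : ℤ) + 1 - max 1 i) * m) - qnum x (((N : ℤ) - max 1 i) * m)) /
            (qnum x (m : ℤ) * (qnum x (((N : ℤ) + 1) * m) - qnum x ((N : ℤ) * m))))) +
      (x ^ (i + j)) ^ m *
        -(1 / (m:ℂ) * qnum x ((r - 1) * m) * qnum x (r * m) * (x - x⁻¹) ^ 2 *
            (qnum x ((min 1 j : ℤ) * m) *
                (qnum x (((N : ℤ) + 1 - max 1 j) * m) - qnum x (((N : ℤ) - max 1 j) * m)) /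
              (qnum x (m : ℤ) * (qnum x (((N : ℤ) + 1) * m) - qnum x ((N : ℤ) * m))))) =
    (x ^ j) ^ m *
        -(1 / (m:ℂ) * qnum x ((r - 1) * m) * qnum x (r * m) * (x - x⁻¹) ^ 2 *
            (qnum x ((min 1 (i + j) : ℤ) * m) *
                (qnum x (((N : ℤ) + 1 - max 1 (i + j)) * m) -
                  qnum x (((N : ℤ) - max 1 (i + j)) * m)) /
              (qnum x (m : ℤ) * (qnum x (((N : ℤ) + 1) * m) - qnum x ((N : ℤ) * m))))) +
      ((x ^ i) ^ m * (-((x ^ ((2 * r - 1 : ℝ) : ℂ)) ^ m) / (m:ℂ)) +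
          (x ^ i) ^ m * (-((x ^ ((-2 * r + 1 : ℝ) : ℂ)) ^ m) / (m:ℂ)) +
        (x ^ i) ^ m * (x ^ m / (m:ℂ)) +
      (x ^ i) ^ m * ((x⁻¹) ^ m / (m:ℂ))) := by
  have hij : (1:ℤ) ≤ i + j := by omega
  have hm' : (m:ℂ) ≠ 0 := Nat.cast_ne_zero.mpr hm
  -- x - x⁻¹ ≠ 0
  have habs2 : ‖x * x‖ < 1 := by
    rw [norm_mul]
    nlinarith [norm_nonneg x]
  have hc : x - x⁻¹ ≠ 0 := by
    rw [sub_ne_zero]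
    intro h
    have hx2 : x * x = 1 := by
      nth_rewrite 2 [h]
      exact mul_inv_cancel₀ hx0
    rw [hx2] at habs2
    norm_num at habs2
  -- abs facts
  have habsm : ‖x ^ ((m:ℕ):ℤ)‖ < 1 := by
    rw [zpow_natCast, norm_pow]
    exact pow_lt_one₀ (norm_nonneg x) hx1 hm
  have habspos : 0 < ‖x ^ ((m:ℕ):ℤ)‖ :=
    norm_pos_iff.mpr (zpow_ne_zero _ hx0)
  have habsneg : 1 ≤ ‖x ^ (-((m:ℕ):ℤ))‖ := by
    rw [zpow_neg, norm_inv]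
    exact (one_le_inv₀ habspos).mpr habsm.le
  -- generic integer qnum rewriting
  have qgen : ∀ k : ℤ, qnum x ((k:ℝ) * (m:ℝ))
      = (x ^ (k * (m:ℤ)) - x ^ (-(k * (m:ℤ)))) / (x - x⁻¹) := by
    intro k
    unfold qnum
    rw [show ((((k:ℝ) * (m:ℝ)):ℝ):ℂ) = ((k * (m:ℤ) : ℤ):ℂ) by push_cast; ring,
        show -(((k * (m:ℤ) : ℤ)):ℂ) = ((-(k * (m:ℤ)) : ℤ):ℂ) by push_cast; ring,
        Complex.cpow_intCast, Complex.cpow_intCast]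
  have qA : ∀ a b : ℤ, qnum x ((((a:ℤ):ℝ) + 1 - ((b:ℤ):ℝ)) * (m:ℝ))
      = (x ^ ((a + 1 - b) * (m:ℤ)) - x ^ (-((a + 1 - b) * (m:ℤ)))) / (x - x⁻¹) := by
    intro a b
    rw [show ((((a:ℤ):ℝ) + 1 - ((b:ℤ):ℝ)) * (m:ℝ)) = ((a + 1 - b : ℤ):ℝ) * (m:ℝ) by
      push_cast; ring]
    exact qgen _
  have qB : ∀ a b : ℤ, qnum x ((((a:ℤ):ℝ) - ((b:ℤ):ℝ)) * (m:ℝ))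
      = (x ^ ((a - b) * (m:ℤ)) - x ^ (-((a - b) * (m:ℤ)))) / (x - x⁻¹) := by
    intro a b
    rw [show ((((a:ℤ):ℝ) - ((b:ℤ):ℝ)) * (m:ℝ)) = ((a - b : ℤ):ℝ) * (m:ℝ) by push_cast; ring]
    exact qgen _
  have qC : ∀ a : ℤ, qnum x ((((a:ℤ):ℝ) + 1) * (m:ℝ))
      = (x ^ ((a + 1) * (m:ℤ)) - x ^ (-((a + 1) * (m:ℤ)))) / (x - x⁻¹) := by
    intro a
    rw [show ((((a:ℤ):ℝ) + 1) * (m:ℝ)) = ((a + 1 : ℤ):ℝ) * (m:ℝ) by push_cast; ring]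
    exact qgen _
  have qE : qnum x ((m:ℤ)) = (x ^ ((m:ℕ):ℤ) - x ^ (-((m:ℕ):ℤ))) / (x - x⁻¹) := by
    unfold qnum
    rw [show ((((m:ℤ)):ℝ):ℂ) = (((m:ℕ):ℤ):ℂ) by push_cast; ring,
        show -((((m:ℕ):ℤ)):ℂ) = ((-((m:ℕ):ℤ) : ℤ):ℂ) by push_cast; ring,
        Complex.cpow_intCast, Complex.cpow_intCast]
  have hnum : x ^ ((m:ℕ):ℤ) - x ^ (-((m:ℕ):ℤ)) ≠ 0 := by
    refine sub_ne_zero.mpr fun h => ?_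
    rw [h] at habsm
    exact absurd habsm (not_lt.mpr habsneg)
  have hQ1 : qnum x ((m:ℤ)) ≠ 0 := by
    rw [qE]; exact div_ne_zero hnum hc
  -- cancel the min-factor against the qnum denominator
  have hcan : ∀ k : ℤ, 1 ≤ k → qnum x (((min 1 k : ℤ):ℝ) * (m:ℝ)) = qnum x ((m:ℤ)) := by
    intro k hk
    rw [min_eq_left hk]
    congr 1
    push_cast; ring
  rw [hcan i hi, hcan j hj, hcan _ hij, max_eq_right hi, max_eq_right hj, max_eq_right hij,
      mul_div_mul_left _ _ hQ1, mul_div_mul_left _ _ hQ1, mul_div_mul_left _ _ hQ1]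
  -- rewrite the r-dependent quantum numbers via complex powers
  have hV : (x ^ ((r * (m:ℝ) : ℝ) : ℂ)) ≠ 0 := by
    simp [Complex.cpow_eq_zero_iff, hx0]
  have hzm : x ^ ((m:ℕ):ℤ) ≠ 0 := zpow_ne_zero _ hx0
  have hQr : qnum x (r * (m:ℝ)) = ((x ^ ((r * (m:ℝ) : ℝ) : ℂ)) - (x ^ ((r * (m:ℝ) : ℝ) : ℂ))⁻¹) / (x - x⁻¹) := by
    unfold qnum
    rw [Complex.cpow_neg]
  have hQr1 : qnum x ((r - 1) * (m:ℝ))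
      = ((x ^ ((r * (m:ℝ) : ℝ) : ℂ)) / (x ^ ((m:ℕ):ℤ)) - (x ^ ((m:ℕ):ℤ)) / (x ^ ((r * (m:ℝ) : ℝ) : ℂ))) / (x - x⁻¹) := by
    unfold qnum
    rw [show (((r - 1) * (m:ℝ) : ℝ) : ℂ) = ((r * (m:ℝ) : ℝ) : ℂ) - (((m:ℕ):ℤ) : ℂ) by
        push_cast; ring]
    rw [show -(((r * (m:ℝ) : ℝ) : ℂ) - (((m:ℕ):ℤ) : ℂ))
        = (((m:ℕ):ℤ) : ℂ) - ((r * (m:ℝ) : ℝ) : ℂ) by ring]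
    rw [Complex.cpow_sub _ _ hx0, Complex.cpow_sub _ _ hx0]
    simp only [Complex.cpow_intCast]
  have ha1 : (x ^ ((2 * r - 1 : ℝ) : ℂ)) ^ m = (x ^ ((r * (m:ℝ) : ℝ) : ℂ)) ^ 2 / (x ^ ((m:ℕ):ℤ)) := by
    rw [← Complex.cpow_nat_mul]
    rw [show ((m:ℕ):ℂ) * ((2 * r - 1 : ℝ) : ℂ)
        = ((2:ℕ):ℂ) * ((r * (m:ℝ) : ℝ) : ℂ) - (((m:ℕ):ℤ) : ℂ) by push_cast; ring]
    rw [Complex.cpow_sub _ _ hx0, Complex.cpow_nat_mul, Complex.cpow_intCast]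
  have ha2 : (x ^ ((-2 * r + 1 : ℝ) : ℂ)) ^ m = (x ^ ((m:ℕ):ℤ)) / (x ^ ((r * (m:ℝ) : ℝ) : ℂ)) ^ 2 := by
    rw [← Complex.cpow_nat_mul]
    rw [show ((m:ℕ):ℂ) * ((-2 * r + 1 : ℝ) : ℂ)
        = (((m:ℕ):ℤ) : ℂ) - ((2:ℕ):ℂ) * ((r * (m:ℝ) : ℝ) : ℂ) by push_cast; ring]
    rw [Complex.cpow_sub _ _ hx0, Complex.cpow_nat_mul, Complex.cpow_intCast]
  have hp : ∀ k : ℤ, (x ^ k) ^ m = x ^ (k * ((m:ℕ):ℤ)) := fun k => by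
    rw [← zpow_natCast (x ^ k) m, ← zpow_mul]
  simp only [qA, qB, qC, qgen, hQr, hQr1, ha1, ha2, hp]
  rw [inv_pow]
  simp only [← zpow_natCast x]
  -- nonvanishing of the denominator
  have hfact : ((x ^ (((N:ℤ) + 1) * ((m:ℕ):ℤ)) - x ^ (-(((N:ℤ) + 1) * ((m:ℕ):ℤ)))) - (x ^ (((N:ℤ)) * ((m:ℕ):ℤ)) - x ^ (-(((N:ℤ)) * ((m:ℕ):ℤ))))) = (x ^ (((N:ℤ)) * ((m:ℕ):ℤ)) + x ^ (-(((N:ℤ) + 1) * ((m:ℕ):ℤ)))) * (x ^ ((m:ℕ):ℤ) - 1) := by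
    have f1 : x ^ (((N:ℤ)) * ((m:ℕ):ℤ)) * (x ^ ((m:ℕ):ℤ)) = x ^ (((N:ℤ) + 1) * ((m:ℕ):ℤ)) := by
      rw [← zpow_add₀ hx0]; ring_nf
    have f2 : x ^ (-(((N:ℤ) + 1) * ((m:ℕ):ℤ))) * (x ^ ((m:ℕ):ℤ)) = x ^ (-(((N:ℤ)) * ((m:ℕ):ℤ))) := by
      rw [← zpow_add₀ hx0]; ring_nf
    linear_combination - f1 - f2
  have hfac1 : x ^ (((N:ℤ)) * ((m:ℕ):ℤ)) + x ^ (-(((N:ℤ) + 1) * ((m:ℕ):ℤ))) ≠ 0 := by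
    intro hsum
    have hx' : x ^ (((N:ℤ)) * ((m:ℕ):ℤ)) = -x ^ (-(((N:ℤ) + 1) * ((m:ℕ):ℤ))) := by linear_combination hsum
    have h5 : x ^ ((N:ℤ) * ((m:ℕ):ℤ) + ((N:ℤ) + 1) * ((m:ℕ):ℤ)) = -1 := by
      rw [zpow_add₀ hx0, hx', neg_mul, ← zpow_add₀ hx0, neg_add_cancel, zpow_zero]
    have h6 := congrArg (‖·‖) h5
    rw [norm_zpow, show ((N:ℤ) * ((m:ℕ):ℤ) + ((N:ℤ) + 1) * ((m:ℕ):ℤ))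
        = (((2 * N + 1) * m : ℕ) : ℤ) by push_cast; ring, zpow_natCast] at h6
    simp only [norm_neg, norm_one] at h6
    have h7 : ‖x‖ ^ ((2 * N + 1) * m) < 1 :=
      pow_lt_one₀ (norm_nonneg x) hx1 (Nat.mul_ne_zero (by omega) hm)
    rw [h6] at h7
    exact absurd h7 (lt_irrefl 1)
  have hfac2 : x ^ ((m:ℕ):ℤ) - 1 ≠ 0 := by
    refine sub_ne_zero.mpr fun h => ?_
    rw [h] at habsm
    simp at habsm
  have hHn : ((x ^ (((N:ℤ) + 1) * ((m:ℕ):ℤ)) - x ^ (-(((N:ℤ) + 1) * ((m:ℕ):ℤ)))) - (x ^ (((N:ℤ)) * ((m:ℕ):ℤ)) - x ^ (-(((N:ℤ)) * ((m:ℕ):ℤ))))) ≠ 0 := by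
    rw [hfact]; exact mul_ne_zero hfac1 hfac2
  have hHd : ((x ^ (((N:ℤ) + 1) * ((m:ℕ):ℤ)) - x ^ (-(((N:ℤ) + 1) * ((m:ℕ):ℤ)))) / (x - x⁻¹) - (x ^ (((N:ℤ)) * ((m:ℕ):ℤ)) - x ^ (-(((N:ℤ)) * ((m:ℕ):ℤ)))) / (x - x⁻¹)) ≠ 0 := by
    rw [div_sub_div_same]
    exact div_ne_zero hHn hc
  -- the fundamental fusion identity for the zpow monomials
  have e1 : x ^ ((i + j) * ((m:ℕ):ℤ)) * x ^ (((N:ℤ) + 1 - (j)) * ((m:ℕ):ℤ)) = x ^ ((i) * ((m:ℕ):ℤ)) * x ^ (((N:ℤ) + 1) * ((m:ℕ):ℤ)) := by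
    rw [← zpow_add₀ hx0, ← zpow_add₀ hx0]; ring_nf
  have e2 : x ^ ((i + j) * ((m:ℕ):ℤ)) * x ^ (-(((N:ℤ) + 1 - (j)) * ((m:ℕ):ℤ))) = x ^ ((j) * ((m:ℕ):ℤ)) * x ^ (-(((N:ℤ) + 1 - (i + j)) * ((m:ℕ):ℤ))) := by
    rw [← zpow_add₀ hx0, ← zpow_add₀ hx0]; ring_nf
  have e3 : x ^ ((i + j) * ((m:ℕ):ℤ)) * x ^ (((N:ℤ) - (j)) * ((m:ℕ):ℤ)) = x ^ ((i) * ((m:ℕ):ℤ)) * x ^ (((N:ℤ)) * ((m:ℕ):ℤ)) := by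
    rw [← zpow_add₀ hx0, ← zpow_add₀ hx0]; ring_nf
  have e4 : x ^ ((i + j) * ((m:ℕ):ℤ)) * x ^ (-(((N:ℤ) - (j)) * ((m:ℕ):ℤ))) = x ^ ((j) * ((m:ℕ):ℤ)) * x ^ (-(((N:ℤ) - (i + j)) * ((m:ℕ):ℤ))) := by
    rw [← zpow_add₀ hx0, ← zpow_add₀ hx0]; ring_nf
  have e5 : x ^ ((j) * ((m:ℕ):ℤ)) * x ^ (((N:ℤ) + 1 - (i + j)) * ((m:ℕ):ℤ)) = x ^ (((N:ℤ) + 1 - (i)) * ((m:ℕ):ℤ)) := by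
    rw [← zpow_add₀ hx0]; ring_nf
  have e6 : x ^ ((j) * ((m:ℕ):ℤ)) * x ^ (((N:ℤ) - (i + j)) * ((m:ℕ):ℤ)) = x ^ (((N:ℤ) - (i)) * ((m:ℕ):ℤ)) := by
    rw [← zpow_add₀ hx0]; ring_nf
  have e7 : x ^ ((i) * ((m:ℕ):ℤ)) * x ^ (-(((N:ℤ) + 1) * ((m:ℕ):ℤ))) = x ^ (-(((N:ℤ) + 1 - (i)) * ((m:ℕ):ℤ))) := by
    rw [← zpow_add₀ hx0]; ring_nf
  have e8 : x ^ ((i) * ((m:ℕ):ℤ)) * x ^ (-(((N:ℤ)) * ((m:ℕ):ℤ))) = x ^ (-(((N:ℤ) - (i)) * ((m:ℕ):ℤ))) := by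
    rw [← zpow_add₀ hx0]; ring_nf
  have hBfree : (x ^ (((N:ℤ) + 1 - (i)) * ((m:ℕ):ℤ)) - x ^ (-(((N:ℤ) + 1 - (i)) * ((m:ℕ):ℤ)))) - (x ^ (((N:ℤ) - (i)) * ((m:ℕ):ℤ)) - x ^ (-(((N:ℤ) - (i)) * ((m:ℕ):ℤ))))
      + x ^ ((i + j) * ((m:ℕ):ℤ)) * ((x ^ (((N:ℤ) + 1 - (j)) * ((m:ℕ):ℤ)) - x ^ (-(((N:ℤ) + 1 - (j)) * ((m:ℕ):ℤ)))) - (x ^ (((N:ℤ) - (j)) * ((m:ℕ):ℤ)) - x ^ (-(((N:ℤ) - (j)) * ((m:ℕ):ℤ)))))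
      - x ^ ((j) * ((m:ℕ):ℤ)) * ((x ^ (((N:ℤ) + 1 - (i + j)) * ((m:ℕ):ℤ)) - x ^ (-(((N:ℤ) + 1 - (i + j)) * ((m:ℕ):ℤ)))) - (x ^ (((N:ℤ) - (i + j)) * ((m:ℕ):ℤ)) - x ^ (-(((N:ℤ) - (i + j)) * ((m:ℕ):ℤ)))))
      = x ^ ((i) * ((m:ℕ):ℤ)) * ((x ^ (((N:ℤ) + 1) * ((m:ℕ):ℤ)) - x ^ (-(((N:ℤ) + 1) * ((m:ℕ):ℤ)))) - (x ^ (((N:ℤ)) * ((m:ℕ):ℤ)) - x ^ (-(((N:ℤ)) * ((m:ℕ):ℤ))))) := by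
    linear_combination e1 - e2 - e3 + e4 - e5 + e6 + e7 - e8
  have hstep : ((x ^ (((N:ℤ) + 1 - (i)) * ((m:ℕ):ℤ)) - x ^ (-(((N:ℤ) + 1 - (i)) * ((m:ℕ):ℤ)))) / (x - x⁻¹) - (x ^ (((N:ℤ) - (i)) * ((m:ℕ):ℤ)) - x ^ (-(((N:ℤ) - (i)) * ((m:ℕ):ℤ)))) / (x - x⁻¹)) + x ^ ((i + j) * ((m:ℕ):ℤ)) * ((x ^ (((N:ℤ) + 1 - (j)) * ((m:ℕ):ℤ)) - x ^ (-(((N:ℤ) + 1 - (j)) * ((m:ℕ):ℤ)))) / (x - x⁻¹) - (x ^ (((N:ℤ) - (j)) * ((m:ℕ):ℤ)) - x ^ (-(((N:ℤ) - (j)) * ((m:ℕ):ℤ)))) / (x - x⁻¹)) - x ^ ((j) * ((m:ℕ):ℤ)) * ((x ^ (((N:ℤ) + 1 - ((i + j))) * ((m:ℕ):ℤ)) - x ^ (-(((N:ℤ) + 1 - ((i + j))) * ((m:ℕ):ℤ)))) / (x - x⁻¹) - (x ^ (((N:ℤ) - ((i + j))) * ((m:ℕ):ℤ)) - x ^ (-(((N:ℤ)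 - ((i + j))) * ((m:ℕ):ℤ)))) / (x - x⁻¹)) = x ^ ((i) * ((m:ℕ):ℤ)) * ((x ^ (((N:ℤ) + 1) * ((m:ℕ):ℤ)) - x ^ (-(((N:ℤ) + 1) * ((m:ℕ):ℤ)))) / (x - x⁻¹) - (x ^ (((N:ℤ)) * ((m:ℕ):ℤ)) - x ^ (-(((N:ℤ)) * ((m:ℕ):ℤ)))) / (x - x⁻¹)) := by
    linear_combination hBfree / (x - x⁻¹)
  have hdiv : (((x ^ (((N:ℤ) + 1 - (i)) * ((m:ℕ):ℤ)) - x ^ (-(((N:ℤ) + 1 - (i)) * ((m:ℕ):ℤ)))) / (x - x⁻¹) - (x ^ (((N:ℤ) - (i)) * ((m:ℕ):ℤ)) - x ^ (-(((N:ℤ) - (i)) * ((m:ℕ):ℤ)))) / (x - x⁻¹)) + x ^ ((i + j) * ((m:ℕ):ℤ)) * ((x ^ (((N:ℤ) + 1 - (j)) * ((m:ℕ):ℤ)) - x ^ (-(((N:ℤ) + 1 - (j)) * ((m:ℕ):ℤ)))) / (x - x⁻¹) - (x ^ (((N:ℤ) - (j)) * ((m:ℕ):ℤ)) - x ^ (-(((N:ℤ)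 - (j)) * ((m:ℕ):ℤ)))) / (x - x⁻¹)) - x ^ ((j) * ((m:ℕ):ℤ)) * ((x ^ (((N:ℤ) + 1 - ((i + j))) * ((m:ℕ):ℤ)) - x ^ (-(((N:ℤ) + 1 - ((i + j))) * ((m:ℕ):ℤ)))) / (x - x⁻¹) - (x ^ (((N:ℤ) - ((i + j))) * ((m:ℕ):ℤ)) - x ^ (-(((N:ℤ) - ((i + j))) * ((m:ℕ):ℤ)))) / (x - x⁻¹))) / ((x ^ (((N:ℤ) + 1) * ((m:ℕ):ℤ)) - x ^ (-(((N:ℤ) + 1) * ((m:ℕ):ℤ)))) / (x - x⁻¹) - (x ^ (((N:ℤ)) * ((m:ℕ):ℤ)) - x ^ (-(((N:ℤ)) * ((m:ℕ):ℤ)))) / (x - x⁻¹)) = x ^ ((i) * ((m:ℕ):ℤ)) := by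
    rw [hstep]
    exact mul_div_cancel_right₀ _ hHd
  have hB3 : (((x ^ (((N:ℤ) + 1 - (i)) * ((m:ℕ):ℤ)) - x ^ (-(((N:ℤ) + 1 - (i)) * ((m:ℕ):ℤ)))) / (x - x⁻¹) - (x ^ (((N:ℤ) - (i)) * ((m:ℕ):ℤ)) - x ^ (-(((N:ℤ) - (i)) * ((m:ℕ):ℤ)))) / (x - x⁻¹)) / ((x ^ (((N:ℤ) + 1) * ((m:ℕ):ℤ)) - x ^ (-(((N:ℤ) + 1) * ((m:ℕ):ℤ)))) / (x - x⁻¹) - (x ^ (((N:ℤ)) * ((m:ℕ):ℤ)) - x ^ (-(((N:ℤ)) * ((m:ℕ):ℤ)))) / (x - x⁻¹)) + x ^ ((i + j) * ((m:ℕ):ℤ)) * (((x ^ (((N:ℤ) + 1 - (j)) * ((m:ℕ):ℤ)) - x ^ (-(((N:ℤ) + 1 - (j)) * ((m:ℕ):ℤ)))) / (x - x⁻¹) - (x ^ (((N:ℤ) - (j)) * ((m:ℕ):ℤ)) - x ^ (-(((N:ℤ) - (j)) * ((m:ℕ):ℤ)))) / (x - x⁻¹)) / ((x ^ (((N:ℤ)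 + 1) * ((m:ℕ):ℤ)) - x ^ (-(((N:ℤ) + 1) * ((m:ℕ):ℤ)))) / (x - x⁻¹) - (x ^ (((N:ℤ)) * ((m:ℕ):ℤ)) - x ^ (-(((N:ℤ)) * ((m:ℕ):ℤ)))) / (x - x⁻¹))) - x ^ ((j) * ((m:ℕ):ℤ)) * (((x ^ (((N:ℤ) + 1 - ((i + j))) * ((m:ℕ):ℤ)) - x ^ (-(((N:ℤ) + 1 - ((i + j))) * ((m:ℕ):ℤ)))) / (x - x⁻¹) - (x ^ (((N:ℤ) - ((i + j))) * ((m:ℕ):ℤ)) - x ^ (-(((N:ℤ) - ((i + j))) * ((m:ℕ):ℤ)))) / (x - x⁻¹)) / ((x ^ (((N:ℤ) + 1) * ((m:ℕ):ℤ)) - x ^ (-(((N:ℤ) + 1) * ((m:ℕ):ℤ)))) / (x - x⁻¹) - (x ^ (((N:ℤ)) * ((m:ℕ):ℤ)) - x ^ (-(((N:ℤ)) * ((m:ℕ):ℤ)))) / (x - x⁻¹)))) = x ^ ((i) * ((m:ℕ):ℤ)) := by linear_combination hdiv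
  have hA : ((x ^ ((r * (m:ℝ) : ℝ) : ℂ)) / (x ^ ((m:ℕ):ℤ)) - (x ^ ((m:ℕ):ℤ)) / (x ^ ((r * (m:ℝ) : ℝ) : ℂ))) / (x - x⁻¹) * (((x ^ ((r * (m:ℝ) : ℝ) : ℂ)) - (x ^ ((r * (m:ℝ) : ℝ) : ℂ))⁻¹) / (x - x⁻¹)) * (x - x⁻¹) ^ 2
      = ((x ^ ((r * (m:ℝ) : ℝ) : ℂ)) ^ 2 / (x ^ ((m:ℕ):ℤ)) - (x ^ ((m:ℕ):ℤ))⁻¹ - (x ^ ((m:ℕ):ℤ)) + (x ^ ((m:ℕ):ℤ)) / (x ^ ((r * (m:ℝ) : ℝ) : ℂ)) ^ 2) := by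
    have hVV : (x ^ ((r * (m:ℝ) : ℝ) : ℂ)) * (x ^ ((r * (m:ℝ) : ℝ) : ℂ))⁻¹ = 1 := mul_inv_cancel₀ hV
    have hcc : (x - x⁻¹) * (x - x⁻¹)⁻¹ = 1 := mul_inv_cancel₀ hc
    linear_combination (((x ^ ((r * (m:ℝ) : ℝ) : ℂ)) / (x ^ ((m:ℕ):ℤ)) - (x ^ ((m:ℕ):ℤ)) / (x ^ ((r * (m:ℝ) : ℝ) : ℂ))) * ((x ^ ((r * (m:ℝ) : ℝ) : ℂ)) - (x ^ ((r * (m:ℝ) : ℝ) : ℂ))⁻¹) *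
        ((x - x⁻¹) * (x - x⁻¹)⁻¹ + 1)) * hcc + (-((x ^ ((m:ℕ):ℤ))⁻¹) - (x ^ ((m:ℕ):ℤ))) * hVV
  linear_combination (-(1 / (m:ℂ)) * (((x ^ (((N:ℤ) + 1 - (i)) * ((m:ℕ):ℤ)) - x ^ (-(((N:ℤ) + 1 - (i)) * ((m:ℕ):ℤ)))) / (x - x⁻¹) - (x ^ (((N:ℤ) - (i)) * ((m:ℕ):ℤ)) - x ^ (-(((N:ℤ) - (i)) * ((m:ℕ):ℤ)))) / (x - x⁻¹)) / ((x ^ (((N:ℤ) + 1) * ((m:ℕ):ℤ)) - x ^ (-(((N:ℤ) + 1) * ((m:ℕ):ℤ)))) / (x - x⁻¹) - (x ^ (((N:ℤ)) * ((m:ℕ):ℤ)) - x ^ (-(((N:ℤ)) * ((m:ℕ):ℤ)))) / (x - x⁻¹)) + x ^ ((i + j) * ((m:ℕ):ℤ)) * (((x ^ (((N:ℤ) + 1 - (j)) * ((m:ℕ):ℤ)) - x ^ (-(((N:ℤ) + 1 - (j)) * ((m:ℕ):ℤ)))) / (x - x⁻¹) - (x ^ (((N:ℤ) - (j)) * ((m:ℕ):ℤ))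 - x ^ (-(((N:ℤ) - (j)) * ((m:ℕ):ℤ)))) / (x - x⁻¹)) / ((x ^ (((N:ℤ) + 1) * ((m:ℕ):ℤ)) - x ^ (-(((N:ℤ) + 1) * ((m:ℕ):ℤ)))) / (x - x⁻¹) - (x ^ (((N:ℤ)) * ((m:ℕ):ℤ)) - x ^ (-(((N:ℤ)) * ((m:ℕ):ℤ)))) / (x - x⁻¹))) - x ^ ((j) * ((m:ℕ):ℤ)) * (((x ^ (((N:ℤ) + 1 - ((i + j))) * ((m:ℕ):ℤ)) - x ^ (-(((N:ℤ) + 1 - ((i + j))) * ((m:ℕ):ℤ)))) / (x - x⁻¹) - (x ^ (((N:ℤ) - ((i + j))) * ((m:ℕ):ℤ)) - x ^ (-(((N:ℤ) - ((i + j))) * ((m:ℕ):ℤ)))) / (x - x⁻¹)) / ((x ^ (((N:ℤ) + 1) * ((m:ℕ):ℤ)) - x ^ (-(((N:ℤ) + 1) * ((m:ℕ):ℤ)))) / (x - x⁻¹) - (x ^ (((N:ℤ)) * ((m:ℕ):ℤ)) - x ^ (-(((N:ℤ)) * ((m:ℕ):ℤ)))) / (x - x⁻¹))))) * hA + (-(1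 / (m:ℂ)) * ((x ^ ((r * (m:ℝ) : ℝ) : ℂ)) ^ 2 / (x ^ ((m:ℕ):ℤ)) - (x ^ ((m:ℕ):ℤ))⁻¹ - (x ^ ((m:ℕ):ℤ)) + (x ^ ((m:ℕ):ℤ)) / (x ^ ((r * (m:ℝ) : ℝ) : ℂ)) ^ 2)) * hB3


end FpsAux

/-- `f_{1,i}(z)·f_{1,j}(x^{i+j} z) = f_{1,i+j}(x^{j} z)·Δ(x^{i} z)` for `i, j ≥ 1`. -/
theorem fps_additive_fusion (x : ℂ) (hx0 : x ≠ 0) (hx1 : ‖x‖ < 1)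
    (r : ℝ) (hr : 1 < r) (N : ℕ) (hN : 1 ≤ N) (i j : ℤ) (hi : 1 ≤ i) (hj : 1 ≤ j) :
    fps x r N 1 i * PowerSeries.rescale (x ^ (i + j)) (fps x r N 1 j) =
      PowerSeries.rescale (x ^ j) (fps x r N 1 (i + j)) *
        PowerSeries.rescale (x ^ i) (Δps x r) := by
  unfold fps
  rw [FpsAux.Δps_eq, FpsAux.rescale_expPS, FpsAux.rescale_expPS, FpsAux.rescale_expPS,
      ← FpsAux.expPS_mul (by simp [constantCoeff_mk])
        (by rw [FpsAux.constantCoeff_rescale]; simp [constantCoeff_mk]),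
      ← FpsAux.expPS_mul
        (by rw [FpsAux.constantCoeff_rescale]; simp [constantCoeff_mk])
        (by rw [FpsAux.constantCoeff_rescale]; simp [FpsAux.constantCoeff_lsPS,
              FpsAux.constantCoeff_nlsPS])]
  apply congrArg
  ext m
  simp only [map_add, coeff_rescale, coeff_mk, FpsAux.lsPS, FpsAux.nlsPS]
  cases m with
  | zero => simp
  | succ n =>
    simp only [if_neg (Nat.succ_ne_zero n)]
    exact FpsAux.key x hx0 hx1 r N i j hi hj (n+1) (Nat.succ_ne_zero n)
end
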